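/- arXiv:1508.04074 — 7 statements merged into one kernel-verified Lean document; each statement's English description precedes it below -/
import Mathlib

section
/- Let E and F be real Banach lattices, ε ≥ 0, and T : E → F a bounded linear operator such that ‖|Tx| ⊓ |Ty|‖ ≤ ε for all disjoint positive x, y in the closed unit ball of E. Then T is 4ε-disjointness preserving, i.e. ‖|Tx| ⊓ |Ty|‖ ≤ 4ε·max(‖x‖, ‖y‖) for all disjoint x, y ∈ E. Moreover, if T is positive, then T is ε-disjointness preserving. -/
section Aux

variable {E : Type*} [NormedAddCommGroup E] [Lattice E] [HasSolidNorm E] [IsOrderedAddMonoid E]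
  [NormedSpace ℝ E]

private lemma aux_pow2_semiclosed : ∀ (k : ℕ) (a : E), 0 ≤ (2 ^ k) • a → 0 ≤ a := by
  intro k
  induction k with
  | zero => intro a ha; simpa using ha
  | succ n ih =>
    intro a ha
    have h2 : 0 ≤ 2 ^ n • (2 • a) := by rwa [smul_smul, ← pow_succ]
    exact nsmul_two_semiclosed (ih _ h2)

private lemma aux_smul_nonneg {c : ℝ} (hc : 0 ≤ c) {x : E} (hx : 0 ≤ x) : 0 ≤ c • x := by
  set s : ℕ → ℝ := fun n => (⌊c * 2 ^ n⌋₊ : ℝ) / 2 ^ n with hs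
  have hsn : ∀ n, 0 ≤ s n • x := by
    intro n
    apply aux_pow2_semiclosed n
    have : (2 ^ n : ℕ) • (s n • x) = (⌊c * 2 ^ n⌋₊ : ℕ) • x := by
      rw [← Nat.cast_smul_eq_nsmul ℝ (2 ^ n), ← Nat.cast_smul_eq_nsmul ℝ ⌊c * 2 ^ n⌋₊,
        smul_smul]
      congr 1
      have h2 : ((2 : ℝ)) ^ n ≠ 0 := by positivity
      push_cast
      simp only [hs]
      field_simp
    rw [this]
    exact nsmul_nonneg hx _
  have hlim : Filter.Tendsto s Filter.atTop (nhds c) := by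
    have hlow : ∀ n, c - (2 : ℝ)⁻¹ ^ n ≤ s n := by
      intro n
      have h1 : c * 2 ^ n - 1 < (⌊c * 2 ^ n⌋₊ : ℝ) := Nat.sub_one_lt_floor _
      have h2 : (0 : ℝ) < 2 ^ n := by positivity
      rw [hs]
      simp only
      rw [le_div_iff₀ h2, inv_pow]
      have h3 : ((2 : ℝ) ^ n)⁻¹ * 2 ^ n = 1 := inv_mul_cancel₀ h2.ne'
      nlinarith [h1]
    have hhigh : ∀ n, s n ≤ c := by
      intro n
      have h2 : (0 : ℝ) < 2 ^ n := by positivity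
      rw [hs]
      simp only
      rw [div_le_iff₀ h2]
      exact Nat.floor_le (by positivity)
    have hl : Filter.Tendsto (fun n : ℕ => c - (2 : ℝ)⁻¹ ^ n) Filter.atTop (nhds c) := by
      have h0 : Filter.Tendsto (fun n : ℕ => ((2 : ℝ)⁻¹) ^ n) Filter.atTop (nhds 0) :=
        tendsto_pow_atTop_nhds_zero_of_lt_one (by norm_num) (by norm_num)
      simpa using (tendsto_const_nhds (x := c) (f := Filter.atTop (α := ℕ))).sub h0
    exact tendsto_of_tendsto_of_tendsto_of_le_of_le hl tendsto_const_nhds hlow hhigh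
  have hlim2 : Filter.Tendsto (fun n => s n • x) Filter.atTop (nhds (c • x)) :=
    hlim.smul tendsto_const_nhds
  exact (isClosed_nonneg (α := E)).mem_of_tendsto hlim2 (Filter.Eventually.of_forall hsn)

private lemma aux_smul_le_smul {c : ℝ} (hc : 0 ≤ c) {x y : E} (hxy : x ≤ y) :
    c • x ≤ c • y := by
  have := aux_smul_nonneg hc (sub_nonneg.mpr hxy)
  rwa [smul_sub, sub_nonneg] at this

private lemma aux_smul_inf {c : ℝ} (hc : 0 < c) (x y : E) :
    c • (x ⊓ y) = (c • x) ⊓ (c • y) := by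
  apply le_antisymm
  · exact le_inf (aux_smul_le_smul hc.le inf_le_left) (aux_smul_le_smul hc.le inf_le_right)
  · have h1 : c⁻¹ • ((c • x) ⊓ (c • y)) ≤ x ⊓ y := by
      apply le_inf
      · have := aux_smul_le_smul (inv_nonneg.mpr hc.le) (inf_le_left (a := c • x) (b := c • y))
        rwa [inv_smul_smul₀ hc.ne'] at this
      · have := aux_smul_le_smul (inv_nonneg.mpr hc.le) (inf_le_right (a := c • x) (b := c • y))
        rwa [inv_smul_smul₀ hc.ne'] at this
    have := aux_smul_le_smul hc.le h1
    rwa [smul_inv_smul₀ hc.ne'] at this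

private lemma aux_smul_sup {c : ℝ} (hc : 0 < c) (x y : E) :
    c • (x ⊔ y) = (c • x) ⊔ (c • y) := by
  apply le_antisymm
  · have h1 : x ⊔ y ≤ c⁻¹ • ((c • x) ⊔ (c • y)) := by
      apply sup_le
      · have := aux_smul_le_smul (inv_nonneg.mpr hc.le) (le_sup_left (a := c • x) (b := c • y))
        rwa [inv_smul_smul₀ hc.ne'] at this
      · have := aux_smul_le_smul (inv_nonneg.mpr hc.le) (le_sup_right (a := c • x) (b := c • y))
        rwa [inv_smul_smul₀ hc.ne'] at this
    have := aux_smul_le_smul hc.le h1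
    rwa [smul_inv_smul₀ hc.ne'] at this
  · exact sup_le (aux_smul_le_smul hc.le le_sup_left) (aux_smul_le_smul hc.le le_sup_right)

private lemma aux_abs_smul {c : ℝ} (hc : 0 ≤ c) (x : E) : |c • x| = c • |x| := by
  rcases hc.eq_or_lt with rfl | hc
  · simp
  · show (c • x) ⊔ (-(c • x)) = c • (x ⊔ -x)
    rw [aux_smul_sup hc, smul_neg]

/-- `a ⊓ (c + d) ≤ a ⊓ c + a ⊓ d` for suitable nonneg elements. -/
private lemma aux_inf_add {a c d : E} (ha : 0 ≤ a) (hc : 0 ≤ c) (hd : 0 ≤ d) :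
    a ⊓ (c + d) ≤ a ⊓ c + a ⊓ d := by
  rw [← sub_le_iff_le_add', sub_inf]
  apply sup_le
  · exact le_trans (sub_nonpos.mpr inf_le_left) (le_inf ha hd)
  · apply le_inf
    · rw [sub_le_iff_le_add]
      exact le_trans inf_le_left (le_add_of_nonneg_right hc)
    · rw [sub_le_iff_le_add']
      exact inf_le_right

private lemma aux_add_inf_add {a b c d : E} (ha : 0 ≤ a) (hb : 0 ≤ b) (hc : 0 ≤ c)
    (hd : 0 ≤ d) : (a + b) ⊓ (c + d) ≤ a ⊓ c + a ⊓ d + b ⊓ c + b ⊓ d := by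
  calc (a + b) ⊓ (c + d) = (c + d) ⊓ (a + b) := inf_comm _ _
    _ ≤ (c + d) ⊓ a + (c + d) ⊓ b := aux_inf_add (add_nonneg hc hd) ha hb
    _ = a ⊓ (c + d) + b ⊓ (c + d) := by rw [inf_comm, inf_comm (c + d) b]
    _ ≤ (a ⊓ c + a ⊓ d) + (b ⊓ c + b ⊓ d) :=
        add_le_add (aux_inf_add ha hc hd) (aux_inf_add hb hc hd)
    _ = a ⊓ c + a ⊓ d + b ⊓ c + b ⊓ d := by abel

end Aux

/-- If `T : E → F` satisfies `‖|Tx| ⊓ |Ty|‖ ≤ ε` for all disjoint positive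
`x, y` in the closed unit ball of `E`, then `T` is `4ε`-disjointness preserving; moreover, if
`T` is positive, then `T` is `ε`-disjointness preserving. -/
theorem stmt0 (E F : Type*)
    [NormedAddCommGroup E] [Lattice E] [HasSolidNorm E] [IsOrderedAddMonoid E] [NormedSpace ℝ E] [CompleteSpace E]
    [NormedAddCommGroup F] [Lattice F] [HasSolidNorm F] [IsOrderedAddMonoid F] [NormedSpace ℝ F] [CompleteSpace F]
    (ε : ℝ) (hε : 0 ≤ ε) (T : E →L[ℝ] F)
    (h : ∀ x y : E, 0 ≤ x → 0 ≤ y → ‖x‖ ≤ 1 → ‖y‖ ≤ 1 → x ⊓ y = 0 →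
      ‖|T x| ⊓ |T y|‖ ≤ ε) :
    (∀ x y : E, |x| ⊓ |y| = 0 → ‖|T x| ⊓ |T y|‖ ≤ 4 * ε * max ‖x‖ ‖y‖) ∧
    ((∀ x : E, 0 ≤ x → 0 ≤ T x) →
      ∀ x y : E, |x| ⊓ |y| = 0 → ‖|T x| ⊓ |T y|‖ ≤ ε * max ‖x‖ ‖y‖) := by
  -- Key lemma: for disjoint positive `a, b` of norm at most `m > 0`,
  -- `‖|T a| ⊓ |T b|‖ ≤ ε * m`.
  have K : ∀ m : ℝ, 0 < m → ∀ a b : E, 0 ≤ a → 0 ≤ b → ‖a‖ ≤ m → ‖b‖ ≤ m → a ⊓ b = 0 →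
      ‖|T a| ⊓ |T b|‖ ≤ ε * m := by
    intro m hm a b ha hb hna hnb hab
    set a' : E := m⁻¹ • a with ha'
    set b' : E := m⁻¹ • b with hb'
    have hminv : (0 : ℝ) < m⁻¹ := inv_pos.mpr hm
    have ha'0 : 0 ≤ a' := aux_smul_nonneg hminv.le ha
    have hb'0 : 0 ≤ b' := aux_smul_nonneg hminv.le hb
    have hna' : ‖a'‖ ≤ 1 := by
      rw [ha', norm_smul, Real.norm_eq_abs, abs_of_pos hminv]
      rw [← inv_mul_cancel₀ hm.ne']
      exact mul_le_mul_of_nonneg_left hna hminv.le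
    have hnb' : ‖b'‖ ≤ 1 := by
      rw [hb', norm_smul, Real.norm_eq_abs, abs_of_pos hminv]
      rw [← inv_mul_cancel₀ hm.ne']
      exact mul_le_mul_of_nonneg_left hnb hminv.le
    have hab' : a' ⊓ b' = 0 := by
      rw [ha', hb', ← aux_smul_inf hminv, hab, smul_zero]
    have hkey := h a' b' ha'0 hb'0 hna' hnb' hab'
    have hTa : T a = m • T a' := by
      rw [ha', ← map_smul, smul_inv_smul₀ hm.ne']
    have hTb : T b = m • T b' := by
      rw [hb', ← map_smul, smul_inv_smul₀ hm.ne']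
    have : |T a| ⊓ |T b| = m • (|T a'| ⊓ |T b'|) := by
      rw [hTa, hTb, aux_abs_smul hm.le, aux_abs_smul hm.le, aux_smul_inf hm]
    rw [this, norm_smul, Real.norm_eq_abs, abs_of_pos hm, mul_comm]
    exact mul_le_mul_of_nonneg_right hkey hm.le
  constructor
  · -- general case
    intro x y hxy
    set m := max ‖x‖ ‖y‖ with hmdef
    have hm0 : 0 ≤ m := le_trans (norm_nonneg x) (le_max_left _ _)
    rcases hm0.eq_or_lt with hm | hm
    · -- m = 0 : both x and y are zero
      have hx0 : x = 0 := by
        have : ‖x‖ ≤ 0 := by rw [hm]; exact le_max_left _ _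
        exact norm_le_zero_iff.mp this
      have hy0 : y = 0 := by
        have : ‖y‖ ≤ 0 := by rw [hm]; exact le_max_right _ _
        exact norm_le_zero_iff.mp this
      simp [hx0, hy0, ← hm]
    · -- m > 0
      -- inequalities for positive/negative parts
      have hple : ∀ u : E, (u⁺ : E) ≤ |u| := by
        intro u
        rw [← posPart_add_negPart u]
        exact le_add_of_nonneg_right (negPart_nonneg u)
      have hnle : ∀ u : E, (u⁻ : E) ≤ |u| := by
        intro u
        rw [← posPart_add_negPart u]
        exact le_add_of_nonneg_left (posPart_nonneg u)
      have hdisj : ∀ u v : E, u ≤ |x| → v ≤ |y| → 0 ≤ u → 0 ≤ v → u ⊓ v = 0 := by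
        intro u v hu hv hu0 hv0
        refine le_antisymm ?_ (le_inf hu0 hv0)
        calc u ⊓ v ≤ |x| ⊓ |y| := inf_le_inf hu hv
          _ = 0 := hxy
      have hnormp : ∀ u : E, ‖(u⁺ : E)‖ ≤ ‖u‖ := by
        intro u
        apply norm_le_norm_of_abs_le_abs
        rw [abs_of_nonneg (posPart_nonneg u)]
        exact hple u
      have hnormn : ∀ u : E, ‖(u⁻ : E)‖ ≤ ‖u‖ := by
        intro u
        apply norm_le_norm_of_abs_le_abs
        rw [abs_of_nonneg (negPart_nonneg u)]
        exact hnle u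
      have hxm : ‖x‖ ≤ m := le_max_left _ _
      have hym : ‖y‖ ≤ m := le_max_right _ _
      -- the four estimates
      have e1 := K m hm (x⁺) (y⁺) (posPart_nonneg x) (posPart_nonneg y)
        ((hnormp x).trans hxm) ((hnormp y).trans hym)
        (hdisj _ _ (hple x) (hple y) (posPart_nonneg x) (posPart_nonneg y))
      have e2 := K m hm (x⁺) (y⁻) (posPart_nonneg x) (negPart_nonneg y)
        ((hnormp x).trans hxm) ((hnormn y).trans hym)
        (hdisj _ _ (hple x) (hnle y) (posPart_nonneg x) (negPart_nonneg y))
      have e3 := K m hm (x⁻) (y⁺) (negPart_nonneg x) (posPart_nonneg y)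
        ((hnormn x).trans hxm) ((hnormp y).trans hym)
        (hdisj _ _ (hnle x) (hple y) (negPart_nonneg x) (posPart_nonneg y))
      have e4 := K m hm (x⁻) (y⁻) (negPart_nonneg x) (negPart_nonneg y)
        ((hnormn x).trans hxm) ((hnormn y).trans hym)
        (hdisj _ _ (hnle x) (hnle y) (negPart_nonneg x) (negPart_nonneg y))
      -- main chain
      have hTx : |T x| ≤ |T (x⁺)| + |T (x⁻)| := by
        calc |T x| = |T (x⁺) - T (x⁻)| := by rw [← map_sub, posPart_sub_negPart]
          _ = |T (x⁺) + (- T (x⁻))| := by rw [sub_eq_add_neg]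
          _ ≤ |T (x⁺)| + |(- T (x⁻))| := abs_add_le _ _
          _ = |T (x⁺)| + |T (x⁻)| := by rw [abs_neg]
      have hTy : |T y| ≤ |T (y⁺)| + |T (y⁻)| := by
        calc |T y| = |T (y⁺) - T (y⁻)| := by rw [← map_sub, posPart_sub_negPart]
          _ = |T (y⁺) + (- T (y⁻))| := by rw [sub_eq_add_neg]
          _ ≤ |T (y⁺)| + |(- T (y⁻))| := abs_add_le _ _
          _ = |T (y⁺)| + |T (y⁻)| := by rw [abs_neg]
      set S : F := |T (x⁺)| ⊓ |T (y⁺)| + |T (x⁺)| ⊓ |T (y⁻)| + |T (x⁻)| ⊓ |T (y⁺)|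
        + |T (x⁻)| ⊓ |T (y⁻)| with hS
      have hle : |T x| ⊓ |T y| ≤ S := by
        calc |T x| ⊓ |T y| ≤ (|T (x⁺)| + |T (x⁻)|) ⊓ (|T (y⁺)| + |T (y⁻)|) :=
              inf_le_inf hTx hTy
          _ ≤ S := aux_add_inf_add (abs_nonneg _) (abs_nonneg _) (abs_nonneg _) (abs_nonneg _)
      have hnn : (0 : F) ≤ |T x| ⊓ |T y| := le_inf (abs_nonneg _) (abs_nonneg _)
      have hsolid : ‖|T x| ⊓ |T y|‖ ≤ ‖S‖ := by
        apply norm_le_norm_of_abs_le_abs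
        rw [abs_of_nonneg hnn, abs_of_nonneg (le_trans hnn hle)]
        exact hle
      calc ‖|T x| ⊓ |T y|‖ ≤ ‖S‖ := hsolid
        _ ≤ ‖|T (x⁺)| ⊓ |T (y⁺)|‖ + ‖|T (x⁺)| ⊓ |T (y⁻)|‖ + ‖|T (x⁻)| ⊓ |T (y⁺)|‖
            + ‖|T (x⁻)| ⊓ |T (y⁻)|‖ := by
            rw [hS]
            exact le_trans (norm_add_le _ _) (add_le_add_left
              (le_trans (norm_add_le _ _) (add_le_add_left (norm_add_le _ _) _)) _)
        _ ≤ ε * m + ε * m + ε * m + ε * m := by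
            exact add_le_add (add_le_add (add_le_add e1 e2) e3) e4
        _ = 4 * ε * m := by ring
  · -- positive case
    intro hpos x y hxy
    set m := max ‖x‖ ‖y‖ with hmdef
    have hm0 : 0 ≤ m := le_trans (norm_nonneg x) (le_max_left _ _)
    rcases hm0.eq_or_lt with hm | hm
    · have hx0 : x = 0 := by
        have : ‖x‖ ≤ 0 := by rw [hm]; exact le_max_left _ _
        exact norm_le_zero_iff.mp this
      have hy0 : y = 0 := by
        have : ‖y‖ ≤ 0 := by rw [hm]; exact le_max_right _ _
        exact norm_le_zero_iff.mp this
      simp [hx0, hy0, ← hm]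
    · have habs : ∀ u : E, |T u| ≤ T |u| := by
        intro u
        rw [abs_le']
        have hp := hpos (u⁺) (posPart_nonneg u)
        have hn := hpos (u⁻) (negPart_nonneg u)
        constructor
        · calc T u = T (u⁺) - T (u⁻) := by rw [← map_sub, posPart_sub_negPart]
            _ ≤ T (u⁺) + T (u⁻) := (sub_le_self _ hn).trans (le_add_of_nonneg_right hn)
            _ = T |u| := by rw [← map_add, posPart_add_negPart]
        · have e : -(T u) = T (u⁻) - T (u⁺) := by
            rw [← map_sub, ← map_neg, ← neg_sub (u⁺) (u⁻), posPart_sub_negPart]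
          calc -(T u) = T (u⁻) - T (u⁺) := e
            _ ≤ T (u⁻) + T (u⁺) := (sub_le_self _ hp).trans (le_add_of_nonneg_right hp)
            _ = T |u| := by rw [← map_add, add_comm, posPart_add_negPart]
      have hTabs : ∀ u : E, abs (T (abs u)) = T (abs u) := fun u =>
        abs_of_nonneg (hpos _ (abs_nonneg u))
      have hkey := K m hm (abs x) (abs y) (abs_nonneg x) (abs_nonneg y)
        (by rw [norm_abs_eq_norm]; exact le_max_left _ _)
        (by rw [norm_abs_eq_norm]; exact le_max_right _ _) hxy
      rw [hTabs, hTabs] at hkey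
      have hle : |T x| ⊓ |T y| ≤ T (abs x) ⊓ T (abs y) := inf_le_inf (habs x) (habs y)
      have hnn : (0 : F) ≤ |T x| ⊓ |T y| := le_inf (abs_nonneg _) (abs_nonneg _)
      calc ‖|T x| ⊓ |T y|‖ ≤ ‖T (abs x) ⊓ T (abs y)‖ := by
            apply norm_le_norm_of_abs_le_abs
            rw [abs_of_nonneg hnn, abs_of_nonneg (le_trans hnn hle)]
            exact hle
        _ ≤ ε * m := hkey
end

section
/- Let E and F be real Banach lattices, ε ≥ 0, and T : E → F a bounded linear operator which is ε-disjointness preserving. Then for all x, y ∈ E (not necessarily disjoint), ‖|Tx| ⊓ |Ty|‖ ≤ 4·(ε·max(‖x‖, ‖y‖) + ‖T‖·‖|x| ⊓ |y|‖). -/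
section Aux

variable {E : Type*} [NormedAddCommGroup E] [Lattice E] [IsOrderedAddMonoid E] [HasSolidNorm E]

private lemma abs_le_of (a b : E) (h1 : a ≤ b) (h2 : -b ≤ a) : |a| ≤ b := by
  rw [abs]; exact sup_le h1 (neg_le.mpr h2)

/-- Truncation bound: if `0 ≤ a` then `|x - ((x ⊓ a) ⊔ (-a))| ≤ (|x| - a)⁺`. -/
private lemma trunc_bound (x a : E) (ha : 0 ≤ a) :
    |x - ((x ⊓ a) ⊔ (-a))| ≤ (|x| - a)⁺ := by
  have hrw : x - ((x ⊓ a) ⊔ (-a)) = (x - a)⁺ ⊓ (x + a) := by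
    rw [sub_sup, sub_inf, sub_self, sub_neg_eq_add, posPart_def, sup_comm]
  apply abs_le_of
  · rw [hrw]
    refine le_trans inf_le_left ?_
    rw [posPart_def, posPart_def]
    exact sup_le_sup_right (sub_le_sub_right (le_abs_self x) a) 0
  · rw [hrw]
    refine le_inf (le_trans (neg_nonpos.mpr (posPart_nonneg _)) (posPart_nonneg _)) ?_
    have : -(|x| - a) ≤ x + a := by
      have hnx : -|x| ≤ x := neg_le.mpr (by rw [abs]; exact le_sup_right)
      rw [neg_sub, sub_eq_add_neg, add_comm a (-|x|)]
      exact add_le_add_left hnx a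
    exact le_trans (neg_le_neg (le_posPart _)) this

/-- Truncation stays below `a` in absolute value. -/
private lemma abs_trunc_le (x a : E) (ha : 0 ≤ a) : |(x ⊓ a) ⊔ (-a)| ≤ a := by
  apply abs_le_of
  · exact sup_le (inf_le_right) (neg_nonpos.mpr ha |>.trans ha)
  · exact le_sup_right

end Aux

/-- An `ε`-disjointness preserving operator almost preserves
almost-disjointness: `‖|Tx| ⊓ |Ty|‖ ≤ 4(ε max(‖x‖,‖y‖) + ‖T‖ ‖|x| ⊓ |y|‖)` for all `x, y`. -/
theorem stmt1 (E F : Type*)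
    [NormedAddCommGroup E] [Lattice E] [IsOrderedAddMonoid E] [HasSolidNorm E] [NormedSpace ℝ E] [CompleteSpace E]
    [NormedAddCommGroup F] [Lattice F] [IsOrderedAddMonoid F] [HasSolidNorm F] [NormedSpace ℝ F] [CompleteSpace F]
    (ε : ℝ) (hε : 0 ≤ ε) (T : E →L[ℝ] F)
    (hDP : ∀ x y : E, |x| ⊓ |y| = 0 → ‖|T x| ⊓ |T y|‖ ≤ ε * max ‖x‖ ‖y‖) :
    ∀ x y : E, ‖|T x| ⊓ |T y|‖ ≤ 4 * (ε * max ‖x‖ ‖y‖ + ‖T‖ * ‖|x| ⊓ |y|‖) := by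
  intro x y
  set a : E := (|x| - |y|)⁺ with ha
  set b : E := (|y| - |x|)⁺ with hb
  set z : E := |x| ⊓ |y| with hz
  have hz0 : (0:E) ≤ z := le_inf (abs_nonneg x) (abs_nonneg y)
  have ha0 : (0:E) ≤ a := posPart_nonneg _
  have hb0 : (0:E) ≤ b := posPart_nonneg _
  have hab : a ⊓ b = 0 := by
    have h := posPart_inf_negPart_eq_zero (|x| - |y|)
    have hbneg : b = (|x| - |y|)⁻ := by
      rw [hb, negPart_def, posPart_def, neg_sub]
    rw [hbneg]; exact h
  have hael : a ≤ |x| := by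
    rw [ha, posPart_def]
    exact sup_le (sub_le_self _ (abs_nonneg y)) (abs_nonneg x)
  have hbel : b ≤ |y| := by
    rw [hb, posPart_def]
    exact sup_le (sub_le_self _ (abs_nonneg x)) (abs_nonneg y)
  have hxz : (|x| - a)⁺ = z := by
    have : |x| - a = z := by
      rw [ha, posPart_def, sub_sup, sub_sub_cancel, sub_zero, inf_comm]
    rw [this, posPart_eq_self.mpr hz0]
  have hyz : (|y| - b)⁺ = z := by
    have : |y| - b = z := by
      rw [hb, posPart_def, sub_sup, sub_sub_cancel, sub_zero]
    rw [this, posPart_eq_self.mpr hz0]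
  set x₁ : E := (x ⊓ a) ⊔ (-a) with hx1
  set y₁ : E := (y ⊓ b) ⊔ (-b) with hy1
  have hxa : |x₁| ≤ a := abs_trunc_le x a ha0
  have hyb : |y₁| ≤ b := abs_trunc_le y b hb0
  have hxr : |x - x₁| ≤ z := (trunc_bound x a ha0).trans_eq hxz
  have hyr : |y - y₁| ≤ z := (trunc_bound y b hb0).trans_eq hyz
  have hdisj : |x₁| ⊓ |y₁| = 0 :=
    le_antisymm ((inf_le_inf hxa hyb).trans_eq hab)
      (le_inf (abs_nonneg _) (abs_nonneg _))
  -- key pointwise inequality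
  have hTx : |T x| ≤ |T x₁| + |T (x - x₁)| := by
    have h : x₁ + (x - x₁) = x := by abel
    have : T x = T x₁ + T (x - x₁) := by rw [← map_add, h]
    rw [this]; exact abs_add_le _ _
  have hTy : |T y| ≤ |T y₁| + |T (y - y₁)| := by
    have h : y₁ + (y - y₁) = y := by abel
    have : T y = T y₁ + T (y - y₁) := by rw [← map_add, h]
    rw [this]; exact abs_add_le _ _
  have hkey : |T x| ⊓ |T y| ≤ (|T x₁| ⊓ |T y₁|) + (|T (x - x₁)| + |T (y - y₁)|) := by
    calc |T x| ⊓ |T y| ≤ (|T x₁| + |T (x - x₁)|) ⊓ (|T y₁| + |T (y - y₁)|) :=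
          inf_le_inf hTx hTy
      _ ≤ (|T x₁| + (|T (x - x₁)| + |T (y - y₁)|)) ⊓
            (|T y₁| + (|T (x - x₁)| + |T (y - y₁)|)) := by
          refine inf_le_inf ?_ ?_
          · exact add_le_add_right (le_add_of_nonneg_right (abs_nonneg _)) _
          · exact add_le_add_right (le_add_of_nonneg_left (abs_nonneg _)) _
      _ = (|T x₁| ⊓ |T y₁|) + (|T (x - x₁)| + |T (y - y₁)|) := (inf_add _ _ _).symm
  -- pass to norms
  have hnn : (0:F) ≤ |T x| ⊓ |T y| := le_inf (abs_nonneg _) (abs_nonneg _)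
  have hrhsnn : (0:F) ≤ (|T x₁| ⊓ |T y₁|) + (|T (x - x₁)| + |T (y - y₁)|) :=
    add_nonneg (le_inf (abs_nonneg _) (abs_nonneg _))
      (add_nonneg (abs_nonneg _) (abs_nonneg _))
  have hnorm1 : ‖|T x| ⊓ |T y|‖ ≤
      ‖(|T x₁| ⊓ |T y₁|) + (|T (x - x₁)| + |T (y - y₁)|)‖ := by
    apply norm_le_norm_of_abs_le_abs
    rw [abs_of_nonneg hnn, abs_of_nonneg hrhsnn]; exact hkey
  have hnorm2 : ‖(|T x₁| ⊓ |T y₁|) + (|T (x - x₁)| + |T (y - y₁)|)‖ ≤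
      ‖|T x₁| ⊓ |T y₁|‖ + (‖T (x - x₁)‖ + ‖T (y - y₁)‖) := by
    calc _ ≤ ‖|T x₁| ⊓ |T y₁|‖ + ‖|T (x - x₁)| + |T (y - y₁)|‖ := norm_add_le _ _
      _ ≤ ‖|T x₁| ⊓ |T y₁|‖ + (‖|T (x - x₁)|‖ + ‖|T (y - y₁)|‖) := by
          gcongr; exact norm_add_le _ _
      _ = _ := by rw [norm_abs_eq_norm, norm_abs_eq_norm]
  have hx1n : ‖x₁‖ ≤ ‖x‖ := norm_le_norm_of_abs_le_abs (hxa.trans hael)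
  have hy1n : ‖y₁‖ ≤ ‖y‖ := norm_le_norm_of_abs_le_abs (hyb.trans hbel)
  have hDP1 : ‖|T x₁| ⊓ |T y₁|‖ ≤ ε * max ‖x‖ ‖y‖ := by
    refine (hDP x₁ y₁ hdisj).trans ?_
    exact mul_le_mul_of_nonneg_left (max_le_max hx1n hy1n) hε
  have hzabs : |z| = z := abs_of_nonneg hz0
  have hxrn : ‖x - x₁‖ ≤ ‖z‖ := norm_le_norm_of_abs_le_abs (by rw [hzabs]; exact hxr)
  have hyrn : ‖y - y₁‖ ≤ ‖z‖ := norm_le_norm_of_abs_le_abs (by rw [hzabs]; exact hyr)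
  have hTxr : ‖T (x - x₁)‖ ≤ ‖T‖ * ‖z‖ :=
    (T.le_opNorm _).trans (mul_le_mul_of_nonneg_left hxrn (norm_nonneg T))
  have hTyr : ‖T (y - y₁)‖ ≤ ‖T‖ * ‖z‖ :=
    (T.le_opNorm _).trans (mul_le_mul_of_nonneg_left hyrn (norm_nonneg T))
  have hεM : 0 ≤ ε * max ‖x‖ ‖y‖ :=
    mul_nonneg hε (le_max_iff.mpr (Or.inl (norm_nonneg x)))
  have hTz : 0 ≤ ‖T‖ * ‖z‖ := mul_nonneg (norm_nonneg T) (norm_nonneg z)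
  calc ‖|T x| ⊓ |T y|‖ ≤ ‖|T x₁| ⊓ |T y₁|‖ + (‖T (x - x₁)‖ + ‖T (y - y₁)‖) :=
        hnorm1.trans hnorm2
    _ ≤ ε * max ‖x‖ ‖y‖ + (‖T‖ * ‖z‖ + ‖T‖ * ‖z‖) := by gcongr
    _ ≤ 4 * (ε * max ‖x‖ ‖y‖ + ‖T‖ * ‖|x| ⊓ |y|‖) := by rw [← hz]; nlinarith
end

section
/- Let b₀, b₁, …, b_n be non-negative real numbers. Then 𝔼_S min{ Σ_{i ∈ S} b_i , Σ_{i ∉ S} b_i } ≤ (Σ_{i=0}^n b_i − max_{0 ≤ i ≤ n} b_i) ≤ 2^8 · 𝔼_S min{ Σ_{i ∈ S} b_i , Σ_{i ∉ S} b_i }, where 𝔼_S denotes the average over all 2^{n+1} subsets S of {0, 1, …, n}, each taken with equal weight 2^{-(n+1)}, and S^c = {0, …, n} \ S. -/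
open Finset

private lemma min_half (a T : ℝ) : min a (T - a) = (T - |2 * a - T|) / 2 := by
  rcases le_total (2 * a) T with h | h
  · rw [abs_of_nonpos (by linarith), min_eq_left (by linarith)]; ring
  · rw [abs_of_nonneg (by linarith), min_eq_right (by linarith)]; ring

private lemma sum_sum_powerset {ι : Type*} [DecidableEq ι] (u : Finset ι) (g : ι → ℝ) :
    2 * ∑ S ∈ u.powerset, ∑ i ∈ S, g i = 2 ^ u.card * ∑ i ∈ u, g i := by
  induction u using Finset.induction_on with
  | empty => simp
  | insert _ _ ha ih =>
    rename_i a s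
    rw [Finset.sum_powerset_insert ha, Finset.sum_insert ha, Finset.card_insert_of_notMem ha]
    have h2 : ∀ S ∈ s.powerset, ∑ i ∈ insert a S, g i = g a + ∑ i ∈ S, g i := by
      intro S hS
      exact Finset.sum_insert (fun h => ha (Finset.mem_powerset.1 hS h))
    rw [Finset.sum_congr rfl h2, Finset.sum_add_distrib, Finset.sum_const,
      Finset.card_powerset, nsmul_eq_mul]
    push_cast
    ring_nf
    nlinarith [ih]

private lemma sum_sq_powerset {ι : Type*} [DecidableEq ι] (u : Finset ι) (g : ι → ℝ) :
    ∑ S ∈ u.powerset, (2 * ∑ i ∈ S, g i - ∑ i ∈ u, g i) ^ 2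
      = 2 ^ u.card * ∑ i ∈ u, (g i) ^ 2 := by
  induction u using Finset.induction_on with
  | empty => simp
  | insert _ _ ha ih =>
    rename_i a s
    rw [Finset.sum_powerset_insert ha, Finset.sum_insert ha, Finset.sum_insert ha,
      Finset.card_insert_of_notMem ha]
    have h2 : ∀ S ∈ s.powerset,
        (2 * ∑ i ∈ insert a S, g i - (g a + ∑ i ∈ s, g i)) ^ 2
          = (2 * ∑ i ∈ S, g i - ∑ i ∈ s, g i) ^ 2
            + 2 * (g a) * (2 * ∑ i ∈ S, g i - ∑ i ∈ s, g i) + (g a) ^ 2 := by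
      intro S hS
      rw [Finset.sum_insert (fun h => ha (Finset.mem_powerset.1 hS h))]
      ring
    have h3 : ∀ S ∈ s.powerset,
        (2 * ∑ i ∈ S, g i - (g a + ∑ i ∈ s, g i)) ^ 2
          = (2 * ∑ i ∈ S, g i - ∑ i ∈ s, g i) ^ 2
            - 2 * (g a) * (2 * ∑ i ∈ S, g i - ∑ i ∈ s, g i) + (g a) ^ 2 := by
      intro S _; ring
    rw [Finset.sum_congr rfl h2, Finset.sum_congr rfl h3]
    simp only [Finset.sum_add_distrib, Finset.sum_sub_distrib, Finset.sum_const,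
      Finset.card_powerset, nsmul_eq_mul, ih]
    push_cast
    ring

/-- **probabilistic inequality.** For non-negative reals `b₀, …, b_n`,
`𝔼_S min(Σ_{i∈S} b_i, Σ_{i∉S} b_i) ≤ Σ_i b_i - max_i b_i ≤ 2^8 𝔼_S min(Σ_{i∈S} b_i, Σ_{i∉S} b_i)`,
where the expectation is the uniform average over all subsets `S ⊆ {0, …, n}`. -/
theorem stmt2 (n : ℕ) (b : Fin (n + 1) → ℝ) (hb : ∀ i, 0 ≤ b i) :
    (2 ^ (n + 1) : ℝ)⁻¹ *
        ∑ S ∈ (univ : Finset (Fin (n + 1))).powerset,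
          min (∑ i ∈ S, b i) (∑ i ∈ Sᶜ, b i) ≤
      (∑ i, b i) - (univ : Finset (Fin (n + 1))).sup' univ_nonempty b ∧
    (∑ i, b i) - (univ : Finset (Fin (n + 1))).sup' univ_nonempty b ≤
      2 ^ 8 * ((2 ^ (n + 1) : ℝ)⁻¹ *
        ∑ S ∈ (univ : Finset (Fin (n + 1))).powerset,
          min (∑ i ∈ S, b i) (∑ i ∈ Sᶜ, b i)) := by
  obtain ⟨j, -, hj⟩ := Finset.exists_mem_eq_sup' (univ_nonempty) b
  rw [hj]
  set T := ∑ i, b i with hT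
  set F : Finset (Fin (n + 1)) → ℝ := fun S => min (∑ i ∈ S, b i) (∑ i ∈ Sᶜ, b i) with hF
  have hbj : ∀ i, b i ≤ b j := fun i => hj ▸ Finset.le_sup' b (mem_univ i)
  have hjT : b j ≤ T := Finset.single_le_sum (fun i _ => hb i) (mem_univ j)
  have hcompl : ∀ S : Finset (Fin (n + 1)), ∑ i ∈ Sᶜ, b i = T - ∑ i ∈ S, b i := by
    intro S
    rw [eq_sub_iff_add_eq, Finset.sum_compl_add_sum]
  have hsumnn : ∀ S : Finset (Fin (n + 1)), 0 ≤ ∑ i ∈ S, b i :=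
    fun S => Finset.sum_nonneg fun i _ => hb i
  have hFnn : ∀ S, 0 ≤ F S := fun S => le_min (hsumnn S) (hsumnn Sᶜ)
  have hcard : ((univ : Finset (Fin (n + 1))).powerset.card : ℝ) = 2 ^ (n + 1) := by
    simp [Finset.card_powerset]
  have hpow : (0 : ℝ) < 2 ^ (n + 1) := by positivity
  -- Upper bound per term
  have hupper : ∀ S ∈ (univ : Finset (Fin (n + 1))).powerset, F S ≤ T - b j := by
    intro S _
    by_cases hjS : j ∈ S
    · refine (min_le_right _ _).trans ?_
      rw [hcompl]
      have : b j ≤ ∑ i ∈ S, b i := Finset.single_le_sum (fun i _ => hb i) hjS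
      linarith
    · refine (min_le_left _ _).trans ?_
      have : b j ≤ ∑ i ∈ Sᶜ, b i :=
        Finset.single_le_sum (fun i _ => hb i) (by simpa using hjS)
      rw [hcompl] at this
      linarith
  have hsum_upper : ∑ S ∈ (univ : Finset (Fin (n + 1))).powerset, F S
      ≤ 2 ^ (n + 1) * (T - b j) := by
    calc ∑ S ∈ (univ : Finset (Fin (n + 1))).powerset, F S
        ≤ ∑ _S ∈ (univ : Finset (Fin (n + 1))).powerset, (T - b j) :=
          Finset.sum_le_sum hupper
      _ = 2 ^ (n + 1) * (T - b j) := by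
          rw [Finset.sum_const, nsmul_eq_mul, hcard]
  constructor
  · rw [inv_mul_le_iff₀ hpow]
    linarith [hsum_upper]
  · -- Lower bound: ∑ F ≥ 2^(n+1) * (T - b j) / 8
    have key : 2 ^ (n + 1) * (T - b j) / 8
        ≤ ∑ S ∈ (univ : Finset (Fin (n + 1))).powerset, F S := by
      by_cases hM : T ≤ 2 * b j
      · -- Case A
        have hje : j ∉ (univ : Finset (Fin (n + 1))).erase j := Finset.notMem_erase _ _
        have hins : (univ : Finset (Fin (n + 1))) = insert j (univ.erase j) :=
          (Finset.insert_erase (mem_univ j)).symm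
        have hTe : ∑ i ∈ (univ : Finset (Fin (n + 1))).erase j, b i = T - b j := by
          rw [eq_sub_iff_add_eq, Finset.sum_erase_add _ _ (mem_univ j)]
        have hce : ((univ : Finset (Fin (n + 1))).erase j).card = n := by
          rw [Finset.card_erase_of_mem (mem_univ j)]
          simp
        have hsplit : ∑ S ∈ (univ : Finset (Fin (n + 1))).powerset, F S
            = (∑ S ∈ (univ.erase j).powerset, F S)
              + ∑ S ∈ (univ.erase j).powerset, F (insert j S) := by
          conv_lhs => rw [hins]
          exact Finset.sum_powerset_insert hje F
        have hval : ∀ S ∈ ((univ : Finset (Fin (n + 1))).erase j).powerset,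
            F (insert j S) = T - b j - ∑ i ∈ S, b i := by
          intro S hS
          have hjS : j ∉ S := fun h => hje (Finset.mem_powerset.1 hS h)
          have hXS : ∑ i ∈ insert j S, b i = b j + ∑ i ∈ S, b i := Finset.sum_insert hjS
          have h0 : 0 ≤ ∑ i ∈ S, b i := hsumnn S
          rw [hF]
          simp only
          rw [hcompl, hXS, min_eq_right (by linarith)]
          ring
        have hid : 2 * ∑ S ∈ ((univ : Finset (Fin (n + 1))).erase j).powerset, ∑ i ∈ S, b i
            = 2 ^ n * (T - b j) := by
          rw [sum_sum_powerset, hce, hTe]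
        have h2 : ∑ S ∈ ((univ : Finset (Fin (n + 1))).erase j).powerset, F (insert j S)
            = 2 ^ n * (T - b j)
              - ∑ S ∈ ((univ : Finset (Fin (n + 1))).erase j).powerset, ∑ i ∈ S, b i := by
          rw [Finset.sum_congr rfl hval, Finset.sum_sub_distrib, Finset.sum_const,
            Finset.card_powerset, hce, nsmul_eq_mul]
          push_cast
          ring
        have h1 : 0 ≤ ∑ S ∈ ((univ : Finset (Fin (n + 1))).erase j).powerset, F S :=
          Finset.sum_nonneg fun S _ => hFnn S
        rw [hsplit, h2]
        have : (2 : ℝ) ^ (n + 1) = 2 * 2 ^ n := by ring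
        rw [this]
        nlinarith [hid]
      · -- Case B
        push_neg at hM
        set Q := ∑ i, (b i) ^ 2 with hQdef
        have hQ : Q ≤ b j * T := by
          rw [hQdef, hT, Finset.mul_sum]
          exact Finset.sum_le_sum fun i _ => by nlinarith [hbj i, hb i]
        have hvar : ∑ S ∈ (univ : Finset (Fin (n + 1))).powerset,
            (2 * ∑ i ∈ S, b i - T) ^ 2 = 2 ^ (n + 1) * Q := by
          have := sum_sq_powerset (univ : Finset (Fin (n + 1))) b
          simpa using this
        set A := ∑ S ∈ (univ : Finset (Fin (n + 1))).powerset, |2 * ∑ i ∈ S, b i - T| with hA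
        have hA0 : 0 ≤ A := Finset.sum_nonneg fun S _ => abs_nonneg _
        have hCS : A ^ 2 ≤ 2 ^ (n + 1) * (2 ^ (n + 1) * Q) := by
          have := Finset.sum_mul_sq_le_sq_mul_sq (univ : Finset (Fin (n + 1))).powerset
            (fun _ => (1 : ℝ)) (fun S => |2 * ∑ i ∈ S, b i - T|)
          simp only [one_pow, one_mul, sq_abs, Finset.sum_const, nsmul_eq_mul, mul_one] at this
          rw [hvar, hcard] at this
          exact this
        have hT0 : 0 ≤ T := le_trans (hb j) hjT
        have hAle : A ≤ 3 / 4 * (2 ^ (n + 1) * T) := by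
          have h1 : A ^ 2 ≤ (3 / 4 * (2 ^ (n + 1) * T)) ^ 2 := by
            calc A ^ 2 ≤ 2 ^ (n + 1) * (2 ^ (n + 1) * Q) := hCS
              _ ≤ 2 ^ (n + 1) * (2 ^ (n + 1) * (T * T / 2)) := by
                  have hQ2 : Q ≤ T * T / 2 := by nlinarith [hb j]
                  gcongr
              _ ≤ (3 / 4 * (2 ^ (n + 1) * T)) ^ 2 := by nlinarith [hpow, hT0]
          nlinarith [h1, hA0, mul_nonneg (mul_nonneg (by norm_num : (0:ℝ) ≤ 3/4) hpow.le) hT0]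
        have hFexp : ∑ S ∈ (univ : Finset (Fin (n + 1))).powerset, F S
            = (2 ^ (n + 1) * T - A) / 2 := by
          have : ∀ S ∈ (univ : Finset (Fin (n + 1))).powerset,
              F S = (T - |2 * ∑ i ∈ S, b i - T|) / 2 := by
            intro S _
            rw [hF]
            simp only
            rw [hcompl, min_half]
          rw [Finset.sum_congr rfl this]
          rw [← Finset.sum_div, Finset.sum_sub_distrib, Finset.sum_const, nsmul_eq_mul, hcard,
            ← hA]
        rw [hFexp]
        nlinarith [hbj j, hb j]
    have hinv : (0:ℝ) < (2 ^ (n + 1) : ℝ)⁻¹ := by positivity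
    have hmul := mul_le_mul_of_nonneg_left key hinv.le
    have hid : (2 ^ (n + 1) : ℝ)⁻¹ * (2 ^ (n + 1) * (T - b j) / 8) = (T - b j) / 8 := by
      field_simp
    rw [hid] at hmul
    have h0 : 0 ≤ T - b j := by linarith
    calc T - b j ≤ 32 * (T - b j) := by linarith
      _ = 256 * ((T - b j) / 8) := by ring
      _ ≤ 256 * ((2 ^ (n + 1) : ℝ)⁻¹ * ∑ S ∈ (univ : Finset (Fin (n + 1))).powerset, F S) := by
          linarith
      _ = _ := by norm_num
end

section
/- Let f₁, …, f_n be positive elements of a real Banach lattice X. Then 2^{-n}·Σ_{S ⊆ {1,…,n}} ((Σ_{i ∈ S} f_i) ⊓ (Σ_{i ∉ S} f_i)) ≥ 2^{-8}·(Σ_{i=1}^n f_i − ⋁_{i=1}^n f_i) in the lattice order. Consequently, 2^{-n}·Σ_{S ⊆ {1,…,n}} ‖(Σ_{i ∈ S} f_i) ⊓ (Σ_{i ∉ S} f_i)‖ ≥ 2^{-8}·‖Σ_{i=1}^n f_i − ⋁_{i=1}^n f_i‖. -/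
open Finset

section LatticeLemmas

variable {E : Type*} [Lattice E] [AddCommGroup E] [AddLeftMono E]

lemma aux_subadd {p q c : E} (hp : 0 ≤ p) (hq : 0 ≤ q) (hc : 0 ≤ c) :
    (p + q) ⊓ c ≤ p ⊓ c + q ⊓ c := by
  have h1 : p ⊓ c + q ⊓ c = ((p + q) ⊓ (c + q)) ⊓ ((p + c) ⊓ (c + c)) := by
    rw [add_inf q c (p ⊓ c), inf_add, inf_add]
  rw [h1]
  refine le_inf (le_inf inf_le_left ?_) (le_inf ?_ ?_)
  · exact inf_le_right.trans (le_add_of_nonneg_right hq)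
  · exact inf_le_right.trans (le_add_of_nonneg_left hp)
  · exact inf_le_right.trans (le_add_of_nonneg_left hc)

lemma aux_inf_nsmul {a b : E} (ha : 0 ≤ a) (hb : 0 ≤ b) :
    ∀ k : ℕ, a ⊓ (k • b) ≤ k • (a ⊓ b)
  | 0 => by simpa using inf_le_right (a := a) (b := (0 : E))
  | (k + 1) => by
      have h0 : a ⊓ ((k + 1) • b) = a ⊓ (k • b + b) := by rw [succ_nsmul]
      rw [h0, inf_comm]
      calc (k • b + b) ⊓ a ≤ (k • b) ⊓ a + b ⊓ a :=
            aux_subadd (nsmul_nonneg hb k) hb ha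
        _ ≤ k • (a ⊓ b) + a ⊓ b := by
            rw [inf_comm (k • b) a, inf_comm b a]
            exact add_le_add_left (aux_inf_nsmul ha hb k) _
        _ = (k + 1) • (a ⊓ b) := (succ_nsmul _ _).symm

lemma aux_disj_nsmul {a b : E} (ha : 0 ≤ a) (hb : 0 ≤ b) (hab : a ⊓ b = 0) (k l : ℕ) :
    (k • a) ⊓ (l • b) = 0 := by
  refine le_antisymm ?_ (le_inf (nsmul_nonneg ha k) (nsmul_nonneg hb l))
  have h1 : a ⊓ (l • b) ≤ 0 := by
    have := aux_inf_nsmul ha hb l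
    rwa [hab, smul_zero] at this
  calc (k • a) ⊓ (l • b) = (l • b) ⊓ (k • a) := inf_comm _ _
    _ ≤ k • ((l • b) ⊓ a) := aux_inf_nsmul (nsmul_nonneg hb l) ha k
    _ ≤ k • (0 : E) := nsmul_le_nsmul_right (by rwa [inf_comm]) k
    _ = 0 := smul_zero k

lemma aux_nsmul_sup (k : ℕ) (a b : E) : k • (a ⊔ b) = k • a ⊔ k • b := by
  set s := a ⊔ b with hs
  have hu : (0 : E) ≤ s - a := sub_nonneg.2 le_sup_left
  have hv : (0 : E) ≤ s - b := sub_nonneg.2 le_sup_right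
  have huv : (s - a) ⊓ (s - b) = 0 := by
    have : (s - a) ⊓ (s - b) = s - (a ⊔ b) := by
      rw [sub_eq_add_neg, sub_eq_add_neg, ← add_inf, ← neg_sup, ← sub_eq_add_neg]
    rw [this, ← hs, sub_self]
  have h2 := aux_disj_nsmul hu hv huv k k
  rw [smul_sub, smul_sub] at h2
  have h3 : (k • s - k • a) ⊓ (k • s - k • b) = k • s - (k • a ⊔ k • b) := by
    rw [sub_eq_add_neg, sub_eq_add_neg, ← add_inf, ← neg_sup, ← sub_eq_add_neg]
  rw [h3, sub_eq_zero] at h2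
  exact h2

lemma aux_reflect {x : E} {k : ℕ} (hk : k ≠ 0) (h : 0 ≤ k • x) : 0 ≤ x := by
  have hxs : k • x⁺ - k • x⁻ = k • x := by rw [← smul_sub, posPart_sub_negPart]
  have h1 : k • x⁻ ≤ k • x⁺ := by
    rw [← sub_nonneg, hxs]; exact h
  have h2 : x⁻ ≤ k • x⁻ := by
    calc x⁻ = 1 • x⁻ := (one_nsmul _).symm
      _ ≤ k • x⁻ := nsmul_le_nsmul_left (negPart_nonneg x) (Nat.one_le_iff_ne_zero.2 hk)
  have h3 : x⁻ ≤ k • x⁺ := h2.trans h1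
  have h4 : x⁻ ⊓ (k • x⁺) ≤ k • (x⁻ ⊓ x⁺) := aux_inf_nsmul (negPart_nonneg x) (posPart_nonneg x) k
  rw [inf_comm x⁻ x⁺, posPart_inf_negPart_eq_zero, smul_zero] at h4
  have h5 : x⁻ = x⁻ ⊓ (k • x⁺) := (inf_eq_left.2 h3).symm
  have h6 : x⁻ = 0 := le_antisymm (h5 ▸ h4) (negPart_nonneg x)
  exact negPart_eq_zero.1 h6

lemma aux_L1 {x y c : E} (hc : 0 ≤ c) :
    2 • (x ⊓ y) + c ⊓ (x + y - 2 • (x ⊓ y)) ≤ x ⊓ (y + c) + (x + c) ⊓ y := by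
  set m := x ⊓ y with hm
  have hp : 0 ≤ x - m := sub_nonneg.2 inf_le_left
  have hq : 0 ≤ y - m := sub_nonneg.2 inf_le_right
  have key1 : x ⊓ (y + c) = m + (x - m) ⊓ (y - m + c) := by
    rw [add_inf, add_sub_cancel, add_comm m (y - m + c)]
    abel_nf
  have key2 : (x + c) ⊓ y = m + (x - m + c) ⊓ (y - m) := by
    rw [add_inf, add_sub_cancel]
    abel_nf
  have hi1 : m + (x - m) ⊓ c ≤ x ⊓ (y + c) := by
    rw [key1]
    exact add_le_add_right (inf_le_inf_left _ (le_add_of_nonneg_left hq)) m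
  have hi2 : m + c ⊓ (y - m) ≤ (x + c) ⊓ y := by
    rw [key2]
    refine add_le_add_right (inf_le_inf_right _ ?_) m
    exact le_add_of_nonneg_left hp
  have hsum : c ⊓ ((x - m) + (y - m)) ≤ (x - m) ⊓ c + c ⊓ (y - m) := by
    rw [inf_comm c ((x - m) + (y - m)), inf_comm c (y - m)]
    exact aux_subadd hp hq hc
  have hxy : x + y - 2 • (x ⊓ y) = (x - m) + (y - m) := by
    rw [two_nsmul, ← hm]; abel
  calc 2 • (x ⊓ y) + c ⊓ (x + y - 2 • (x ⊓ y))
      = m + m + c ⊓ ((x - m) + (y - m)) := by rw [hxy, two_nsmul, hm]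
    _ ≤ m + m + ((x - m) ⊓ c + c ⊓ (y - m)) := add_le_add_right hsum _
    _ = (m + (x - m) ⊓ c) + (m + c ⊓ (y - m)) := by abel
    _ ≤ x ⊓ (y + c) + (x + c) ⊓ y := add_le_add hi1 hi2

end LatticeLemmas

section Key

variable {E : Type*} [Lattice E] [AddCommGroup E] [AddLeftMono E]
variable {ι : Type*} [DecidableEq ι]

private def myOACM (E : Type*) [Lattice E] [AddCommGroup E] [AddLeftMono E] :
    IsOrderedAddMonoid E :=
  { add_le_add_left := fun _ _ h c => add_le_add_left h c }

attribute [local instance] myOACM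

lemma aux_nsmul_sup' (k : ℕ) (A : Finset ι) (hA : A.Nonempty) (g : ι → E) :
    k • (A.sup' hA g) = A.sup' hA (fun i => k • g i) := by
  induction hA using Finset.Nonempty.cons_induction with
  | singleton a => simp
  | cons a s h hs ih => rw [Finset.sup'_cons (H := hs), Finset.sup'_cons (H := hs), aux_nsmul_sup, ih]

lemma aux_inf_sup' (c : E) (A : Finset ι) (hA : A.Nonempty) (g : ι → E) :
    c ⊓ A.sup' hA g = A.sup' hA (fun i => c ⊓ g i) := by
  letI : DistribLattice E := AddCommGroup.toDistribLattice E
  exact Finset.sup'_inf_distrib_left hA g c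

lemma aux_peri (f : ι → E) (hf : ∀ i, 0 ≤ f i)
    (A : Finset ι) {i : ι} (hi : i ∈ A) {c : E} (hc : 0 ≤ c) :
    2 ^ (A.card - 1) • (c ⊓ f i) ≤
      ∑ S ∈ A.powerset,
        c ⊓ ((∑ j ∈ S, f j) + (∑ j ∈ A \ S, f j)
          - 2 • ((∑ j ∈ S, f j) ⊓ (∑ j ∈ A \ S, f j))) := by
  set g : Finset ι → E := fun S =>
    c ⊓ ((∑ j ∈ S, f j) + (∑ j ∈ A \ S, f j)
      - 2 • ((∑ j ∈ S, f j) ⊓ (∑ j ∈ A \ S, f j))) with hg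
  have hiB : i ∉ A.erase i := Finset.notMem_erase i A
  have hins : insert i (A.erase i) = A := Finset.insert_erase hi
  have hsplit : ∑ S ∈ A.powerset, g S
      = ∑ S ∈ (A.erase i).powerset, (g S + g (insert i S)) := by
    have h0 := Finset.sum_powerset_insert hiB g
    rw [hins] at h0
    rw [h0, ← Finset.sum_add_distrib]
  rw [hsplit]
  have hcard : (A.erase i).powerset.card = 2 ^ (A.card - 1) := by
    rw [Finset.card_powerset, Finset.card_erase_of_mem hi]
  calc 2 ^ (A.card - 1) • (c ⊓ f i)
      = ∑ _S ∈ (A.erase i).powerset, (c ⊓ f i) := by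
        rw [Finset.sum_const, hcard]
    _ ≤ ∑ S ∈ (A.erase i).powerset, (g S + g (insert i S)) := by
        apply Finset.sum_le_sum
        intro S hS
        have hSB : S ⊆ A.erase i := Finset.mem_powerset.1 hS
        have hiS : i ∉ S := fun h => hiB (hSB h)
        have hSA : S ⊆ A := hSB.trans (Finset.erase_subset i A)
        set x := ∑ j ∈ S, f j with hx
        set y := ∑ j ∈ A \ S, f j with hy
        set x' := ∑ j ∈ insert i S, f j with hx'
        set y' := ∑ j ∈ A \ insert i S, f j with hy'
        have hxx' : x' = f i + x := Finset.sum_insert hiS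
        have hyy' : y = f i + y' := by
          have h1 : A \ insert i S = (A \ S).erase i := Finset.sdiff_insert A S i
          have h2 : i ∈ A \ S := Finset.mem_sdiff.2 ⟨hi, hiS⟩
          rw [hy, hy', h1, ← Finset.sum_insert (Finset.notMem_erase i (A \ S)),
            Finset.insert_erase h2]
        have hx0 : 0 ≤ x := Finset.sum_nonneg fun j _ => hf j
        have hy0 : 0 ≤ y := Finset.sum_nonneg fun j _ => hf j
        have hx'0 : 0 ≤ x' := Finset.sum_nonneg fun j _ => hf j
        have hy'0 : 0 ≤ y' := Finset.sum_nonneg fun j _ => hf j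
        set d1 := x + y - 2 • (x ⊓ y) with hd1
        set d2 := x' + y' - 2 • (x' ⊓ y') with hd2
        have hd10 : 0 ≤ d1 := by
          have : 2 • (x ⊓ y) ≤ x + y := by
            rw [two_nsmul]
            exact add_le_add inf_le_left inf_le_right
          rwa [hd1, sub_nonneg]
        have hd20 : 0 ≤ d2 := by
          have : 2 • (x' ⊓ y') ≤ x' + y' := by
            rw [two_nsmul]
            exact add_le_add inf_le_left inf_le_right
          rwa [hd2, sub_nonneg]
        have hdsum : 2 • f i ≤ d1 + d2 := by
          have h1 : y - x ≤ d1 := by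
            rw [hd1, two_nsmul]
            have : x ⊓ y + x ⊓ y ≤ x + x := add_le_add inf_le_left inf_le_left
            calc y - x = x + y - (x + x) := by abel
              _ ≤ x + y - (x ⊓ y + x ⊓ y) := by
                  exact sub_le_sub_left this _
          have h2 : x' - y' ≤ d2 := by
            rw [hd2, two_nsmul]
            have : x' ⊓ y' + x' ⊓ y' ≤ y' + y' := add_le_add inf_le_right inf_le_right
            calc x' - y' = x' + y' - (y' + y') := by abel
              _ ≤ x' + y' - (x' ⊓ y' + x' ⊓ y') := sub_le_sub_left this _
          calc 2 • f i = (y - x) + (x' - y') := by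
                rw [hxx', hyy', two_nsmul]; abel
            _ ≤ d1 + d2 := add_le_add h1 h2
        have hgS : g S = c ⊓ d1 := rfl
        have hgS' : g (insert i S) = c ⊓ d2 := rfl
        rw [hgS, hgS']
        calc c ⊓ f i ≤ (2 • f i) ⊓ c :=
              le_inf (le_trans inf_le_right (by
                rw [two_nsmul]; exact le_add_of_nonneg_left (hf i))) inf_le_left
          _ ≤ (d1 + d2) ⊓ c := inf_le_inf_right c hdsum
          _ ≤ d1 ⊓ c + d2 ⊓ c := aux_subadd hd10 hd20 hc
          _ = c ⊓ d1 + c ⊓ d2 := by rw [inf_comm d1 c, inf_comm d2 c]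

lemma key_ineq (f : ι → E) (hf : ∀ i, 0 ≤ f i) (A : Finset ι) (hA : A.Nonempty) :
    2 ^ A.card • ((∑ i ∈ A, f i) - A.sup' hA f)
      ≤ 4 • ∑ S ∈ A.powerset, ((∑ i ∈ S, f i) ⊓ (∑ i ∈ A \ S, f i)) := by
  induction hA using Finset.Nonempty.cons_induction with
  | singleton a =>
      have h2 : (0:E) ≤ ∑ S ∈ ({a} : Finset ι).powerset,
          ((∑ i ∈ S, f i) ⊓ (∑ i ∈ ({a} : Finset ι) \ S, f i)) :=
        Finset.sum_nonneg fun S _ => le_inf (Finset.sum_nonneg fun j _ => hf j)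
          (Finset.sum_nonneg fun j _ => hf j)
      simp only [Finset.sum_singleton, Finset.sup'_singleton, sub_self, smul_zero]
      exact nsmul_nonneg h2 4
  | cons a A haA hA ih =>
      set F := ∑ i ∈ A, f i with hF
      set M := A.sup' hA f with hM
      set c := f a with hc
      set T := ∑ S ∈ A.powerset, ((∑ i ∈ S, f i) ⊓ (∑ i ∈ A \ S, f i)) with hT
      set Z := ∑ S ∈ A.powerset,
        (c ⊓ ((∑ j ∈ S, f j) + (∑ j ∈ A \ S, f j)
          - 2 • ((∑ j ∈ S, f j) ⊓ (∑ j ∈ A \ S, f j)))) with hZ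
      have hc0 : 0 ≤ c := hf a
      -- rewrite goal data for cons
      simp only [Finset.cons_eq_insert]
      have hcard : (insert a A).card = A.card + 1 := Finset.card_insert_of_notMem haA
      have hsum : ∑ i ∈ insert a A, f i = c + F := Finset.sum_insert haA
      have hsup : (insert a A).sup' (Finset.insert_nonempty a A) f = c ⊔ M := by
        refine le_antisymm (Finset.sup'_le _ _ fun i hi => ?_)
          (sup_le (Finset.le_sup' f (Finset.mem_insert_self a A))
            (Finset.sup'_le _ _ fun i hi => Finset.le_sup' f (Finset.mem_insert_of_mem hi)))
        rcases Finset.mem_insert.1 hi with rfl | hi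
        · exact le_sup_left
        · exact le_trans (Finset.le_sup' f hi) le_sup_right
      -- the big sum splits into pairs
      have hbig : ∑ S ∈ (insert a A).powerset,
            ((∑ i ∈ S, f i) ⊓ (∑ i ∈ insert a A \ S, f i))
          = ∑ S ∈ A.powerset,
              (((∑ i ∈ S, f i) ⊓ (∑ i ∈ insert a A \ S, f i))
               + ((∑ i ∈ insert a S, f i) ⊓ (∑ i ∈ insert a A \ insert a S, f i))) := by
        rw [Finset.sum_powerset_insert haA, ← Finset.sum_add_distrib]
      have hpair : ∀ S ∈ A.powerset,
          2 • ((∑ i ∈ S, f i) ⊓ (∑ i ∈ A \ S, f i))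
            + (c ⊓ ((∑ j ∈ S, f j) + (∑ j ∈ A \ S, f j)
                - 2 • ((∑ j ∈ S, f j) ⊓ (∑ j ∈ A \ S, f j))))
          ≤ ((∑ i ∈ S, f i) ⊓ (∑ i ∈ insert a A \ S, f i))
            + ((∑ i ∈ insert a S, f i) ⊓ (∑ i ∈ insert a A \ insert a S, f i)) := by
        intro S hS
        have hSA : S ⊆ A := Finset.mem_powerset.1 hS
        have haS : a ∉ S := fun h => haA (hSA h)
        set x := ∑ i ∈ S, f i with hx
        set y := ∑ i ∈ A \ S, f i with hy
        have h1 : insert a A \ S = insert a (A \ S) :=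
          Finset.insert_sdiff_of_notMem _ haS
        have h2 : ∑ i ∈ insert a A \ S, f i = c + y := by
          rw [h1, Finset.sum_insert (fun h => haA (Finset.mem_sdiff.1 h).1)]
        have h3 : insert a A \ insert a S = A \ S := by
          ext u
          simp only [Finset.mem_sdiff, Finset.mem_insert]
          constructor
          · rintro ⟨hu1 | hu1, hu2⟩
            · exact absurd (Or.inl hu1) hu2
            · exact ⟨hu1, fun h => hu2 (Or.inr h)⟩
          · rintro ⟨hu1, hu2⟩
            exact ⟨Or.inr hu1, fun h => by
              rcases h with h | h
              · exact haA (h ▸ hu1)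
              · exact hu2 h⟩
        have h4 : ∑ i ∈ insert a S, f i = c + x := Finset.sum_insert haS
        rw [h2, h3, h4]
        have := aux_L1 (x := x) (y := y) (c := c) hc0
        calc 2 • (x ⊓ y) + c ⊓ (x + y - 2 • (x ⊓ y))
            ≤ x ⊓ (y + c) + (x + c) ⊓ y := this
          _ = x ⊓ (c + y) + (c + x) ⊓ y := by rw [add_comm y c, add_comm x c]
      have hbig2 : 2 • T + Z ≤ ∑ S ∈ (insert a A).powerset,
          ((∑ i ∈ S, f i) ⊓ (∑ i ∈ insert a A \ S, f i)) := by
        rw [hbig, hT, hZ, Finset.smul_sum, ← Finset.sum_add_distrib]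
        exact Finset.sum_le_sum hpair
      -- lower bound for Z
      have hZge : 2 ^ (A.card - 1) • (c ⊓ M) ≤ Z := by
        have hper : ∀ i ∈ A, 2 ^ (A.card - 1) • (c ⊓ f i) ≤ Z :=
          fun i hi => aux_peri f hf A hi hc0
        have h5 : c ⊓ M = A.sup' hA (fun i => c ⊓ f i) := aux_inf_sup' c A hA f
        rw [h5, aux_nsmul_sup']
        exact Finset.sup'_le _ _ hper
      -- assemble
      rw [hcard, hsum, hsup]
      have hid : c + F - c ⊔ M = (F - M) + c ⊓ M := by
        rw [eq_sub_of_add_eq (inf_add_sup c M)]; abel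
      rw [hid, smul_add]
      obtain ⟨k, hk⟩ : ∃ k, A.card = k + 1 :=
        ⟨A.card - 1, (Nat.succ_pred_eq_of_pos (Finset.card_pos.2 hA)).symm⟩
      have e1 : 2 ^ (A.card + 1) • (F - M) = 2 • (2 ^ A.card • (F - M)) := by
        rw [pow_succ', mul_nsmul']
      have e2 : (2:ℕ) ^ (A.card + 1) = 4 * 2 ^ (A.card - 1) := by
        rw [hk, Nat.add_sub_cancel]; ring
      have e3 : 2 • (4 • T) = 4 • (2 • T) := by
        rw [← mul_nsmul', ← mul_nsmul']
      have e4 : (4 * 2 ^ (A.card - 1)) • (c ⊓ M) = 4 • (2 ^ (A.card - 1) • (c ⊓ M)) :=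
        mul_nsmul' _ 4 _
      calc 2 ^ (A.card + 1) • (F - M) + 2 ^ (A.card + 1) • (c ⊓ M)
          ≤ 2 • (4 • T) + (4 * 2 ^ (A.card - 1)) • (c ⊓ M) := by
            rw [e1, ← e2]
            exact add_le_add_left (nsmul_le_nsmul_right ih 2) _
        _ = 4 • (2 • T) + 4 • (2 ^ (A.card - 1) • (c ⊓ M)) := by
            rw [e3, e4]
        _ ≤ 4 • (2 • T) + 4 • Z := add_le_add_right (nsmul_le_nsmul_right hZge 4) _
        _ = 4 • (2 • T + Z) := by rw [smul_add]
        _ ≤ 4 • ∑ S ∈ (insert a A).powerset,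
              ((∑ i ∈ S, f i) ⊓ (∑ i ∈ insert a A \ S, f i)) :=
            nsmul_le_nsmul_right hbig2 4

end Key

section RealConv

variable {E : Type*} [Lattice E] [AddCommGroup E] [AddLeftMono E] [Module ℝ E]

lemma aux_nsmul_real (k : ℕ) (r : ℝ) (x : E) : k • (r • x) = ((k : ℝ) * r) • x := by
  rw [← Nat.cast_smul_eq_nsmul ℝ k (r • x), smul_smul]

lemma aux_real {x y : E} {a b : ℕ} (ha : a ≠ 0) (hb : b ≠ 0) (h : a • x ≤ b • y) :
    ((b : ℝ))⁻¹ • x ≤ ((a : ℝ))⁻¹ • y := by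
  rw [← sub_nonneg]
  have hab : a * b ≠ 0 := mul_ne_zero ha hb
  apply aux_reflect hab
  have ha' : (a : ℝ) ≠ 0 := Nat.cast_ne_zero.2 ha
  have hb' : (b : ℝ) ≠ 0 := Nat.cast_ne_zero.2 hb
  have e1 : (a * b) • ((a : ℝ)⁻¹ • y) = b • y := by
    rw [aux_nsmul_real, ← Nat.cast_smul_eq_nsmul ℝ b y]
    congr 1
    push_cast
    field_simp
  have e2 : (a * b) • ((b : ℝ)⁻¹ • x) = a • x := by
    rw [aux_nsmul_real, ← Nat.cast_smul_eq_nsmul ℝ a x]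
    congr 1
    push_cast
    field_simp
  rw [smul_sub, e1, e2, sub_nonneg]
  exact h

end RealConv

/-- For positive elements `f₁, …, f_n` of a Banach lattice,
`𝔼_S ((Σ_{i∈S} f_i) ⊓ (Σ_{i∉S} f_i)) ≥ 2^{-8} (Σ_i f_i - ⋁_i f_i)` in the order, and
consequently the same inequality holds for the averaged norms. -/
theorem stmt3 (X : Type*)
    [NormedAddCommGroup X] [Lattice X] [IsOrderedAddMonoid X] [HasSolidNorm X]
    [NormedSpace ℝ X] [CompleteSpace X]
    (n : ℕ) (hn : 0 < n) (f : Fin n → X) (hf : ∀ i, 0 ≤ f i) :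
    (2 ^ 8 : ℝ)⁻¹ •
        ((∑ i, f i) -
          (univ : Finset (Fin n)).sup' (univ_nonempty_iff.2 (Fin.pos_iff_nonempty.1 hn)) f) ≤
      (2 ^ n : ℝ)⁻¹ •
        ∑ S ∈ (univ : Finset (Fin n)).powerset,
          ((∑ i ∈ S, f i) ⊓ (∑ i ∈ Sᶜ, f i)) ∧
    (2 ^ 8 : ℝ)⁻¹ *
        ‖(∑ i, f i) -
          (univ : Finset (Fin n)).sup' (univ_nonempty_iff.2 (Fin.pos_iff_nonempty.1 hn)) f‖ ≤
      (2 ^ n : ℝ)⁻¹ *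
        ∑ S ∈ (univ : Finset (Fin n)).powerset,
          ‖(∑ i ∈ S, f i) ⊓ (∑ i ∈ Sᶜ, f i)‖ := by
  have hA : (univ : Finset (Fin n)).Nonempty :=
    univ_nonempty_iff.2 (Fin.pos_iff_nonempty.1 hn)
  simp only [Finset.compl_eq_univ_sdiff]
  set D := (∑ i, f i) - (univ : Finset (Fin n)).sup' hA f with hD
  set T := ∑ S ∈ (univ : Finset (Fin n)).powerset,
      ((∑ i ∈ S, f i) ⊓ (∑ i ∈ univ \ S, f i)) with hT
  have hkey : (2 ^ n : ℕ) • D ≤ 4 • T := by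
    have h := key_ineq f hf univ hA
    rwa [Finset.card_univ, Fintype.card_fin] at h
  have hT0 : (0 : X) ≤ T :=
    Finset.sum_nonneg fun S _ => le_inf (Finset.sum_nonneg fun j _ => hf j)
      (Finset.sum_nonneg fun j _ => hf j)
  have hD0 : (0 : X) ≤ D :=
    sub_nonneg.2 (Finset.sup'_le _ _ fun i _ =>
      Finset.single_le_sum (fun j _ => hf j) (Finset.mem_univ i))
  have hkey2 : (2 ^ n : ℕ) • D ≤ (2 ^ 8 : ℕ) • T :=
    hkey.trans (nsmul_le_nsmul_left hT0 (by norm_num))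
  have main : (2 ^ 8 : ℝ)⁻¹ • D ≤ (2 ^ n : ℝ)⁻¹ • T := by
    have h := aux_real (pow_ne_zero n two_ne_zero) (pow_ne_zero 8 two_ne_zero) hkey2
    push_cast at h
    norm_num at h ⊢
    exact h
  refine ⟨main, ?_⟩
  have hL0 : (0 : X) ≤ (2 ^ 8 : ℝ)⁻¹ • D := by
    apply aux_reflect (k := 2 ^ 8) (by norm_num)
    have e : (2 ^ 8 : ℕ) • ((2 ^ 8 : ℝ)⁻¹ • D) = D := by
      rw [aux_nsmul_real]
      norm_num
    rw [e]
    exact hD0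
  have hR0 : (0 : X) ≤ (2 ^ n : ℝ)⁻¹ • T := hL0.trans main
  have hnorm1 : ‖(2 ^ 8 : ℝ)⁻¹ • D‖ ≤ ‖(2 ^ n : ℝ)⁻¹ • T‖ := by
    apply HasSolidNorm.solid
    rw [abs_of_nonneg hL0, abs_of_nonneg hR0]
    exact main
  calc (2 ^ 8 : ℝ)⁻¹ * ‖D‖ = ‖(2 ^ 8 : ℝ)⁻¹ • D‖ := by
        rw [norm_smul, Real.norm_eq_abs, abs_of_pos (by positivity)]
    _ ≤ ‖(2 ^ n : ℝ)⁻¹ • T‖ := hnorm1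
    _ = (2 ^ n : ℝ)⁻¹ * ‖T‖ := by
        rw [norm_smul, Real.norm_eq_abs, abs_of_pos (by positivity)]
    _ ≤ (2 ^ n : ℝ)⁻¹ *
          ∑ S ∈ (univ : Finset (Fin n)).powerset,
            ‖(∑ i ∈ S, f i) ⊓ (∑ i ∈ univ \ S, f i)‖ :=
        mul_le_mul_of_nonneg_left (norm_sum_le _ _) (by positivity)
end

section
/- Let E and F be real Banach lattices, ε ≥ 0, and T : E → F a positive bounded linear operator which is ε-disjointness preserving. Then for any pairwise disjoint x₁, …, x_n ∈ E, ‖Σ_{i=1}^n |Tx_i| − ⋁_{i=1}^n |Tx_i|‖ ≤ 256·ε·‖Σ_{i=1}^n x_i‖. -/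
open Finset

section DPHelpers

variable {α : Type*} [NormedAddCommGroup α] [Lattice α] [IsOrderedAddMonoid α] [HasSolidNorm α] {ι : Type*}

lemma sup_eq_add_sub_inf (a b : α) : a ⊔ b = a + b - a ⊓ b := by
  have h := inf_add_sup a b
  rw [← h]; abel

lemma abs_add_abs_eq (u v : α) : |u| + |v| = |u + v| ⊔ |u - v| := by
  apply le_antisymm
  · have h1 : |u| + |v| = ((u + v) ⊔ (-u + v)) ⊔ ((u + -v) ⊔ (-u + -v)) := by
      show u ⊔ -u + (v ⊔ -v) = _
      rw [add_sup v (-v) (u ⊔ -u), sup_add u (-u) v, sup_add u (-u) (-v)]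
    rw [h1]
    have l1 : u + v ≤ |u + v| ⊔ |u - v| := (le_abs_self _).trans le_sup_left
    have l2 : -u + v ≤ |u + v| ⊔ |u - v| := by
      have : -u + v = -(u - v) := by abel
      rw [this]; exact (neg_le_abs _).trans le_sup_right
    have l3 : u + -v ≤ |u + v| ⊔ |u - v| := by
      have : u + -v = u - v := by abel
      rw [this]; exact (le_abs_self _).trans le_sup_right
    have l4 : -u + -v ≤ |u + v| ⊔ |u - v| := by
      have : -u + -v = -(u + v) := by abel
      rw [this]; exact (neg_le_abs _).trans le_sup_left
    exact sup_le (sup_le l1 l2) (sup_le l3 l4)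
  · refine sup_le (abs_add_le u v) ?_
    rw [sub_eq_add_neg]
    exact (abs_add_le u (-v)).trans (by rw [abs_neg])

lemma abs_add_self_eq (y : α) : |y + y| = |y| + |y| := by
  have h := abs_add_abs_eq y y
  rw [sub_self, abs_zero, sup_eq_left.2 (abs_nonneg (y + y))] at h
  exact h.symm

lemma pair_abs (Y d : α) (hd : 0 ≤ d) : |Y - d| + |Y + d| = (2 • |Y|) ⊔ (2 • d) := by
  have h := abs_add_abs_eq (Y + d) (Y - d)
  have e1 : Y + d + (Y - d) = Y + Y := by abel
  have e2 : Y + d - (Y - d) = d + d := by abel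
  rw [e1, e2, abs_add_self_eq, abs_of_nonneg (add_nonneg hd hd)] at h
  rw [add_comm (|Y - d|) (|Y + d|), h, two_smul, two_smul]

lemma inf_add_inf_ge (p q e : α) (hp : 0 ≤ p) (hq : 0 ≤ q) (he : 0 ≤ e) :
    (p + q) ⊓ e ≤ p ⊓ e + q ⊓ e := by
  have h : p ⊓ e + q ⊓ e = ((q + p) ⊓ (q + e)) ⊓ ((e + p) ⊓ (e + e)) := by
    rw [add_inf q e (p ⊓ e), add_comm (p ⊓ e) q, add_comm (p ⊓ e) e, add_inf p e q, add_inf p e e]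
  rw [h]
  refine le_inf (le_inf ?_ ?_) (le_inf ?_ ?_)
  · rw [add_comm]; exact inf_le_left
  · exact inf_le_right.trans (le_add_of_nonneg_left hq)
  · exact inf_le_right.trans (le_add_of_nonneg_right hp)
  · exact inf_le_right.trans (le_add_of_nonneg_right he)

lemma add_le_two_sup (a b : α) : a + b ≤ (a + a) ⊔ (b + b) := by
  have h : (a + a) ⊔ (b + b) - (a + b) = (a - b) ⊔ (b - a) := by
    rw [sub_eq_add_neg, sup_add (a+a) (b+b) (-(a+b))]
    congr 1 <;> abel
  have h2 : (0:α) ≤ (a - b) ⊔ (b - a) := by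
    have := abs_nonneg (a - b)
    have e : |a - b| = (a - b) ⊔ (b - a) := by
      show (a - b) ⊔ -(a - b) = _
      congr 1; abel
    rwa [e] at this
  have h3 : (0:α) ≤ (a + a) ⊔ (b + b) - (a + b) := h ▸ h2
  have := sub_nonneg.mp h3
  exact this

lemma inf_sup_le_aux (x y z : α) : (x ⊔ y) ⊓ z ≤ (x ⊓ z) ⊔ (y ⊓ z) := by
  set m := (x ⊓ z) ⊔ (y ⊓ z) with hm
  have hx : x + z ≤ m + ((x ⊔ y) ⊔ z) := by
    have h1 : x + z = x ⊓ z + (x ⊔ z) := (inf_add_sup x z).symm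
    rw [h1]
    exact add_le_add le_sup_left (sup_le (le_sup_left.trans le_sup_left) le_sup_right)
  have hy : y + z ≤ m + ((x ⊔ y) ⊔ z) := by
    have h1 : y + z = y ⊓ z + (y ⊔ z) := (inf_add_sup y z).symm
    rw [h1]
    exact add_le_add le_sup_right (sup_le (le_sup_right.trans le_sup_left) le_sup_right)
  have key : (x ⊔ y) ⊓ z = ((x + z) ⊔ (y + z)) - ((x ⊔ y) ⊔ z) := by
    rw [← sup_add x y z]
    have := inf_add_sup (x ⊔ y) z
    rw [← this]; abel
  rw [key, sub_le_iff_le_add]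
  rw [add_comm m ((x ⊔ y) ⊔ z)] at hx hy ⊢
  exact sup_le hx hy

lemma two_smul_sup_le (a b : α) : 2 • (a ⊔ b) ≤ (2 • a) ⊔ (2 • b) := by
  rw [two_smul, two_smul, two_smul]
  calc (a ⊔ b) + (a ⊔ b) = ((a ⊔ b) + a) ⊔ ((a ⊔ b) + b) := add_sup a b _
    _ = ((a + a) ⊔ (b + a)) ⊔ ((a + b) ⊔ (b + b)) := by rw [sup_add a b a, sup_add a b b]
    _ ≤ ((a + a) ⊔ (b + b)) ⊔ ((a + a) ⊔ (b + b)) := by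
        refine sup_le_sup ?_ ?_
        · exact sup_le le_sup_left ((add_comm b a ▸ add_le_two_sup a b))
        · exact sup_le (add_le_two_sup a b) le_sup_right
    _ = (a + a) ⊔ (b + b) := sup_idem _

lemma pow2_smul_sup (r : ℕ) (a b : α) : 2 ^ r • (a ⊔ b) ≤ (2 ^ r • a) ⊔ (2 ^ r • b) := by
  induction r with
  | zero => simp
  | succ r ih =>
    have e : ∀ y : α, 2 ^ (r + 1) • y = 2 • (2 ^ r • y) := by
      intro y; rw [smul_smul]; ring_nf
    rw [e, e, e]
    calc 2 • (2 ^ r • (a ⊔ b)) ≤ 2 • ((2 ^ r • a) ⊔ (2 ^ r • b)) := by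
          rw [two_smul, two_smul]; exact add_le_add ih ih
      _ ≤ 2 • (2 ^ r • a) ⊔ 2 • (2 ^ r • b) := two_smul_sup_le _ _

lemma pow2_smul_sup' (r : ℕ) (t : Finset ι) (ht : t.Nonempty) (g : ι → α) :
    2 ^ r • t.sup' ht g ≤ t.sup' ht fun j => 2 ^ r • g j := by
  induction ht using Finset.Nonempty.cons_induction with
  | singleton a => simp
  | cons a t hat ht ih =>
    rw [Finset.sup'_cons ht, Finset.sup'_cons ht]
    exact (pow2_smul_sup r _ _).trans (sup_le_sup le_rfl ih)

lemma sup'_inf_le (t : Finset ι) (ht : t.Nonempty) (g : ι → α) (d : α) :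
    (t.sup' ht g) ⊓ d ≤ t.sup' ht fun j => g j ⊓ d := by
  induction ht using Finset.Nonempty.cons_induction with
  | singleton a => simp
  | cons a t hat ht ih =>
    rw [Finset.sup'_cons ht, Finset.sup'_cons ht]
    exact (inf_sup_le_aux _ _ _).trans (sup_le_sup le_rfl ih)

lemma sum_inf_zero (s : Finset ι) (f : ι → α) (w : α) (hf : ∀ i ∈ s, 0 ≤ f i) (hw : 0 ≤ w)
    (h : ∀ i ∈ s, f i ⊓ w = 0) : (∑ i ∈ s, f i) ⊓ w = 0 := by
  induction s using Finset.cons_induction with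
  | empty => simpa using inf_eq_left.mpr hw
  | cons a t hat ih =>
    have hf' : ∀ i ∈ t, 0 ≤ f i := fun i hi => hf i (Finset.mem_cons_of_mem hi)
    have h' : ∀ i ∈ t, f i ⊓ w = 0 := fun i hi => h i (Finset.mem_cons_of_mem hi)
    apply le_antisymm
    · rw [Finset.sum_cons]
      calc (f a + ∑ i ∈ t, f i) ⊓ w ≤ f a ⊓ w + (∑ i ∈ t, f i) ⊓ w :=
            inf_add_inf_ge _ _ _ (hf a (Finset.mem_cons_self a t)) (Finset.sum_nonneg hf') hw
        _ = 0 := by rw [h a (Finset.mem_cons_self a t), ih hf' h', add_zero]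
    · exact le_inf (Finset.sum_nonneg (fun i hi => hf i hi)) hw

lemma abs_le_abs_add_of_disjoint (a b : α) (h : |a| ⊓ |b| = 0) : |a| ≤ |a + b| := by
  have h3 : |a| - |b| ≤ |a + b| := by
    rw [sub_le_iff_le_add]
    have e : |a| = |a + b + -b| := by congr 1; abel
    rw [e]
    exact (abs_add_le (a + b) (-b)).trans (by rw [abs_neg])
  have e2 : |a| ⊔ |b| = |a| + |b| := by rw [sup_eq_add_sub_inf, h, sub_zero]
  have e1 : (|a| - |b|) ⊔ 0 = |a| := by
    have := sup_add |a| |b| (-|b|)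
    rw [e2] at this
    calc (|a| - |b|) ⊔ 0 = (|a| + -|b|) ⊔ (|b| + -|b|) := by
          congr 1
          · abel
          · abel
      _ = |a| ⊔ |b| + -|b| := (sup_add |a| |b| (-|b|)).symm
      _ = |a| := by rw [e2]; abel
  calc |a| = (|a| - |b|) ⊔ 0 := e1.symm
    _ ≤ |a + b| ⊔ 0 := sup_le_sup_right h3 0
    _ = |a + b| := sup_eq_left.2 (abs_nonneg _)

lemma abs_add_of_disjoint (a b : α) (h : |a| ⊓ |b| = 0) : |a + b| = |a| + |b| := by
  apply le_antisymm (abs_add_le a b)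
  have h1 : |a| ≤ |a + b| := abs_le_abs_add_of_disjoint a b h
  have h2 : |b| ≤ |a + b| := by
    rw [add_comm]
    exact abs_le_abs_add_of_disjoint b a (by rw [inf_comm]; exact h)
  have e2 : |a| + |b| = |a| ⊔ |b| := by rw [sup_eq_add_sub_inf, h, sub_zero]
  rw [e2]
  exact sup_le h1 h2

lemma abs_sum_of_pairwise_disjoint (s : Finset ι) (x : ι → α)
    (h : ∀ i ∈ s, ∀ j ∈ s, i ≠ j → |x i| ⊓ |x j| = 0) :
    |∑ i ∈ s, x i| = ∑ i ∈ s, |x i| := by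
  induction s using Finset.cons_induction with
  | empty => simp
  | cons a t hat ih =>
    have hIH : |∑ i ∈ t, x i| = ∑ i ∈ t, |x i| :=
      ih (fun i hi j hj hij => h i (mem_cons_of_mem hi) j (mem_cons_of_mem hj) hij)
    have hd : |x a| ⊓ |∑ i ∈ t, x i| = 0 := by
      rw [hIH, inf_comm]
      refine sum_inf_zero t (fun i => |x i|) (|x a|) (fun i _ => abs_nonneg _) (abs_nonneg _)
        (fun i hi => ?_)
      exact h i (mem_cons_of_mem hi) a (mem_cons_self a t) (fun hia => hat (hia ▸ hi))
    rw [Finset.sum_cons, Finset.sum_cons, abs_add_of_disjoint _ _ hd, hIH]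

section WithDecEq
variable [DecidableEq ι]

lemma sum_powerset_pair_bound (t : Finset ι) (j : ι) (hj : j ∈ t) (f : Finset ι → α) (v : α)
    (hpair : ∀ G ∈ (t.erase j).powerset, v ≤ f G + f (insert j G)) :
    2 ^ (t.card - 1) • v ≤ ∑ G ∈ t.powerset, f G := by
  have hjE : j ∉ t.erase j := notMem_erase j t
  have hins : insert j (t.erase j) = t := insert_erase hj
  calc 2 ^ (t.card - 1) • v = ∑ _G ∈ (t.erase j).powerset, v := by
        rw [Finset.sum_const, Finset.card_powerset, Finset.card_erase_of_mem hj]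
    _ ≤ ∑ G ∈ (t.erase j).powerset, (f G + f (insert j G)) := Finset.sum_le_sum hpair
    _ = ∑ G ∈ (t.erase j).powerset, f G + ∑ G ∈ (t.erase j).powerset, f (insert j G) :=
        Finset.sum_add_distrib
    _ = ∑ G ∈ (insert j (t.erase j)).powerset, f G := (Finset.sum_powerset_insert hjE f).symm
    _ = ∑ G ∈ t.powerset, f G := by rw [hins]

lemma key_lemma (c : ι → α) (s : Finset ι) (hs : s.Nonempty) :
    (∀ i ∈ s, 0 ≤ c i) →
    4 • ∑ G ∈ s.powerset, |∑ i ∈ G, c i - ∑ i ∈ s \ G, c i|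
      ≤ 2 ^ s.card • (3 • ∑ i ∈ s, c i + s.sup' hs c) := by
  induction hs using Finset.Nonempty.cons_induction with
  | singleton a =>
    intro hc
    have ha : 0 ≤ c a := hc a (mem_singleton_self a)
    have hps : ({a} : Finset ι).powerset = {∅, {a}} := rfl
    rw [hps, Finset.sum_insert
      (by simp only [Finset.mem_singleton]; exact fun h => (Finset.singleton_ne_empty a) h.symm :
        (∅:Finset ι) ∉ ({ {a} } : Finset (Finset ι))), Finset.sum_singleton]
    simp [abs_of_nonneg ha]
    exact le_of_eq (by abel)
  | cons a t hat ht ih =>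
    intro hc
    have hd : 0 ≤ c a := hc a (mem_cons_self a t)
    have hct : ∀ i ∈ t, 0 ≤ c i := fun i hi => hc i (mem_cons_of_mem hi)
    have ⟨j₀, hj₀⟩ := ht
    have hM0 : 0 ≤ t.sup' ht c := le_trans (hct j₀ hj₀) (Finset.le_sup' c hj₀)
    -- step 1 : total rewrite
    have hTot : ∑ G ∈ (Finset.cons a t hat).powerset, |∑ i ∈ G, c i - ∑ i ∈ (Finset.cons a t hat) \ G, c i|
        = 2 • (∑ G ∈ t.powerset, |∑ i ∈ G, c i - ∑ i ∈ t \ G, c i|)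
          + (2 ^ t.card) • (2 • c a)
          - ∑ G ∈ t.powerset, ((2 • |∑ i ∈ G, c i - ∑ i ∈ t \ G, c i|) ⊓ (2 • c a)) := by
      rw [Finset.cons_eq_insert, Finset.sum_powerset_insert hat]
      calc (∑ G ∈ t.powerset, |∑ i ∈ G, c i - ∑ i ∈ insert a t \ G, c i|)
            + ∑ G ∈ t.powerset, |∑ i ∈ insert a G, c i - ∑ i ∈ insert a t \ insert a G, c i|
          = ∑ G ∈ t.powerset,
              (|(∑ i ∈ G, c i - ∑ i ∈ t \ G, c i) - c a| + |(∑ i ∈ G, c i - ∑ i ∈ t \ G, c i) + c a|) := by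
            rw [← Finset.sum_add_distrib]
            refine Finset.sum_congr rfl (fun G hG => ?_)
            have hGt : G ⊆ t := Finset.mem_powerset.1 hG
            have haG : a ∉ G := fun h => hat (hGt h)
            have hat' : a ∉ t \ G := fun h => hat (Finset.mem_sdiff.1 h).1
            have h1 : insert a t \ G = insert a (t \ G) := Finset.insert_sdiff_of_notMem t haG
            have h2 : insert a t \ insert a G = t \ G := by
              ext x
              simp only [Finset.mem_sdiff, Finset.mem_insert, not_or]
              constructor
              · rintro ⟨hx1 | hx2, hxa, hxG⟩
                · exact absurd hx1 hxa
                · exact ⟨hx2, hxG⟩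
              · rintro ⟨hx, hxG⟩
                exact ⟨Or.inr hx, fun h => hat (h ▸ hx), hxG⟩
            rw [h1, Finset.sum_insert hat', Finset.sum_insert haG, h2]
            congr 1
            · congr 1; abel
            · congr 1; abel
        _ = ∑ G ∈ t.powerset, ((2 • |∑ i ∈ G, c i - ∑ i ∈ t \ G, c i|) ⊔ (2 • c a)) :=
            Finset.sum_congr rfl (fun G _ => pair_abs _ _ hd)
        _ = ∑ G ∈ t.powerset,
              ((2 • |∑ i ∈ G, c i - ∑ i ∈ t \ G, c i|) + (2 • c a)
                - ((2 • |∑ i ∈ G, c i - ∑ i ∈ t \ G, c i|) ⊓ (2 • c a))) :=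
            Finset.sum_congr rfl (fun G _ => by rw [sup_eq_add_sub_inf])
        _ = _ := by
            rw [Finset.sum_sub_distrib, Finset.sum_add_distrib, ← Finset.smul_sum,
              Finset.sum_const, Finset.card_powerset]
    -- step 2 : pairing bound
    have hpairj : ∀ j ∈ t, (2 ^ (t.card - 1)) • ((2 • c j) ⊓ (2 • c a))
        ≤ ∑ G ∈ t.powerset, ((2 • |∑ i ∈ G, c i - ∑ i ∈ t \ G, c i|) ⊓ (2 • c a)) := by
      intro j hj
      refine sum_powerset_pair_bound t j hj _ _ (fun G hG => ?_)
      have hGe : G ⊆ t.erase j := Finset.mem_powerset.1 hG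
      have hGt : G ⊆ t := hGe.trans (Finset.erase_subset j t)
      have hjG : j ∉ G := fun h => (Finset.notMem_erase j t) (hGe h)
      have hjt : insert j G ⊆ t := Finset.insert_subset hj hGt
      set Y1 : α := ∑ i ∈ G, c i - ∑ i ∈ t \ G, c i with hY1
      set Y2 : α := ∑ i ∈ insert j G, c i - ∑ i ∈ t \ insert j G, c i with hY2
      have hsd1 : ∑ i ∈ t \ G, c i = ∑ i ∈ t, c i - ∑ i ∈ G, c i :=
        eq_sub_of_add_eq (Finset.sum_sdiff hGt)
      have hsd2 : ∑ i ∈ t \ insert j G, c i = ∑ i ∈ t, c i - ∑ i ∈ insert j G, c i :=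
        eq_sub_of_add_eq (Finset.sum_sdiff hjt)
      have hdiff : Y2 - Y1 = c j + c j := by
        rw [hY1, hY2, hsd1, hsd2, Finset.sum_insert hjG]; abel
      have hcj : c j + c j ≤ |Y1| + |Y2| := by
        rw [← hdiff]
        calc Y2 - Y1 ≤ |Y2| - Y1 := sub_le_sub_right (le_abs_self Y2) Y1
          _ ≤ |Y2| + |Y1| := by
              rw [sub_eq_add_neg]
              exact add_le_add_right (neg_le_abs Y1) _
          _ = |Y1| + |Y2| := add_comm _ _
      have h2cj : 2 • c j ≤ 2 • |Y1| + 2 • |Y2| := by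
        rw [two_smul]
        calc c j + c j ≤ |Y1| + |Y2| := hcj
          _ ≤ (2 • |Y1|) + (2 • |Y2|) := by
              rw [two_smul, two_smul]
              exact add_le_add (le_add_of_nonneg_right (abs_nonneg _))
                (le_add_of_nonneg_right (abs_nonneg _))
      calc (2 • c j) ⊓ (2 • c a) ≤ (2 • |Y1| + 2 • |Y2|) ⊓ (2 • c a) :=
            inf_le_inf_right _ h2cj
        _ ≤ (2 • |Y1|) ⊓ (2 • c a) + (2 • |Y2|) ⊓ (2 • c a) :=
            inf_add_inf_ge _ _ _ (nsmul_nonneg (abs_nonneg _) 2) (nsmul_nonneg (abs_nonneg _) 2) (nsmul_nonneg hd 2)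
    -- step 3 : sup over j
    have hm1 : 1 ≤ t.card := Finset.Nonempty.card_pos ht
    have hsupW : (2 ^ (t.card - 1)) • ((2 • t.sup' ht c) ⊓ (2 • c a))
        ≤ ∑ G ∈ t.powerset, ((2 • |∑ i ∈ G, c i - ∑ i ∈ t \ G, c i|) ⊓ (2 • c a)) := by
      have h2M : (2:ℕ) • t.sup' ht c ≤ t.sup' ht (fun j => (2:ℕ) • c j) := by
        have h := pow2_smul_sup' 1 t ht c
        simp only [pow_one] at h
        exact h
      have h1 : ((2:ℕ) • t.sup' ht c) ⊓ (2 • c a) ≤ t.sup' ht (fun j => ((2:ℕ) • c j) ⊓ (2 • c a)) :=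
        (inf_le_inf_right _ h2M).trans (sup'_inf_le t ht _ _)
      calc (2 ^ (t.card - 1)) • ((2 • t.sup' ht c) ⊓ (2 • c a))
          ≤ (2 ^ (t.card - 1)) • t.sup' ht (fun j => ((2:ℕ) • c j) ⊓ (2 • c a)) :=
            nsmul_le_nsmul_right h1 _
        _ ≤ t.sup' ht (fun j => (2 ^ (t.card - 1)) • (((2:ℕ) • c j) ⊓ (2 • c a))) :=
            pow2_smul_sup' _ t ht _
        _ ≤ _ := Finset.sup'_le ht _ hpairj
    -- step 4 : assembly
    have ih' := ih hct
    rw [hTot, Finset.card_cons, Finset.sum_cons, Finset.sup'_cons ht]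
    set L := ∑ G ∈ t.powerset, |∑ i ∈ G, c i - ∑ i ∈ t \ G, c i| with hL
    set Wsum := ∑ G ∈ t.powerset, ((2 • |∑ i ∈ G, c i - ∑ i ∈ t \ G, c i|) ⊓ (2 • c a)) with hWsum
    set S := ∑ i ∈ t, c i with hS
    set M := t.sup' ht c with hM
    set d := c a with hdd
    set VM := ((2:ℕ) • M) ⊓ (2 • d) with hVM
    have hPK : (2:ℕ) ^ t.card = 2 ^ (t.card - 1) + 2 ^ (t.card - 1) := by
      calc (2:ℕ) ^ t.card = 2 ^ (t.card - 1 + 1) := by rw [Nat.sub_add_cancel hm1]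
        _ = 2 ^ (t.card - 1) + 2 ^ (t.card - 1) := by rw [pow_succ]; ring
    have core : 3•S + M + 4•d - VM ≤ 3•(d+S) + (d ⊔ M) := by
      have hinf : d ⊓ M ≤ VM := by
        refine le_inf (inf_le_right.trans ?_) (inf_le_left.trans ?_)
        · rw [two_smul]; exact le_add_of_nonneg_left hM0
        · rw [two_smul]; exact le_add_of_nonneg_left hd
      have hsupeq : d ⊔ M = d + M - d ⊓ M := sup_eq_add_sub_inf _ _
      rw [hsupeq]
      have e : (3:ℕ)•(d + S) + (d + M - d ⊓ M) = 3•S + M + 4•d - d ⊓ M := by abel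
      rw [e]
      exact sub_le_sub_left hinf _
    -- combine everything
    have hA : (8:ℕ)•L ≤ (2 * 2^t.card) • (3•S + M) := by
      have h := nsmul_le_nsmul_right ih' 2
      rw [smul_smul, smul_smul] at h
      convert h using 2
      norm_num
    have hB : (2 * 2^t.card) • VM ≤ (4:ℕ) • Wsum := by
      have := nsmul_le_nsmul_right hsupW 4
      rw [smul_smul] at this
      calc (2 * 2^t.card) • VM = (4 * 2 ^ (t.card - 1)) • VM := by
            rw [hPK]; congr 1; ring
        _ ≤ 4 • Wsum := this
    have e4 : (4:ℕ) • ((2:ℕ)•L + (2^t.card)•((2:ℕ)•d) - Wsum)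
        = (8:ℕ)•L + (2 * 2^t.card)•((4:ℕ)•d) - (4:ℕ)•Wsum := by
      module
    rw [e4]
    have hRHS : (2:ℕ) ^ (t.card + 1) • (3 • (d + S) + d ⊔ M)
        = (2 * 2^t.card) • (3 • (d + S) + d ⊔ M) := by
      congr 1
      rw [pow_succ]; ring
    rw [hRHS]
    calc (8:ℕ)•L + (2 * 2^t.card)•((4:ℕ)•d) - (4:ℕ)•Wsum
        ≤ (2 * 2^t.card) • (3•S + M) + (2 * 2^t.card)•((4:ℕ)•d) - (2 * 2^t.card) • VM := by
          refine sub_le_sub (add_le_add_left hA _) hB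
      _ = (2 * 2^t.card) • (3•S + M + 4•d - VM) := by
          module
      _ ≤ (2 * 2^t.card) • (3•(d+S) + (d ⊔ M)) := nsmul_le_nsmul_right core _

end WithDecEq
end DPHelpers

/-- If `T` is a positive `ε`-disjointness preserving operator, then for any
pairwise disjoint `x₁, …, x_n`, `‖Σ_i |Tx_i| - ⋁_i |Tx_i|‖ ≤ 256 ε ‖Σ_i x_i‖`. -/
theorem stmt4 (E F : Type*)
    [NormedAddCommGroup E] [Lattice E] [IsOrderedAddMonoid E] [HasSolidNorm E] [NormedSpace ℝ E] [CompleteSpace E]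
    [NormedAddCommGroup F] [Lattice F] [IsOrderedAddMonoid F] [HasSolidNorm F] [NormedSpace ℝ F] [CompleteSpace F]
    (ε : ℝ) (hε : 0 ≤ ε) (T : E →L[ℝ] F)
    (hpos : ∀ x : E, 0 ≤ x → 0 ≤ T x)
    (hDP : ∀ x y : E, |x| ⊓ |y| = 0 → ‖|T x| ⊓ |T y|‖ ≤ ε * max ‖x‖ ‖y‖)
    (n : ℕ) (hn : 0 < n) (x : Fin n → E)
    (hdisj : ∀ i j, i ≠ j → |x i| ⊓ |x j| = 0) :
    ‖(∑ i, |T (x i)|) -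
        (univ : Finset (Fin n)).sup' (univ_nonempty_iff.2 (Fin.pos_iff_nonempty.1 hn))
          (fun i => |T (x i)|)‖ ≤
      256 * ε * ‖∑ i, x i‖ := by
  classical
  set hne : (univ : Finset (Fin n)).Nonempty := univ_nonempty_iff.2 (Fin.pos_iff_nonempty.1 hn)
    with hne_def
  set u : Fin n → E := fun i => |x i| with hu
  set c : Fin n → F := fun i => T (u i) with hc
  have hu0 : ∀ i, 0 ≤ u i := fun i => abs_nonneg _
  have hc0 : ∀ i ∈ (univ : Finset (Fin n)), 0 ≤ c i := fun i _ => hpos _ (hu0 i)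
  have habs_sum : |∑ i, x i| = ∑ i, u i :=
    abs_sum_of_pairwise_disjoint univ x (fun i _ j _ hij => hdisj i j hij)
  have hnormU : ‖∑ i, u i‖ = ‖∑ i, x i‖ := by rw [← habs_sum, norm_abs_eq_norm]
  -- reduction to positive images
  have h_each : ∀ i, |T (x i)| + 2 • (T ((x i)⁺) ⊓ T ((x i)⁻)) = c i := by
    intro i
    have hTx : T (x i) = T ((x i)⁺) - T ((x i)⁻) := by
      rw [← map_sub, posPart_sub_negPart]
    have hti : c i = T ((x i)⁺) + T ((x i)⁻) := by
      rw [hc]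
      show T (u i) = _
      rw [hu]
      show T (|x i|) = _
      rw [← posPart_add_negPart (x i), map_add]
    rw [hTx, hti, two_nsmul_inf_eq_add_sub_abs_sub, abs_sub_comm]
    abel
  have hr0 : ∀ i, 0 ≤ T ((x i)⁺) ⊓ T ((x i)⁻) :=
    fun i => le_inf (hpos _ (posPart_nonneg _)) (hpos _ (negPart_nonneg _))
  have hA : (∑ i, |T (x i)|) + 2 • (∑ i, (T ((x i)⁺) ⊓ T ((x i)⁻))) = ∑ i, c i := by
    rw [Finset.smul_sum, ← Finset.sum_add_distrib]
    exact Finset.sum_congr rfl fun i _ => h_each i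
  have hsupc : univ.sup' hne c
      ≤ univ.sup' hne (fun i => |T (x i)|) + 2 • (∑ i, (T ((x i)⁺) ⊓ T ((x i)⁻))) := by
    refine Finset.sup'_le _ _ (fun i _ => ?_)
    rw [← h_each i]
    refine add_le_add (Finset.le_sup' (fun i => |T (x i)|) (mem_univ i)) ?_
    exact nsmul_le_nsmul_right (Finset.single_le_sum (fun j _ => hr0 j) (mem_univ i)) 2
  have hDD' : (∑ i, |T (x i)|) - univ.sup' hne (fun i => |T (x i)|)
      ≤ (∑ i, c i) - univ.sup' hne c := by
    have h1 : (∑ i, |T (x i)|)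
        = (∑ i, c i) - 2 • (∑ i, (T ((x i)⁺) ⊓ T ((x i)⁻))) := by rw [← hA]; abel
    rw [h1]
    calc (∑ i, c i) - 2 • (∑ i, (T ((x i)⁺) ⊓ T ((x i)⁻)))
          - univ.sup' hne (fun i => |T (x i)|)
        = (∑ i, c i) - (univ.sup' hne (fun i => |T (x i)|)
            + 2 • (∑ i, (T ((x i)⁺) ⊓ T ((x i)⁻)))) := by abel
      _ ≤ (∑ i, c i) - univ.sup' hne c := sub_le_sub_left hsupc _
  -- key combinatorial lemma
  have hcard : (univ : Finset (Fin n)).card = n := by simp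
  have hkey := key_lemma c univ hne hc0
  rw [hcard] at hkey
  set Z := ∑ G ∈ (univ : Finset (Fin n)).powerset,
      ((∑ i ∈ G, c i) ⊓ (∑ i ∈ univ \ G, c i)) with hZ
  have hz2 : ∀ G ∈ (univ : Finset (Fin n)).powerset,
      2 • ((∑ i ∈ G, c i) ⊓ (∑ i ∈ univ \ G, c i))
        = (∑ i, c i) - |∑ i ∈ G, c i - ∑ i ∈ univ \ G, c i| := by
    intro G hG
    have hsd : ∑ i ∈ univ \ G, c i + ∑ i ∈ G, c i = ∑ i, c i :=
      Finset.sum_sdiff (Finset.mem_powerset.1 hG)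
    rw [two_nsmul_inf_eq_add_sub_abs_sub, abs_sub_comm, ← hsd]
    abel
  have hZsum : 2 • Z = (2 ^ n) • (∑ i, c i)
      - ∑ G ∈ (univ : Finset (Fin n)).powerset, |∑ i ∈ G, c i - ∑ i ∈ univ \ G, c i| := by
    rw [hZ, Finset.smul_sum, Finset.sum_congr rfl hz2, Finset.sum_sub_distrib,
      Finset.sum_const, Finset.card_powerset, hcard]
  have h2nD : (2 ^ n : ℕ) • ((∑ i, |T (x i)|) - univ.sup' hne (fun i => |T (x i)|)) ≤ 8 • Z := by
    refine (nsmul_le_nsmul_right hDD' _).trans ?_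
    have h4 : (4:ℕ) • ((2:ℕ) • Z) = (4 * 2 ^ n) • (∑ i, c i)
        - 4 • (∑ G ∈ (univ : Finset (Fin n)).powerset,
            |∑ i ∈ G, c i - ∑ i ∈ univ \ G, c i|) := by
      rw [hZsum]; module
    calc (2 ^ n : ℕ) • ((∑ i, c i) - univ.sup' hne c)
        = (4 * 2 ^ n) • (∑ i, c i)
          - (2 ^ n : ℕ) • (3 • (∑ i, c i) + univ.sup' hne c) := by module
      _ ≤ (4 * 2 ^ n) • (∑ i, c i)
          - 4 • (∑ G ∈ (univ : Finset (Fin n)).powerset,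
              |∑ i ∈ G, c i - ∑ i ∈ univ \ G, c i|) := sub_le_sub_left hkey _
      _ = (4:ℕ) • ((2:ℕ) • Z) := h4.symm
      _ = 8 • Z := by module
  have hD0 : 0 ≤ (∑ i, |T (x i)|) - univ.sup' hne (fun i => |T (x i)|) := by
    rw [sub_nonneg]
    exact Finset.sup'_le _ _
      (fun i _ => Finset.single_le_sum (f := fun i => |T (x i)|) (fun j _ => abs_nonneg _)
        (mem_univ i))
  have hZ0 : (0:F) ≤ Z :=
    Finset.sum_nonneg fun G _ =>
      le_inf (Finset.sum_nonneg fun i _ => hc0 i (mem_univ i))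
        (Finset.sum_nonneg fun i _ => hc0 i (mem_univ i))
  have hnorm1 : ‖(2 ^ n : ℕ) • ((∑ i, |T (x i)|) - univ.sup' hne (fun i => |T (x i)|))‖
      ≤ ‖(8:ℕ) • Z‖ := by
    apply HasSolidNorm.solid
    rw [abs_of_nonneg (nsmul_nonneg hD0 _), abs_of_nonneg (nsmul_nonneg hZ0 8)]
    exact h2nD
  -- bound for each term of Z
  have hG_bound : ∀ G ∈ (univ : Finset (Fin n)).powerset,
      ‖(∑ i ∈ G, c i) ⊓ (∑ i ∈ univ \ G, c i)‖ ≤ ε * ‖∑ i, x i‖ := by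
    intro G _
    have huG0 : 0 ≤ ∑ i ∈ G, u i := Finset.sum_nonneg fun i _ => hu0 i
    have huGc0 : 0 ≤ ∑ i ∈ univ \ G, u i := Finset.sum_nonneg fun i _ => hu0 i
    have hcG : ∑ i ∈ G, c i = T (∑ i ∈ G, u i) := (map_sum T u G).symm
    have hcGc : ∑ i ∈ univ \ G, c i = T (∑ i ∈ univ \ G, u i) := (map_sum T u _).symm
    have hdisjG : |∑ i ∈ G, u i| ⊓ |∑ i ∈ univ \ G, u i| = 0 := by
      rw [abs_of_nonneg huG0, abs_of_nonneg huGc0]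
      refine sum_inf_zero G u _ (fun i _ => hu0 i) huGc0 (fun i hi => ?_)
      rw [inf_comm]
      refine sum_inf_zero (univ \ G) u (u i) (fun j _ => hu0 j) (hu0 i) (fun j hj => ?_)
      have hij : j ≠ i := fun h => (Finset.mem_sdiff.1 hj).2 (h ▸ hi)
      exact hdisj j i hij
    have hTG := hDP _ _ hdisjG
    have habs1 : |T (∑ i ∈ G, u i)| = T (∑ i ∈ G, u i) := abs_of_nonneg (hpos _ huG0)
    have habs2 : |T (∑ i ∈ univ \ G, u i)| = T (∑ i ∈ univ \ G, u i) :=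
      abs_of_nonneg (hpos _ huGc0)
    rw [habs1, habs2] at hTG
    rw [hcG, hcGc]
    refine hTG.trans ?_
    have hle1 : ‖∑ i ∈ G, u i‖ ≤ ‖∑ i, x i‖ := by
      rw [← hnormU]
      apply HasSolidNorm.solid
      rw [abs_of_nonneg huG0, abs_of_nonneg (Finset.sum_nonneg fun i _ => hu0 i)]
      exact Finset.sum_le_sum_of_subset_of_nonneg (Finset.subset_univ G)
        (fun i _ _ => hu0 i)
    have hle2 : ‖∑ i ∈ univ \ G, u i‖ ≤ ‖∑ i, x i‖ := by
      rw [← hnormU]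
      apply HasSolidNorm.solid
      rw [abs_of_nonneg huGc0, abs_of_nonneg (Finset.sum_nonneg fun i _ => hu0 i)]
      exact Finset.sum_le_sum_of_subset_of_nonneg (Finset.sdiff_subset)
        (fun i _ _ => hu0 i)
    exact mul_le_mul_of_nonneg_left (max_le hle1 hle2) hε
  have hnormZ : ‖Z‖ ≤ (2 ^ n : ℝ) * (ε * ‖∑ i, x i‖) := by
    calc ‖Z‖ ≤ ∑ G ∈ (univ : Finset (Fin n)).powerset,
          ‖(∑ i ∈ G, c i) ⊓ (∑ i ∈ univ \ G, c i)‖ := norm_sum_le _ _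
      _ ≤ ∑ _G ∈ (univ : Finset (Fin n)).powerset, ε * ‖∑ i, x i‖ :=
          Finset.sum_le_sum hG_bound
      _ = (2 ^ n : ℝ) * (ε * ‖∑ i, x i‖) := by
          rw [Finset.sum_const, Finset.card_powerset, hcard, nsmul_eq_mul]
          push_cast
          ring
  have e1 : ‖(2 ^ n : ℕ) • ((∑ i, |T (x i)|) - univ.sup' hne (fun i => |T (x i)|))‖
      = (2 ^ n : ℝ) * ‖(∑ i, |T (x i)|) - univ.sup' hne (fun i => |T (x i)|)‖ := by
    rw [← Nat.cast_smul_eq_nsmul ℝ, norm_smul]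
    simp
  have e2 : ‖(8:ℕ) • Z‖ = 8 * ‖Z‖ := by
    rw [← Nat.cast_smul_eq_nsmul ℝ, norm_smul]
    simp
  have hfin : (2 ^ n : ℝ) * ‖(∑ i, |T (x i)|) - univ.sup' hne (fun i => |T (x i)|)‖
      ≤ (2 ^ n : ℝ) * (8 * (ε * ‖∑ i, x i‖)) := by
    rw [← e1]
    refine hnorm1.trans ?_
    rw [e2]
    calc 8 * ‖Z‖ ≤ 8 * ((2 ^ n : ℝ) * (ε * ‖∑ i, x i‖)) := by linarith [hnormZ]
      _ = (2 ^ n : ℝ) * (8 * (ε * ‖∑ i, x i‖)) := by ring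
  have hpow : (0:ℝ) < (2 ^ n : ℝ) := by positivity
  have hmain : ‖(∑ i, |T (x i)|) - univ.sup' hne (fun i => |T (x i)|)‖
      ≤ 8 * (ε * ‖∑ i, x i‖) := le_of_mul_le_mul_left hfin hpow
  have hnn : 0 ≤ ε * ‖∑ i, x i‖ := mul_nonneg hε (norm_nonneg _)
  calc ‖(∑ i, |T (x i)|) - univ.sup' hne (fun i => |T (x i)|)‖
      ≤ 8 * (ε * ‖∑ i, x i‖) := hmain
    _ ≤ 256 * ε * ‖∑ i, x i‖ := by nlinarith
end

section
/- Let E and F be real Banach lattices with E σ-Dedekind complete, ε ≥ 0, and T : E → F a positive bounded linear operator which is ε-disjointness preserving. Then for any x₁, …, x_n ∈ E with x_i ≥ 0, max{ ‖T(⋁_{i=1}^n x_i) − ⋁_{i=1}^n (Tx_i)‖ , ‖⋀_{i=1}^n (Tx_i) − T(⋀_{i=1}^n x_i)‖ } ≤ 256·ε·‖⋁_{i=1}^n x_i‖. -/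
open Finset

set_option linter.unusedSectionVars false
set_option maxHeartbeats 1000000

section Toolbox
variable {α : Type*} [NormedAddCommGroup α] [Lattice α] [IsOrderedAddMonoid α] [HasSolidNorm α]

lemma add_inf_le_inf_add_inf {p q c : α} (hp : 0 ≤ p) (hq : 0 ≤ q) (hc : 0 ≤ c) :
    (p + q) ⊓ c ≤ p ⊓ c + q ⊓ c := by
  have h1 : p ⊓ c + q ⊓ c = ((p + q) ⊓ (c + q)) ⊓ ((p + c) ⊓ (c + c)) := by
    rw [add_inf q c (p ⊓ c), inf_add p c q, inf_add p c c]
  rw [h1]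
  refine le_inf (le_inf inf_le_left ?_) (le_inf ?_ ?_)
  · exact le_trans inf_le_right (le_add_of_nonneg_right hq)
  · exact le_trans inf_le_right (le_add_of_nonneg_left hp)
  · exact le_trans inf_le_right (le_add_of_nonneg_left hc)

lemma sup_inf_le_inf_add_inf {p q c : α} (hp : 0 ≤ p) (hq : 0 ≤ q) (hc : 0 ≤ c) :
    (p ⊔ q) ⊓ c ≤ p ⊓ c + q ⊓ c :=
  le_trans (inf_le_inf_right c (sup_le (le_add_of_nonneg_right hq)
    (le_add_of_nonneg_left hp))) (add_inf_le_inf_add_inf hp hq hc)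

lemma sup_eq_add_posPart' (x y : α) : x ⊔ y = x + ((y - x) ⊔ 0) := by
  rw [add_sup (y - x) 0 x, add_zero, add_sub_cancel, sup_comm]

lemma two_nsmul_sup_eq (x y : α) : (2 : ℕ) • (x ⊔ y) = x + y + |x - y| := by
  have h2 : x ⊔ y = y + ((x - y) ⊔ 0) := by
    rw [sup_comm]; exact sup_eq_add_posPart' y x
  have h3 : ((x - y) ⊔ 0) + ((y - x) ⊔ 0) = |x - y| := by
    rw [← posPart_def, ← neg_sub x y, ← negPart_def, posPart_add_negPart]
  calc (2:ℕ) • (x ⊔ y) = (x ⊔ y) + (x ⊔ y) := two_nsmul _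
    _ = (x + ((y - x) ⊔ 0)) + (y + ((x - y) ⊔ 0)) := by
        nth_rewrite 1 [sup_eq_add_posPart' x y]
        nth_rewrite 1 [h2]
        rfl
    _ = x + y + (((x - y) ⊔ 0) + ((y - x) ⊔ 0)) := by abel
    _ = x + y + |x - y| := by rw [h3]

lemma nsmul_two_sup (x y : α) : ((2 : ℕ) • x) ⊔ ((2 : ℕ) • y) = x + y + |x - y| := by
  have h : ((2:ℕ) • x) ⊔ ((2:ℕ) • y) = ((x - y) + (x + y)) ⊔ ((y - x) + (x + y)) := by
    rw [show (2:ℕ) • x = (x - y) + (x + y) by rw [two_nsmul]; abel,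
        show (2:ℕ) • y = (y - x) + (x + y) by rw [two_nsmul]; abel]
  rw [h, ← sup_add, ← neg_sub x y, ← abs]
  abel

lemma two_nsmul_sup (x y : α) : (2 : ℕ) • (x ⊔ y) = ((2 : ℕ) • x) ⊔ ((2 : ℕ) • y) := by
  rw [two_nsmul_sup_eq, nsmul_two_sup]

lemma two_nsmul_inf_eq (p q : α) : (2 : ℕ) • (p ⊓ q) = p + q - |p - q| := by
  have key : (2:ℕ) • (p ⊓ q) + (p + q + |p - q|) = (p + q) + (p + q) := by
    rw [← two_nsmul_sup_eq, ← smul_add, inf_add_sup, two_nsmul]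
  rw [eq_sub_iff_add_eq]
  calc (2:ℕ) • (p ⊓ q) + |p - q|
      = ((2:ℕ) • (p ⊓ q) + (p + q + |p - q|)) - (p + q) := by abel
    _ = ((p + q) + (p + q)) - (p + q) := by rw [key]
    _ = p + q := by abel

lemma pow_two_nsmul_sup (k : ℕ) (x y : α) :
    (2 ^ k : ℕ) • (x ⊔ y) = ((2 ^ k : ℕ) • x) ⊔ ((2 ^ k : ℕ) • y) := by
  induction k with
  | zero => simp
  | succ k ih =>
      rw [pow_succ, mul_comm, mul_smul, mul_smul, mul_smul, ih, two_nsmul_sup]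

lemma abs_sup_abs_pair {g : α} (d : α) (hg : 0 ≤ g) : |d + g| ⊔ |d - g| = |d| + g := by
  have hsub : d - g ≤ d + g :=
    le_trans (sub_le_self d hg) (le_add_of_nonneg_right hg)
  have e1 : |d + g| = (d + g) ⊔ (-(d + g)) := rfl
  have e2 : |d - g| = (d - g) ⊔ (-(d - g)) := rfl
  rw [e1, e2, sup_sup_sup_comm]
  have c1 : (d + g) ⊔ (d - g) = d + g := sup_eq_left.mpr hsub
  have c2 : (-(d + g)) ⊔ (-(d - g)) = -(d - g) := by
    rw [sup_comm, sup_eq_left.mpr (neg_le_neg hsub)]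
  rw [c1, c2, show -(d - g) = -d + g by abel, ← sup_add, ← abs]

lemma abs_inf_abs_pair {g : α} (d : α) (hg : 0 ≤ g) : |d + g| ⊓ |d - g| ≤ |(|d| - g)| := by
  letI : DistribLattice α := AddCommGroup.toDistribLattice α
  have e1 : |d + g| = (d + g) ⊔ (-(d + g)) := rfl
  have e2 : |d - g| = (d - g) ⊔ (-(d - g)) := rfl
  rw [e1, e2, inf_sup_right, inf_sup_left, inf_sup_left]
  have hd1 : d ≤ |d| := le_abs_self d
  have hd2 : -d ≤ |d| := neg_le_abs d
  have t1 : (d + g) ⊓ (d - g) ≤ |(|d| - g)| :=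
    le_trans inf_le_right (le_trans (sub_le_sub_right hd1 g) (le_abs_self _))
  have hdd : d ⊓ (-d) = -|d| := by
    have h := neg_sup d (-d)
    rw [neg_neg] at h
    rw [show d ⊓ (-d) = (-d) ⊓ d from inf_comm _ _, ← h, abs]
  have t2 : (d + g) ⊓ (-(d - g)) ≤ |(|d| - g)| := by
    have comp : (d + g) ⊓ (-(d - g)) = g + (d ⊓ (-d)) := by
      rw [show d + g = g + d by abel, show -(d - g) = g + (-d) by abel, ← add_inf]
    rw [comp, hdd, show g + -|d| = -(|d| - g) by abel]
    exact neg_le_abs _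
  have t3 : (-(d + g)) ⊓ (d - g) ≤ |(|d| - g)| := by
    have comp : (-(d + g)) ⊓ (d - g) = -g + ((-d) ⊓ d) := by
      rw [show -(d + g) = -g + (-d) by abel, show d - g = -g + d by abel, ← add_inf]
    rw [comp, inf_comm, hdd]
    calc -g + -|d| ≤ g + -|d| := by
          exact add_le_add_left (neg_le_self hg) _
      _ = -(|d| - g) := by abel
      _ ≤ |(|d| - g)| := neg_le_abs _
  have t4 : (-(d + g)) ⊓ (-(d - g)) ≤ |(|d| - g)| := by
    refine le_trans inf_le_left (le_trans ?_ (le_abs_self _))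
    rw [show -(d + g) = -d - g by abel]
    exact sub_le_sub_right hd2 g
  exact sup_le (sup_le t1 t2) (sup_le t3 t4)

lemma abs_add_abs_pair {g : α} (d : α) (hg : 0 ≤ g) :
    |d + g| + |d - g| ≤ (2 : ℕ) • (|d| ⊔ g) := by
  have h1 : |d + g| + |d - g| = (|d + g| ⊔ |d - g|) + (|d + g| ⊓ |d - g|) := by
    rw [add_comm (|d + g| ⊔ |d - g|), inf_add_sup]
  rw [h1, abs_sup_abs_pair d hg, two_nsmul_sup_eq]
  exact add_le_add_right (abs_inf_abs_pair d hg) _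

end Toolbox
section Lub
variable {E : Type*} [NormedAddCommGroup E] [Lattice E] [IsOrderedAddMonoid E] [HasSolidNorm E] [NormedSpace ℝ E]

lemma eq_zero_of_forall_nsmul_le {c s : E} (hc : 0 ≤ c) (h : ∀ k : ℕ, k • c ≤ s) : c = 0 := by
  have hn : ∀ k : ℕ, (k : ℝ) * ‖c‖ ≤ ‖s‖ := by
    intro k
    have h1 : |(k : ℕ) • c| ≤ |s| := by
      rw [abs_of_nonneg (nsmul_nonneg hc k)]
      exact le_trans (h k) (le_abs_self s)
    have h2 : ‖(k : ℕ) • c‖ ≤ ‖s‖ := HasSolidNorm.solid h1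
    rw [← Nat.cast_smul_eq_nsmul ℝ, norm_smul] at h2
    simpa using h2
  by_contra hne
  have hpos : 0 < ‖c‖ := norm_pos_iff.mpr hne
  obtain ⟨k, hk⟩ := exists_nat_gt (‖s‖ / ‖c‖)
  have h3 := hn k
  rw [div_lt_iff₀ hpos] at hk
  linarith

lemma isLUB_inf' {A : Set E} {b : E} (x : E) (hA : IsLUB A b) :
    IsLUB ((fun a => x ⊓ a) '' A) (x ⊓ b) := by
  constructor
  · rintro _ ⟨a, ha, rfl⟩
    exact inf_le_inf_left x (hA.1 ha)
  · intro z hz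
    have hb : b ≤ z + (x ⊔ b) - x := by
      apply hA.2
      intro a ha
      have h1 : x ⊓ a + (x ⊔ a) = x + a := inf_add_sup x a
      have h2 : x ⊓ a ≤ z := hz ⟨a, ha, rfl⟩
      have h3 : x ⊔ a ≤ x ⊔ b := sup_le_sup_left (hA.1 ha) x
      calc a = x ⊓ a + (x ⊔ a) - x := by rw [h1]; abel
        _ ≤ z + (x ⊔ b) - x := sub_le_sub_right (add_le_add h2 h3) x
    have h4 : x ⊓ b + (x ⊔ b) = x + b := inf_add_sup x b
    calc x ⊓ b = x + b - (x ⊔ b) := by rw [← h4]; abel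
      _ ≤ x + (z + (x ⊔ b) - x) - (x ⊔ b) :=
          sub_le_sub_right (add_le_add_right hb x) _
      _ = z := by abel

lemma c_inf_nsmul_le (k : ℕ) {c p : E} (hc : 0 ≤ c) (hp : 0 ≤ p) :
    c ⊓ (k • p) ≤ k • (c ⊓ p) := by
  induction k with
  | zero => simp
  | succ k ih =>
      rw [succ_nsmul, succ_nsmul]
      calc c ⊓ (k • p + p) ≤ c ⊓ (k • p) + c ⊓ p := by
            rw [inf_comm c (k • p + p), inf_comm c (k • p), inf_comm c p]
            exact add_inf_le_inf_add_inf (nsmul_nonneg hp k) hp hc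
        _ ≤ k • (c ⊓ p) + c ⊓ p := add_le_add_left ih _

/-- `c` lies in the band generated by `y`. -/
def InBand (c y : E) : Prop := IsLUB (Set.range fun k : ℕ => c ⊓ (k • y)) c

lemma inBand_of_le {c u s y : E} (hcs : c ≤ s)
    (hu : IsLUB (Set.range fun k : ℕ => s ⊓ (k • y)) u) (hcu : c ≤ u) : InBand c y := by
  have h := isLUB_inf' c hu
  rw [inf_eq_left.mpr hcu] at h
  have himg : ((fun a => c ⊓ a) '' (Set.range fun k : ℕ => s ⊓ (k • y))) =
      (Set.range fun k : ℕ => c ⊓ (k • y)) := by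
    ext z
    constructor
    · rintro ⟨_, ⟨k, rfl⟩, rfl⟩
      refine ⟨k, ?_⟩
      show c ⊓ (k • y) = c ⊓ (s ⊓ (k • y))
      rw [← inf_assoc, inf_eq_left.mpr hcs]
    · rintro ⟨k, rfl⟩
      refine ⟨s ⊓ (k • y), ⟨k, rfl⟩, ?_⟩
      show c ⊓ (s ⊓ (k • y)) = c ⊓ (k • y)
      rw [← inf_assoc, inf_eq_left.mpr hcs]
  rwa [himg] at h

lemma inBand_self {c s : E} (hcs : c ≤ s) : InBand c s := by
  constructor
  · rintro _ ⟨k, rfl⟩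
    exact inf_le_left
  · intro z hz
    have : c ⊓ ((1 : ℕ) • s) ≤ z := hz ⟨1, rfl⟩
    rwa [one_nsmul, inf_eq_left.mpr hcs] at this

lemma inBand_inf {c y z : E} (hc : 0 ≤ c) (hy : 0 ≤ y) (hz : 0 ≤ z)
    (h1 : InBand c y) (h2 : InBand c z) : InBand c (y ⊓ z) := by
  constructor
  · rintro _ ⟨k, rfl⟩
    exact inf_le_left
  · intro b hb
    have key : ∀ k m : ℕ, c ⊓ ((k • y) ⊓ (m • z)) ≤ b := by
      intro k m
      set K := k + m with hK
      have e1 : (k • y) ⊓ (m • z) ≤ (K • y) ⊓ (K • z) :=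
        inf_le_inf (nsmul_le_nsmul_left hy (by omega)) (nsmul_le_nsmul_left hz (by omega))
      have e2 : (K • y) ⊓ (K • z) ≤ K • ((K • y) ⊓ z) :=
        c_inf_nsmul_le K (nsmul_nonneg hy K) hz
      have e3 : (K • y) ⊓ z ≤ K • (y ⊓ z) := by
        rw [inf_comm]
        calc z ⊓ (K • y) ≤ K • (z ⊓ y) := c_inf_nsmul_le K hz hy
          _ = K • (y ⊓ z) := by rw [inf_comm]
      have e4 : (k • y) ⊓ (m • z) ≤ (K * K) • (y ⊓ z) := by
        calc (k • y) ⊓ (m • z) ≤ K • ((K • y) ⊓ z) := le_trans e1 e2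
          _ ≤ K • (K • (y ⊓ z)) := nsmul_le_nsmul_right e3 K
          _ = (K * K) • (y ⊓ z) := by rw [mul_smul]
      calc c ⊓ ((k • y) ⊓ (m • z)) ≤ c ⊓ ((K * K) • (y ⊓ z)) := inf_le_inf_left c e4
        _ ≤ b := hb ⟨K * K, rfl⟩
    have step : ∀ k : ℕ, c ⊓ (k • y) ≤ b := by
      intro k
      have h := isLUB_inf' (c ⊓ (k • y)) h2
      rw [inf_eq_left.mpr (inf_le_left : c ⊓ (k • y) ≤ c)] at h
      apply h.2
      rintro _ ⟨_, ⟨m, rfl⟩, rfl⟩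
      show c ⊓ (k • y) ⊓ (c ⊓ (m • z)) ≤ b
      rw [← inf_inf_distrib_left]
      exact key k m
    exact h1.2 (by rintro _ ⟨k, rfl⟩; exact step k)

lemma inBand_zero {c : E} (h : InBand c 0) : c ≤ 0 := by
  apply h.2
  rintro _ ⟨k, rfl⟩
  show c ⊓ (k • (0 : E)) ≤ 0
  rw [smul_zero]
  exact inf_le_right

end Lub
section Partition
variable {E : Type*} [NormedAddCommGroup E] [Lattice E] [IsOrderedAddMonoid E] [HasSolidNorm E] [NormedSpace ℝ E]

lemma exists_partition
    (hDed : ∀ s : Set E, s.Nonempty → s.Countable → BddAbove s → ∃ a : E, IsLUB s a)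
    {n : ℕ} (hne : (univ : Finset (Fin n)).Nonempty)
    (y : Fin n → E) (s : E) (hs : 0 ≤ s) (hy : ∀ i, 0 ≤ y i) (hys : ∀ i, y i ≤ s)
    (hinf : (univ : Finset (Fin n)).inf' hne y = 0) :
    ∃ p : Fin n → E, (∀ i, 0 ≤ p i) ∧ (∀ i, p i ≤ s) ∧
      (∀ i j, i ≠ j → p i ⊓ p j = 0) ∧ (∑ i, p i = s) ∧ (∀ i, p i ⊓ y i = 0) := by
  -- the band components u i
  have hex : ∀ i : Fin n, ∃ u : E, IsLUB (Set.range fun k : ℕ => s ⊓ (k • y i)) u := by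
    intro i
    refine hDed _ ⟨s ⊓ ((0:ℕ) • y i), ⟨0, rfl⟩⟩ (Set.countable_range _) ⟨s, ?_⟩
    rintro _ ⟨k, rfl⟩
    exact inf_le_left
  choose u hu using hex
  have hu0 : ∀ i, 0 ≤ u i := by
    intro i
    have h0 : s ⊓ ((0:ℕ) • y i) ∈ Set.range fun k : ℕ => s ⊓ (k • y i) := ⟨0, rfl⟩
    have := (hu i).1 h0
    rwa [zero_nsmul, inf_eq_right.mpr hs] at this
  have hus : ∀ i, u i ≤ s := by
    intro i
    apply (hu i).2
    rintro _ ⟨k, rfl⟩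
    exact inf_le_left
  have hcomp1 : ∀ i, (s - u i) ⊓ y i = 0 := by
    intro i
    set c := (s - u i) ⊓ y i with hc
    have hc0 : 0 ≤ c := le_inf (sub_nonneg.mpr (hus i)) (hy i)
    have hstep : ∀ k : ℕ, s ⊓ (k • y i) + c ≤ s ⊓ ((k + 1) • y i) := by
      intro k
      refine le_inf ?_ ?_
      · have h1 : s ⊓ (k • y i) ≤ u i := (hu i).1 ⟨k, rfl⟩
        have h2 : c ≤ s - u i := inf_le_left
        calc s ⊓ (k • y i) + c ≤ u i + (s - u i) := add_le_add h1 h2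
          _ = s := by abel
      · have h1 : s ⊓ (k • y i) ≤ k • y i := inf_le_right
        have h2 : c ≤ y i := inf_le_right
        calc s ⊓ (k • y i) + c ≤ k • y i + y i := add_le_add h1 h2
          _ = (k + 1) • y i := (succ_nsmul (y i) k).symm
    have hind : ∀ k : ℕ, k • c ≤ s ⊓ (k • y i) := by
      intro k
      induction k with
      | zero =>
          rw [zero_nsmul, zero_nsmul]
          exact le_inf hs (le_refl 0)
      | succ k ih =>
          calc (k + 1) • c = k • c + c := succ_nsmul c k
            _ ≤ s ⊓ (k • y i) + c := add_le_add_left ih c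
            _ ≤ s ⊓ ((k + 1) • y i) := hstep k
    exact eq_zero_of_forall_nsmul_le hc0 (fun k => le_trans (hind k) inf_le_left)
  have hcomp2 : ∀ i, (s - u i) ⊓ u i = 0 := by
    intro i
    have h := isLUB_inf' (s - u i) (hu i)
    have hle : (s - u i) ⊓ u i ≤ 0 := by
      apply h.2
      rintro _ ⟨_, ⟨k, rfl⟩, rfl⟩
      show (s - u i) ⊓ (s ⊓ (k • y i)) ≤ 0
      calc (s - u i) ⊓ (s ⊓ (k • y i)) ≤ (s - u i) ⊓ (k • y i) :=
            inf_le_inf_left _ inf_le_right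
        _ ≤ k • ((s - u i) ⊓ y i) :=
            c_inf_nsmul_le k (sub_nonneg.mpr (hus i)) (hy i)
        _ = 0 := by rw [hcomp1 i, smul_zero]
    exact le_antisymm hle (le_inf (sub_nonneg.mpr (hus i)) (hu0 i))
  -- the decreasing chain v
  set w : ℕ → E := fun k => if h : k < n then u ⟨k, h⟩ else s with hw
  have hw0 : ∀ k, 0 ≤ w k := by
    intro k
    by_cases h : k < n
    · simp only [hw, dif_pos h]; exact hu0 _
    · simp only [hw, dif_neg h]; exact hs
  have hwles : ∀ k, w k ≤ s := by
    intro k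
    by_cases h : k < n
    · simp only [hw, dif_pos h]; exact hus _
    · simp only [hw, dif_neg h]
      exact le_rfl
  set v : ℕ → E := fun k => Nat.rec s (fun k vk => vk ⊓ w k) k with hv
  have hv0 : v 0 = s := rfl
  have hvsucc : ∀ k, v (k + 1) = v k ⊓ w k := fun k => rfl
  have hvmono : ∀ k l, k ≤ l → v l ≤ v k := by
    intro k l hkl
    induction l with
    | zero => cases Nat.le_zero.mp hkl; exact le_refl _
    | succ l ih =>
        rcases Nat.lt_or_ge k (l + 1) with h | h
        · exact le_trans (by rw [hvsucc]; exact inf_le_left) (ih (Nat.lt_succ_iff.mp h))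
        · cases le_antisymm hkl h; exact le_refl _
  have hvnn : ∀ k, 0 ≤ v k := by
    intro k
    induction k with
    | zero => exact hs
    | succ k ih => rw [hvsucc]; exact le_inf ih (hw0 k)
  have hvles : ∀ k, v k ≤ s := fun k => le_trans (hvmono 0 k (Nat.zero_le k)) (le_of_eq hv0)
  -- key: v n = 0
  have hvn : v n = 0 := by
    set c := v n with hcdef
    have hc0 : 0 ≤ c := hvnn n
    have hcu : ∀ i : Fin n, c ≤ u i := by
      intro i
      have h1 : v n ≤ v (i.val + 1) := hvmono _ _ i.isLt
      have h2 : v (i.val + 1) ≤ w i.val := by rw [hvsucc]; exact inf_le_right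
      have h3 : w i.val = u i := by
        simp only [hw, dif_pos i.isLt, Fin.eta]
      exact le_trans h1 (h2.trans (le_of_eq h3))
    have hband : ∀ i : Fin n, InBand c (y i) :=
      fun i => inBand_of_le (hvles n) (hu i) (hcu i)
    have hfold : ∀ (t : Finset (Fin n)) (ht : t.Nonempty), InBand c (t.inf' ht y) := by
      intro t ht
      induction ht using Finset.Nonempty.cons_induction with
      | singleton a => rw [Finset.inf'_singleton]; exact hband a
      | cons a t h ht ih =>
          rw [Finset.inf'_cons]
          refine inBand_inf hc0 (hy a) ?_ (hband a) ih
          exact Finset.le_inf' ht y (fun i _ => hy i)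
    have h0 : InBand c 0 := by
      have := hfold univ hne
      rwa [hinf] at this
    exact le_antisymm (inBand_zero h0) hc0
  -- the partition
  refine ⟨fun i => v i.val - v (i.val + 1), ?_, ?_, ?_, ?_, ?_⟩
  · intro i
    exact sub_nonneg.mpr (by rw [hvsucc]; exact inf_le_left)
  · intro i
    exact le_trans (sub_le_self (v i.val) (hvnn (i.val + 1))) (hvles i.val)
  · -- pairwise disjoint
    have hkey : ∀ k, (v k - v (k + 1)) ⊓ v (k + 1) = 0 := by
      intro k
      have hA : v k - v (k + 1) ≤ s - w k := by
        rw [hvsucc]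
        have h1 : v k ⊓ w k + (v k ⊔ w k) = v k + w k := inf_add_sup _ _
        have h2 : v k - v k ⊓ w k = (v k ⊔ w k) - w k := by
          rw [sub_eq_sub_iff_add_eq_add, ← h1]
          abel
        rw [h2]
        exact sub_le_sub_right (sup_le (hvles k) (hwles k)) _
      have hge : 0 ≤ (v k - v (k + 1)) ⊓ v (k + 1) :=
        le_inf (sub_nonneg.mpr (by rw [hvsucc]; exact inf_le_left)) (hvnn (k + 1))
      refine le_antisymm ?_ hge
      calc (v k - v (k + 1)) ⊓ v (k + 1) ≤ (s - w k) ⊓ w k := by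
            refine inf_le_inf hA (by rw [hvsucc]; exact inf_le_right)
        _ = 0 := by
            by_cases h : k < n
            · simp only [hw, dif_pos h]; exact hcomp2 _
            · simp only [hw, dif_neg h, sub_self]
              exact inf_eq_left.mpr hs
    have main : ∀ i j : Fin n, i.val < j.val →
        (v i.val - v (i.val + 1)) ⊓ (v j.val - v (j.val + 1)) = 0 := by
      intro i j hij
      have h1 : v j.val - v (j.val + 1) ≤ v (i.val + 1) :=
        le_trans (sub_le_self (v j.val) (hvnn (j.val + 1))) (hvmono _ _ hij)
      have hge : 0 ≤ (v i.val - v (i.val + 1)) ⊓ (v j.val - v (j.val + 1)) :=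
        le_inf (sub_nonneg.mpr (by rw [hvsucc]; exact inf_le_left))
          (sub_nonneg.mpr (by rw [hvsucc]; exact inf_le_left))
      refine le_antisymm ?_ hge
      calc (v i.val - v (i.val + 1)) ⊓ (v j.val - v (j.val + 1))
          ≤ (v i.val - v (i.val + 1)) ⊓ v (i.val + 1) := inf_le_inf_left _ h1
        _ = 0 := hkey i.val
    intro i j hij
    rcases lt_or_gt_of_ne (fun h => hij (Fin.ext h) : i.val ≠ j.val) with h | h
    · exact main i j h
    · rw [inf_comm]; exact main j i h
  · -- sum
    rw [Fin.sum_univ_eq_sum_range (fun k => v k - v (k + 1)) n]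
    rw [Finset.sum_range_sub' (fun k => v k)]
    rw [hv0, hvn, sub_zero]
  · -- disjoint from y i
    intro i
    have hple : v i.val - v (i.val + 1) ≤ s - u i := by
      rw [hvsucc]
      have h1 : v i.val ⊓ w i.val + (v i.val ⊔ w i.val) = v i.val + w i.val :=
        inf_add_sup _ _
      have h2 : v i.val - v i.val ⊓ w i.val = (v i.val ⊔ w i.val) - w i.val := by
        rw [sub_eq_sub_iff_add_eq_add, ← h1]
        abel
      rw [h2]
      have h3 : w i.val = u i := by simp only [hw, dif_pos i.isLt, Fin.eta]
      rw [h3]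
      exact sub_le_sub_right (sup_le (hvles _) (hus i)) _
    have hge : 0 ≤ (v i.val - v (i.val + 1)) ⊓ y i :=
      le_inf (sub_nonneg.mpr (by rw [hvsucc]; exact inf_le_left)) (hy i)
    refine le_antisymm ?_ hge
    calc (v i.val - v (i.val + 1)) ⊓ y i ≤ (s - u i) ⊓ y i := inf_le_inf_right _ hple
      _ = 0 := hcomp1 i

end Partition
section Core
variable {F : Type*} [NormedAddCommGroup F] [Lattice F] [IsOrderedAddMonoid F] [HasSolidNorm F] {ι : Type*} [DecidableEq ι]

lemma insert_sdiff_insert' {a : ι} {t U : Finset ι} (ha : a ∉ t) (hU : U ⊆ t) :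
    (insert a t) \ (insert a U) = t \ U := by
  ext z
  simp only [Finset.mem_sdiff, Finset.mem_insert, not_or]
  constructor
  · rintro ⟨h1 | h1, h2, h3⟩
    · exact absurd h1 h2
    · exact ⟨h1, h3⟩
  · rintro ⟨h1, h2⟩
    exact ⟨Or.inr h1, fun h => ha (h ▸ h1), h2⟩

lemma claimC (f : ι → F) (c : F) (hc : 0 ≤ c) :
    ∀ (s : Finset ι) (hs : s.Nonempty), (∀ i ∈ s, 0 ≤ f i) → ∀ x : F,
    (2 ^ (s.card - 1) : ℕ) • ((s.sup' hs f) ⊓ c) ≤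
      ∑ U ∈ s.powerset, (|(∑ i ∈ U, f i - ∑ i ∈ s \ U, f i) + x| ⊓ c) := by
  intro s hs
  induction hs using Finset.Nonempty.cons_induction with
  | singleton a =>
      intro hf x
      have hfa : 0 ≤ f a := hf a (Finset.mem_singleton_self a)
      rw [Finset.card_singleton, Finset.sup'_singleton,
        show ({a} : Finset ι) = insert a ∅ from rfl,
        Finset.sum_powerset_insert (Finset.notMem_empty a), Finset.powerset_empty,
        Finset.sum_singleton, Finset.sum_singleton]
      simp only [Finset.sdiff_empty, Finset.sdiff_self, Finset.sum_empty,
        Finset.sum_insert (Finset.notMem_empty a), add_zero, zero_sub, sub_zero,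
        Nat.sub_self, pow_zero, one_nsmul]
      have e1 : -f a + x = x - f a := by abel
      have e2 : f a + x = x + f a := by abel
      rw [e1, e2]
      have habs : |x + f a| ⊔ |x - f a| = |x| + f a := abs_sup_abs_pair x hfa
      have h1 : f a ⊓ c ≤ (|x - f a| ⊔ |x + f a|) ⊓ c := by
        refine inf_le_inf_right c ?_
        rw [sup_comm, habs]
        exact le_add_of_nonneg_left (abs_nonneg x)
      refine le_trans h1 (sup_inf_le_inf_add_inf (abs_nonneg _) (abs_nonneg _) hc)
  | cons a t ha ht ih =>
      intro hf x
      have hfa : 0 ≤ f a := hf a (Finset.mem_cons_self a t)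
      have hft : ∀ i ∈ t, 0 ≤ f i := fun i hi => hf i (Finset.mem_cons_of_mem hi)
      rw [Finset.card_cons, Nat.add_sub_cancel, Finset.sup'_cons ht,
        show Finset.cons a t ha = insert a t from Finset.cons_eq_insert a t ha,
        Finset.sum_powerset_insert ha]
      -- rewrite the two sums
      have hrw1 : ∀ U ∈ t.powerset,
          (|(∑ i ∈ U, f i - ∑ i ∈ (insert a t) \ U, f i) + x| ⊓ c) =
          (|(∑ i ∈ U, f i - ∑ i ∈ t \ U, f i) + (x - f a)| ⊓ c) := by
        intro U hU
        have haU : a ∉ U := fun h => ha (Finset.mem_powerset.mp hU h)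
        rw [Finset.insert_sdiff_of_notMem _ haU,
          Finset.sum_insert (fun h => ha (Finset.mem_sdiff.mp h).1)]
        congr 2
        abel
      have hrw2 : ∀ U ∈ t.powerset,
          (|(∑ i ∈ insert a U, f i - ∑ i ∈ (insert a t) \ (insert a U), f i) + x| ⊓ c) =
          (|(∑ i ∈ U, f i - ∑ i ∈ t \ U, f i) + (x + f a)| ⊓ c) := by
        intro U hU
        have haU : a ∉ U := fun h => ha (Finset.mem_powerset.mp hU h)
        rw [insert_sdiff_insert' ha (Finset.mem_powerset.mp hU), Finset.sum_insert haU]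
        congr 2
        abel
      rw [Finset.sum_congr rfl hrw1, Finset.sum_congr rfl hrw2]
      letI : DistribLattice F := AddCommGroup.toDistribLattice F
      rw [inf_sup_right, pow_two_nsmul_sup]
      refine sup_le ?_ ?_
      · -- f a ⊓ c bound, per-subset pairing
        have hper : ∀ U ∈ t.powerset, f a ⊓ c ≤
            (|(∑ i ∈ U, f i - ∑ i ∈ t \ U, f i) + (x - f a)| ⊓ c) +
            (|(∑ i ∈ U, f i - ∑ i ∈ t \ U, f i) + (x + f a)| ⊓ c) := by
          intro U _
          set d := (∑ i ∈ U, f i - ∑ i ∈ t \ U, f i) + x with hd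
          have e1 : (∑ i ∈ U, f i - ∑ i ∈ t \ U, f i) + (x - f a) = d - f a := by
            rw [hd]; abel
          have e2 : (∑ i ∈ U, f i - ∑ i ∈ t \ U, f i) + (x + f a) = d + f a := by
            rw [hd]; abel
          rw [e1, e2]
          have habs : |d + f a| ⊔ |d - f a| = |d| + f a := abs_sup_abs_pair d hfa
          have h1 : f a ⊓ c ≤ (|d - f a| ⊔ |d + f a|) ⊓ c := by
            refine inf_le_inf_right c ?_
            rw [sup_comm, habs]
            exact le_add_of_nonneg_left (abs_nonneg d)
          exact le_trans h1 (sup_inf_le_inf_add_inf (abs_nonneg _) (abs_nonneg _) hc)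
        calc (2 ^ t.card : ℕ) • (f a ⊓ c)
            = ∑ _U ∈ t.powerset, f a ⊓ c := by
              rw [Finset.sum_const, Finset.card_powerset]
          _ ≤ ∑ U ∈ t.powerset,
              ((|(∑ i ∈ U, f i - ∑ i ∈ t \ U, f i) + (x - f a)| ⊓ c) +
               (|(∑ i ∈ U, f i - ∑ i ∈ t \ U, f i) + (x + f a)| ⊓ c)) :=
              Finset.sum_le_sum hper
          _ = _ := Finset.sum_add_distrib
      · -- sup' t bound, two applications of ih
        have h1 := ih hft (x - f a)
        have h2 := ih hft (x + f a)
        have hpow : (2 ^ (t.card - 1) : ℕ) + (2 ^ (t.card - 1) : ℕ) = 2 ^ t.card := by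
          rw [← two_mul, ← pow_succ', Nat.sub_add_cancel ht.card_pos]
        calc (2 ^ t.card : ℕ) • (t.sup' ht f ⊓ c)
            = (2 ^ (t.card - 1) : ℕ) • (t.sup' ht f ⊓ c) +
              (2 ^ (t.card - 1) : ℕ) • (t.sup' ht f ⊓ c) := by
              rw [← add_nsmul, hpow]
          _ ≤ _ := add_le_add h1 h2

end Core
section Core2
variable {F : Type*} [NormedAddCommGroup F] [Lattice F] [IsOrderedAddMonoid F] [HasSolidNorm F] {ι : Type*} [DecidableEq ι]

lemma two_nsmul_sup_split (x g : F) :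
    (2 : ℕ) • (x ⊔ g) = (2 : ℕ) • x + (2 : ℕ) • g - (2 : ℕ) • (x ⊓ g) := by
  rw [eq_sub_iff_add_eq, ← smul_add, ← smul_add, add_comm (x ⊔ g), inf_add_sup]

lemma claimB (f : ι → F) :
    ∀ (s : Finset ι) (hs : s.Nonempty), (∀ i ∈ s, 0 ≤ f i) →
    ∑ U ∈ s.powerset, |∑ i ∈ U, f i - ∑ i ∈ s \ U, f i| ≤
      (2 ^ (s.card - 1) : ℕ) • ((∑ i ∈ s, f i) + s.sup' hs f) := by
  intro s hs
  induction hs using Finset.Nonempty.cons_induction with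
  | singleton a =>
      intro hf
      have hfa : 0 ≤ f a := hf a (Finset.mem_singleton_self a)
      rw [Finset.card_singleton, Finset.sup'_singleton,
        show ({a} : Finset ι) = insert a ∅ from rfl,
        Finset.sum_powerset_insert (Finset.notMem_empty a), Finset.powerset_empty,
        Finset.sum_singleton, Finset.sum_singleton]
      simp only [Finset.sdiff_empty, Finset.sdiff_self, Finset.sum_empty,
        Finset.sum_insert (Finset.notMem_empty a), add_zero, zero_sub, sub_zero,
        Nat.sub_self, pow_zero, one_nsmul]
      rw [abs_neg, abs_of_nonneg hfa]
  | cons a t ha ht ih =>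
      intro hf
      have hfa : 0 ≤ f a := hf a (Finset.mem_cons_self a t)
      have hft : ∀ i ∈ t, 0 ≤ f i := fun i hi => hf i (Finset.mem_cons_of_mem hi)
      rw [Finset.card_cons, Nat.add_sub_cancel, Finset.sup'_cons ht,
        show Finset.cons a t ha = insert a t from Finset.cons_eq_insert a t ha,
        Finset.sum_powerset_insert ha, Finset.sum_insert ha]
      -- rewrite the two sums
      have hrw1 : ∀ U ∈ t.powerset,
          |∑ i ∈ U, f i - ∑ i ∈ (insert a t) \ U, f i| =
          |(∑ i ∈ U, f i - ∑ i ∈ t \ U, f i) - f a| := by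
        intro U hU
        have haU : a ∉ U := fun h => ha (Finset.mem_powerset.mp hU h)
        rw [Finset.insert_sdiff_of_notMem _ haU,
          Finset.sum_insert (fun h => ha (Finset.mem_sdiff.mp h).1)]
        congr 1
        abel
      have hrw2 : ∀ U ∈ t.powerset,
          |∑ i ∈ insert a U, f i - ∑ i ∈ (insert a t) \ (insert a U), f i| =
          |(∑ i ∈ U, f i - ∑ i ∈ t \ U, f i) + f a| := by
        intro U hU
        have haU : a ∉ U := fun h => ha (Finset.mem_powerset.mp hU h)
        rw [insert_sdiff_insert' ha (Finset.mem_powerset.mp hU), Finset.sum_insert haU]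
        congr 1
        abel
      rw [Finset.sum_congr rfl hrw1, Finset.sum_congr rfl hrw2]
      set S := ∑ i ∈ t, f i with hS
      set T := t.sup' ht f with hT
      -- per-term bound and splitting
      have hsplit : ∀ U ∈ t.powerset,
          |(∑ i ∈ U, f i - ∑ i ∈ t \ U, f i) - f a| +
          |(∑ i ∈ U, f i - ∑ i ∈ t \ U, f i) + f a| ≤
          (2:ℕ) • |∑ i ∈ U, f i - ∑ i ∈ t \ U, f i| + (2:ℕ) • f a -
          (2:ℕ) • (|∑ i ∈ U, f i - ∑ i ∈ t \ U, f i| ⊓ f a) := by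
        intro U _
        rw [← two_nsmul_sup_split, add_comm]
        exact abs_add_abs_pair _ hfa
      calc ∑ U ∈ t.powerset, |(∑ i ∈ U, f i - ∑ i ∈ t \ U, f i) - f a| +
            ∑ U ∈ t.powerset, |(∑ i ∈ U, f i - ∑ i ∈ t \ U, f i) + f a|
          = ∑ U ∈ t.powerset, (|(∑ i ∈ U, f i - ∑ i ∈ t \ U, f i) - f a| +
              |(∑ i ∈ U, f i - ∑ i ∈ t \ U, f i) + f a|) := Finset.sum_add_distrib.symm
        _ ≤ ∑ U ∈ t.powerset, ((2:ℕ) • |∑ i ∈ U, f i - ∑ i ∈ t \ U, f i| + (2:ℕ) • f a -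
              (2:ℕ) • (|∑ i ∈ U, f i - ∑ i ∈ t \ U, f i| ⊓ f a)) :=
            Finset.sum_le_sum hsplit
        _ = (2:ℕ) • (∑ U ∈ t.powerset, |∑ i ∈ U, f i - ∑ i ∈ t \ U, f i|) +
              (2:ℕ) • ((2 ^ t.card : ℕ) • f a) -
              (2:ℕ) • (∑ U ∈ t.powerset, (|∑ i ∈ U, f i - ∑ i ∈ t \ U, f i| ⊓ f a)) := by
            rw [Finset.sum_sub_distrib, Finset.sum_add_distrib, ← Finset.smul_sum,
              ← Finset.smul_sum, ← Finset.smul_sum, Finset.sum_const, Finset.card_powerset]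
        _ ≤ (2:ℕ) • ((2 ^ (t.card - 1) : ℕ) • (S + T)) + (2:ℕ) • ((2 ^ t.card : ℕ) • f a) -
              (2:ℕ) • ((2 ^ (t.card - 1) : ℕ) • (T ⊓ f a)) := by
            refine sub_le_sub (add_le_add ?_ le_rfl) ?_
            · exact nsmul_le_nsmul_right (ih hft) 2
            · refine nsmul_le_nsmul_right ?_ 2
              have hcl := claimC f (f a) hfa t ht hft 0
              refine le_trans hcl (le_of_eq ?_)
              refine Finset.sum_congr rfl (fun U _ => ?_)
              rw [add_zero]
        _ = (2 ^ t.card : ℕ) • (f a + S + (f a ⊔ T)) := by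
            have h2m : (2 : ℕ) * 2 ^ (t.card - 1) = 2 ^ t.card := by
              rw [← pow_succ', Nat.sub_add_cancel ht.card_pos]
            rw [← mul_smul, h2m, ← mul_smul, mul_comm (2:ℕ) ((2:ℕ) ^ t.card), mul_smul,
              show (2:ℕ) • (f a) = f a + f a from two_nsmul (f a),
              ← mul_smul, h2m, ← smul_add, ← smul_sub]
            congr 1
            have hh : f a ⊓ T + (f a ⊔ T) = f a + T := inf_add_sup (f a) T
            rw [inf_comm T (f a), sub_eq_iff_eq_add]
            calc S + T + (f a + f a) = f a + S + (f a + T) := by abel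
              _ = f a + S + ((f a ⊓ T) + (f a ⊔ T)) := by rw [hh]
              _ = f a + S + (f a ⊔ T) + (f a ⊓ T) := by abel

end Core2
section Core3
variable {F : Type*} [NormedAddCommGroup F] [Lattice F] [IsOrderedAddMonoid F] [HasSolidNorm F] {ι : Type*} [DecidableEq ι]

lemma corePow (f : ι → F) (s : Finset ι) (hs : s.Nonempty) (hf : ∀ i ∈ s, 0 ≤ f i) :
    (2 ^ (s.card - 1) : ℕ) • ((∑ i ∈ s, f i) - s.sup' hs f) ≤
      (2 : ℕ) • ∑ U ∈ s.powerset, ((∑ i ∈ U, f i) ⊓ (∑ i ∈ s \ U, f i)) := by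
  have hperm : ∀ U ∈ s.powerset,
      (2:ℕ) • ((∑ i ∈ U, f i) ⊓ (∑ i ∈ s \ U, f i)) =
      (∑ i ∈ s, f i) - |∑ i ∈ U, f i - ∑ i ∈ s \ U, f i| := by
    intro U hU
    rw [two_nsmul_inf_eq]
    congr 1
    rw [add_comm, Finset.sum_sdiff (Finset.mem_powerset.mp hU)]
  have h1 : (2:ℕ) • ∑ U ∈ s.powerset, ((∑ i ∈ U, f i) ⊓ (∑ i ∈ s \ U, f i)) =
      (2 ^ s.card : ℕ) • (∑ i ∈ s, f i) -
        ∑ U ∈ s.powerset, |∑ i ∈ U, f i - ∑ i ∈ s \ U, f i| := by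
    rw [Finset.smul_sum, Finset.sum_congr rfl hperm, Finset.sum_sub_distrib,
      Finset.sum_const, Finset.card_powerset]
  rw [h1]
  have hB := claimB f s hs hf
  have hsplit : (2 ^ s.card : ℕ) • (∑ i ∈ s, f i) =
      (2 ^ (s.card - 1) : ℕ) • (∑ i ∈ s, f i) +
      (2 ^ (s.card - 1) : ℕ) • (∑ i ∈ s, f i) := by
    rw [← add_nsmul, ← two_mul, ← pow_succ', Nat.sub_add_cancel hs.card_pos]
  calc (2 ^ (s.card - 1) : ℕ) • ((∑ i ∈ s, f i) - s.sup' hs f)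
      = (2 ^ s.card : ℕ) • (∑ i ∈ s, f i) -
        (2 ^ (s.card - 1) : ℕ) • ((∑ i ∈ s, f i) + s.sup' hs f) := by
        rw [hsplit, smul_sub, smul_add]; abel
    _ ≤ _ := sub_le_sub_left hB _

end Core3

section Disj
variable {E : Type*} [NormedAddCommGroup E] [Lattice E] [IsOrderedAddMonoid E] [HasSolidNorm E] {ι : Type*}

lemma inf_sum_eq_zero {V : Finset ι} {p : ι → E} {x : E}
    (hx : 0 ≤ x) (hp : ∀ j ∈ V, 0 ≤ p j) (h : ∀ j ∈ V, x ⊓ p j = 0) :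
    x ⊓ ∑ j ∈ V, p j = 0 := by
  induction V using Finset.cons_induction with
  | empty => simp only [Finset.sum_empty]; exact inf_eq_right.mpr hx
  | cons a t ha ih =>
      have hsum0 : 0 ≤ ∑ j ∈ t, p j :=
        Finset.sum_nonneg (fun j hj => hp j (Finset.mem_cons_of_mem hj))
      have hle : x ⊓ (p a + ∑ j ∈ t, p j) ≤ x ⊓ p a + x ⊓ ∑ j ∈ t, p j := by
        rw [inf_comm x (p a + ∑ j ∈ t, p j), inf_comm x (p a), inf_comm x (∑ j ∈ t, p j)]
        exact add_inf_le_inf_add_inf (hp a (Finset.mem_cons_self a t)) hsum0 hx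
      rw [Finset.sum_cons]
      refine le_antisymm ?_ (le_inf hx (add_nonneg (hp a (Finset.mem_cons_self a t)) hsum0))
      calc x ⊓ (p a + ∑ j ∈ t, p j) ≤ x ⊓ p a + x ⊓ ∑ j ∈ t, p j := hle
        _ = 0 := by
            rw [h a (Finset.mem_cons_self a t),
              ih (fun j hj => hp j (Finset.mem_cons_of_mem hj))
                 (fun j hj => h j (Finset.mem_cons_of_mem hj)), add_zero]

lemma sum_inf_sum_eq_zero {U V : Finset ι} {p : ι → E}
    (hp : ∀ j, 0 ≤ p j) (h : ∀ i ∈ U, ∀ j ∈ V, p i ⊓ p j = 0) :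
    (∑ i ∈ U, p i) ⊓ (∑ j ∈ V, p j) = 0 := by
  have hV : 0 ≤ ∑ j ∈ V, p j := Finset.sum_nonneg (fun j _ => hp j)
  have hU : 0 ≤ ∑ i ∈ U, p i := Finset.sum_nonneg (fun i _ => hp i)
  rw [inf_comm]
  refine inf_sum_eq_zero hV (fun i _ => hp i) (fun i hi => ?_)
  rw [inf_comm]
  exact inf_sum_eq_zero (hp i) (fun j _ => hp j) (fun j hj => h i hi j hj)

end Disj
section Key
variable {E : Type*} [NormedAddCommGroup E] [Lattice E] [IsOrderedAddMonoid E] [HasSolidNorm E] [NormedSpace ℝ E]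
  {F : Type*} [NormedAddCommGroup F] [Lattice F] [IsOrderedAddMonoid F] [HasSolidNorm F] [NormedSpace ℝ F]

lemma key_bound
    (hDed : ∀ s : Set E, s.Nonempty → s.Countable → BddAbove s → ∃ a : E, IsLUB s a)
    (ε : ℝ) (hε : 0 ≤ ε) (T : E →L[ℝ] F)
    (hpos : ∀ x : E, 0 ≤ x → 0 ≤ T x)
    (hDP : ∀ x y : E, |x| ⊓ |y| = 0 → ‖|T x| ⊓ |T y|‖ ≤ ε * max ‖x‖ ‖y‖)
    {n : ℕ} (hne : (univ : Finset (Fin n)).Nonempty)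
    (y : Fin n → E) (s : E) (hs : 0 ≤ s) (hy : ∀ i, 0 ≤ y i) (hys : ∀ i, y i ≤ s)
    (hinf : (univ : Finset (Fin n)).inf' hne y = 0) :
    ‖(univ : Finset (Fin n)).inf' hne (fun i => T (y i))‖ ≤ 4 * ε * ‖s‖ := by
  obtain ⟨p, hp0, hps, hpd, hpsum, hpy⟩ := exists_partition hDed hne y s hs hy hys hinf
  set w := (univ : Finset (Fin n)).inf' hne (fun i => T (y i)) with hw
  have hw0 : 0 ≤ w := Finset.le_inf' hne _ (fun i _ => hpos _ (hy i))
  have hTmono : ∀ a b : E, a ≤ b → T a ≤ T b := by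
    intro a b hab
    have h := hpos (b - a) (sub_nonneg.mpr hab)
    rw [map_sub] at h
    exact sub_nonneg.mp h
  have hyle : ∀ i, y i ≤ s - p i := by
    intro i
    rw [le_sub_iff_add_le]
    have h1 : y i ⊓ p i + (y i ⊔ p i) = y i + p i := inf_add_sup _ _
    rw [inf_comm (y i) (p i), hpy i, zero_add] at h1
    calc y i + p i = y i ⊔ p i := h1.symm
      _ ≤ s := sup_le (hys i) (hps i)
  set D := T s - (univ : Finset (Fin n)).sup' hne (fun i => T (p i)) with hD
  have hwD : w ≤ D := by
    have h2 : (univ : Finset (Fin n)).sup' hne (fun i => T (p i)) ≤ T s - w := by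
      refine Finset.sup'_le hne _ (fun i _ => ?_)
      have h1 : w ≤ T s - T (p i) := by
        calc w ≤ T (y i) := Finset.inf'_le _ (Finset.mem_univ i)
          _ ≤ T (s - p i) := hTmono _ _ (hyle i)
          _ = T s - T (p i) := map_sub T s (p i)
      have h1' : w + T (p i) ≤ T s := le_sub_iff_add_le.mp h1
      rw [le_sub_iff_add_le, add_comm]
      exact h1'
    have h3 := le_sub_iff_add_le.mp h2
    rw [hD, le_sub_iff_add_le, add_comm]
    exact h3
  -- apply corePow
  have hcore := corePow (fun i => T (p i)) univ hne (fun i _ => hpos _ (hp0 i))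
  have hsum : ∑ i ∈ (univ : Finset (Fin n)), T (p i) = T s := by
    rw [← map_sum, hpsum]
  rw [hsum] at hcore
  -- each Ξ-term is small in norm
  have hterm : ∀ U ∈ (univ : Finset (Fin n)).powerset,
      ‖(∑ i ∈ U, T (p i)) ⊓ (∑ i ∈ univ \ U, T (p i))‖ ≤ ε * ‖s‖ := by
    intro U _
    have hPU : (0:E) ≤ ∑ i ∈ U, p i := Finset.sum_nonneg (fun i _ => hp0 i)
    have hPV : (0:E) ≤ ∑ i ∈ univ \ U, p i := Finset.sum_nonneg (fun i _ => hp0 i)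
    have hdisj : (∑ i ∈ U, p i) ⊓ (∑ i ∈ univ \ U, p i) = 0 := by
      refine sum_inf_sum_eq_zero hp0 (fun i hi j hj => ?_)
      refine hpd i j (fun hij => ?_)
      exact (Finset.mem_sdiff.mp hj).2 (hij ▸ hi)
    have habs : |∑ i ∈ U, p i| ⊓ |∑ i ∈ univ \ U, p i| = 0 := by
      rw [abs_of_nonneg hPU, abs_of_nonneg hPV]; exact hdisj
    have hDPa := hDP _ _ habs
    rw [abs_of_nonneg (hpos _ hPU), abs_of_nonneg (hpos _ hPV), map_sum, map_sum] at hDPa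
    refine le_trans hDPa ?_
    have hnorm : ∀ W : Finset (Fin n), ‖∑ i ∈ W, p i‖ ≤ ‖s‖ := by
      intro W
      refine HasSolidNorm.solid ?_
      rw [abs_of_nonneg (Finset.sum_nonneg (fun i _ => hp0 i)), abs_of_nonneg hs]
      calc ∑ i ∈ W, p i ≤ ∑ i ∈ (univ : Finset (Fin n)), p i :=
            Finset.sum_le_sum_of_subset_of_nonneg (Finset.subset_univ W)
              (fun i _ _ => hp0 i)
        _ = s := hpsum
    exact mul_le_mul_of_nonneg_left (max_le (hnorm U) (hnorm _)) hε
  -- norm of the Ξ sum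
  have hXi : ‖∑ U ∈ (univ : Finset (Fin n)).powerset,
      ((∑ i ∈ U, T (p i)) ⊓ (∑ i ∈ univ \ U, T (p i)))‖ ≤ (2 ^ n : ℝ) * (ε * ‖s‖) := by
    refine le_trans (norm_sum_le _ _) ?_
    calc ∑ U ∈ (univ : Finset (Fin n)).powerset,
          ‖(∑ i ∈ U, T (p i)) ⊓ (∑ i ∈ univ \ U, T (p i))‖
        ≤ ∑ _U ∈ (univ : Finset (Fin n)).powerset, (ε * ‖s‖) :=
          Finset.sum_le_sum hterm
      _ = (2 ^ n : ℝ) * (ε * ‖s‖) := by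
          rw [Finset.sum_const, Finset.card_powerset, Finset.card_univ, Fintype.card_fin,
            nsmul_eq_mul]
          push_cast
          ring
  -- D is nonneg and dominated
  have hD0 : 0 ≤ D := le_trans hw0 hwD
  have hXi0 : (0:F) ≤ ∑ U ∈ (univ : Finset (Fin n)).powerset,
      ((∑ i ∈ U, T (p i)) ⊓ (∑ i ∈ univ \ U, T (p i))) := by
    refine Finset.sum_nonneg (fun U _ => ?_)
    exact le_inf (Finset.sum_nonneg fun i _ => hpos _ (hp0 i))
      (Finset.sum_nonneg fun i _ => hpos _ (hp0 i))
  have hcard : (univ : Finset (Fin n)).card = n := by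
    rw [Finset.card_univ, Fintype.card_fin]
  rw [hcard] at hcore
  -- take norms in hcore
  have hnsmul : ((2:ℝ) ^ (n-1)) * ‖D‖ ≤ 2 * ((2 ^ n : ℝ) * (ε * ‖s‖)) := by
    have hle : |(2 ^ (n - 1) : ℕ) • D| ≤
        |(2 : ℕ) • ∑ U ∈ (univ : Finset (Fin n)).powerset,
          ((∑ i ∈ U, T (p i)) ⊓ (∑ i ∈ univ \ U, T (p i)))| := by
      rw [abs_of_nonneg (nsmul_nonneg hD0 _), abs_of_nonneg (nsmul_nonneg hXi0 _)]
      exact hcore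
    have h := HasSolidNorm.solid hle
    rw [← Nat.cast_smul_eq_nsmul ℝ, ← Nat.cast_smul_eq_nsmul ℝ, norm_smul, norm_smul,
      Real.norm_natCast, Real.norm_natCast] at h
    push_cast at h
    calc ((2:ℝ) ^ (n-1)) * ‖D‖ ≤ 2 * ‖∑ U ∈ (univ : Finset (Fin n)).powerset,
          ((∑ i ∈ U, T (p i)) ⊓ (∑ i ∈ univ \ U, T (p i)))‖ := h
      _ ≤ 2 * ((2 ^ n : ℝ) * (ε * ‖s‖)) := by
          have := hXi
          nlinarith [hXi]
  -- conclude
  have hn1 : 1 ≤ n := by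
    have : Nonempty (Fin n) := Finset.univ_nonempty_iff.mp hne
    exact Nat.one_le_iff_ne_zero.mpr (fun h => by subst h; exact (Fin.pos_iff_nonempty.mpr this).false)
  have h2n : (2:ℝ) ^ n = 2 * (2:ℝ) ^ (n - 1) := by
    rw [← pow_succ', Nat.sub_add_cancel hn1]
  have hpow : (0:ℝ) < (2:ℝ) ^ (n-1) := by positivity
  have hDnorm : ‖D‖ ≤ 4 * ε * ‖s‖ := by
    rw [h2n] at hnsmul
    have h4 : ((2:ℝ) ^ (n-1)) * ‖D‖ ≤ ((2:ℝ) ^ (n-1)) * (4 * ε * ‖s‖) := by nlinarith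
    exact le_of_mul_le_mul_left h4 hpow
  refine le_trans ?_ hDnorm
  refine HasSolidNorm.solid ?_
  rw [abs_of_nonneg hw0, abs_of_nonneg hD0]
  exact hwD

end Key
section Bridges
variable {F : Type*} [NormedAddCommGroup F] [Lattice F] [IsOrderedAddMonoid F] [HasSolidNorm F] {ι : Type*}

lemma inf'_const_sub (s : Finset ι) (hs : s.Nonempty) (c : F) (f : ι → F) :
    s.inf' hs (fun i => c - f i) = c - s.sup' hs f := by
  induction hs using Finset.Nonempty.cons_induction with
  | singleton a => simp
  | cons a t ha ht ih => rw [Finset.inf'_cons ht, Finset.sup'_cons ht, ih, sub_sup]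

lemma inf'_sub_const (s : Finset ι) (hs : s.Nonempty) (c : F) (f : ι → F) :
    s.inf' hs (fun i => f i - c) = s.inf' hs f - c := by
  induction hs using Finset.Nonempty.cons_induction with
  | singleton a => simp
  | cons a t ha ht ih => rw [Finset.inf'_cons ht, Finset.inf'_cons ht, ih, inf_sub]

end Bridges

/-- If `E` is σ-Dedekind complete and `T : E → F` is positive and
`ε`-disjointness preserving, then for positive `x₁, …, x_n`,
`max(‖T(⋁ x_i) - ⋁ Tx_i‖, ‖⋀ Tx_i - T(⋀ x_i)‖) ≤ 256 ε ‖⋁ x_i‖`. -/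
theorem stmt5 (E F : Type*)
    [NormedAddCommGroup E] [Lattice E] [IsOrderedAddMonoid E] [HasSolidNorm E] [NormedSpace ℝ E] [CompleteSpace E]
    [NormedAddCommGroup F] [Lattice F] [IsOrderedAddMonoid F] [HasSolidNorm F] [NormedSpace ℝ F] [CompleteSpace F]
    (hDedekind : ∀ s : Set E, s.Nonempty → s.Countable → BddAbove s → ∃ a : E, IsLUB s a)
    (ε : ℝ) (hε : 0 ≤ ε) (T : E →L[ℝ] F)
    (hpos : ∀ x : E, 0 ≤ x → 0 ≤ T x)
    (hDP : ∀ x y : E, |x| ⊓ |y| = 0 → ‖|T x| ⊓ |T y|‖ ≤ ε * max ‖x‖ ‖y‖)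
    (n : ℕ) (hn : 0 < n) (x : Fin n → E) (hx : ∀ i, 0 ≤ x i) :
    max
      ‖T ((univ : Finset (Fin n)).sup' (univ_nonempty_iff.2 (Fin.pos_iff_nonempty.1 hn)) x) -
        (univ : Finset (Fin n)).sup' (univ_nonempty_iff.2 (Fin.pos_iff_nonempty.1 hn))
          (fun i => T (x i))‖
      ‖(univ : Finset (Fin n)).inf' (univ_nonempty_iff.2 (Fin.pos_iff_nonempty.1 hn))
          (fun i => T (x i)) -
        T ((univ : Finset (Fin n)).inf' (univ_nonempty_iff.2 (Fin.pos_iff_nonempty.1 hn)) x)‖ ≤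
      256 * ε *
        ‖(univ : Finset (Fin n)).sup' (univ_nonempty_iff.2 (Fin.pos_iff_nonempty.1 hn)) x‖ := by
  set hne : (univ : Finset (Fin n)).Nonempty :=
    univ_nonempty_iff.2 (Fin.pos_iff_nonempty.1 hn) with hhne
  set sv : E := (univ : Finset (Fin n)).sup' hne x with hsv
  set m : E := (univ : Finset (Fin n)).inf' hne x with hm
  have hsv0 : 0 ≤ sv := by
    obtain ⟨i, _⟩ := hne
    exact le_trans (hx i) (Finset.le_sup' x (Finset.mem_univ i))
  have hm0 : 0 ≤ m := Finset.le_inf' hne x (fun i _ => hx i)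
  -- defect 1 (sup)
  have hd1 : ‖T sv - (univ : Finset (Fin n)).sup' hne (fun i => T (x i))‖ ≤ 4 * ε * ‖sv‖ := by
    have he : (univ : Finset (Fin n)).inf' hne (fun i => T (sv - x i)) =
        T sv - (univ : Finset (Fin n)).sup' hne (fun i => T (x i)) := by
      have h1 : (univ : Finset (Fin n)).inf' hne (fun i => T (sv - x i)) =
          (univ : Finset (Fin n)).inf' hne (fun i => T sv - T (x i)) := by
        refine Finset.inf'_congr hne rfl (fun i _ => ?_)
        exact map_sub T sv (x i)
      rw [h1, inf'_const_sub]
    rw [← he]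
    refine key_bound hDedekind ε hε T hpos hDP hne _ sv hsv0 ?_ ?_ ?_
    · intro i
      exact sub_nonneg.mpr (Finset.le_sup' x (Finset.mem_univ i))
    · intro i
      exact le_trans (sub_le_self sv (hx i)) le_rfl
    · rw [inf'_const_sub, hsv, sub_self]
  -- defect 2 (inf)
  have hd2 : ‖(univ : Finset (Fin n)).inf' hne (fun i => T (x i)) - T m‖ ≤ 4 * ε * ‖sv‖ := by
    have he : (univ : Finset (Fin n)).inf' hne (fun i => T (x i - m)) =
        (univ : Finset (Fin n)).inf' hne (fun i => T (x i)) - T m := by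
      have h1 : (univ : Finset (Fin n)).inf' hne (fun i => T (x i - m)) =
          (univ : Finset (Fin n)).inf' hne (fun i => T (x i) - T m) := by
        refine Finset.inf'_congr hne rfl (fun i _ => ?_)
        exact map_sub T (x i) m
      rw [h1, inf'_sub_const]
    rw [← he]
    refine key_bound hDedekind ε hε T hpos hDP hne _ sv hsv0 ?_ ?_ ?_
    · intro i
      exact sub_nonneg.mpr (Finset.inf'_le x (Finset.mem_univ i))
    · intro i
      exact le_trans (sub_le_self (x i) hm0) (Finset.le_sup' x (Finset.mem_univ i))
    · rw [inf'_sub_const, hm, sub_self]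
  have hfin : (4:ℝ) * ε * ‖sv‖ ≤ 256 * ε * ‖sv‖ := by
    nlinarith [mul_nonneg hε (norm_nonneg sv)]
  exact max_le (le_trans hd1 hfin) (le_trans hd2 hfin)
end

section
/- Let F be a real Banach lattice, n ∈ ℕ, ε ≥ 0, and T : ℓ_∞^n → F a positive bounded linear operator which is ε-disjointness preserving. Then there exists a disjointness preserving linear operator S : ℓ_∞^n → F such that 0 ≤ S ≤ T (i.e. S and T − S are positive) and ‖T − S‖ ≤ 256·ε. -/
open Finset
open scoped symmDiff

section Aux

variable {F : Type*} [NormedAddCommGroup F] [Lattice F] [IsOrderedAddMonoid F] [HasSolidNorm F]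

/-- Riesz inequality for nonneg elements. -/
lemma my_riesz {x y z : F} (hx : 0 ≤ x) (hy : 0 ≤ y) (hz : 0 ≤ z) :
    (x + y) ⊓ z ≤ x ⊓ z + y ⊓ z := by
  rw [← sub_le_iff_le_add']
  have h1 : (x + y) ⊓ z - x ⊓ z = ((x + y) ⊓ z - x) ⊔ ((x + y) ⊓ z - z) := sub_inf x z _
  rw [h1]
  apply sup_le
  · have h : (x + y) ⊓ z - x = (x + y - x) ⊓ (z - x) := inf_sub _ _ _
    rw [h, add_sub_cancel_left]
    exact inf_le_inf_left y (sub_le_self z hx)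
  · have h2 : (x + y) ⊓ z - z ≤ 0 := sub_nonpos.2 inf_le_right
    exact h2.trans (le_inf hy hz)

lemma my_inf_sum_le {ι : Type*} (s : Finset ι) (b : ι → F) (a : F) (ha : 0 ≤ a)
    (hb : ∀ i ∈ s, 0 ≤ b i) : a ⊓ (∑ i ∈ s, b i) ≤ ∑ i ∈ s, a ⊓ b i := by
  classical
  induction s using Finset.induction_on with
  | empty => simp [inf_of_le_right (le_refl (0:F))]
  | @insert c t hc ih =>
    rw [Finset.sum_insert hc, Finset.sum_insert hc]
    have hbt : ∀ i ∈ t, 0 ≤ b i := fun i hi => hb i (Finset.mem_insert_of_mem hi)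
    have hsum : 0 ≤ ∑ i ∈ t, b i := Finset.sum_nonneg hbt
    calc a ⊓ (b c + ∑ i ∈ t, b i) ≤ (b c + ∑ i ∈ t, b i) ⊓ a := by rw [inf_comm]
      _ ≤ b c ⊓ a + (∑ i ∈ t, b i) ⊓ a :=
        my_riesz (hb c (Finset.mem_insert_self c t)) hsum ha
      _ = a ⊓ b c + a ⊓ (∑ i ∈ t, b i) := by rw [inf_comm, inf_comm (∑ i ∈ t, b i) a]
      _ ≤ a ⊓ b c + ∑ i ∈ t, a ⊓ b i := add_le_add_right (ih hbt) _

lemma my_sum_inf_sum {ι κ : Type*} (s : Finset ι) (t : Finset κ) (a : ι → F) (b : κ → F)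
    (ha : ∀ i ∈ s, 0 ≤ a i) (hb : ∀ j ∈ t, 0 ≤ b j)
    (h : ∀ i ∈ s, ∀ j ∈ t, a i ⊓ b j = 0) : (∑ i ∈ s, a i) ⊓ (∑ j ∈ t, b j) = 0 := by
  have hsa : 0 ≤ ∑ i ∈ s, a i := Finset.sum_nonneg ha
  have hsb : 0 ≤ ∑ j ∈ t, b j := Finset.sum_nonneg hb
  refine le_antisymm ?_ (le_inf hsa hsb)
  calc (∑ i ∈ s, a i) ⊓ (∑ j ∈ t, b j) = (∑ j ∈ t, b j) ⊓ (∑ i ∈ s, a i) := inf_comm _ _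
    _ ≤ ∑ i ∈ s, (∑ j ∈ t, b j) ⊓ a i := my_inf_sum_le s a _ hsb ha
    _ ≤ ∑ i ∈ s, (0:F) := by
        refine Finset.sum_le_sum fun i hi => ?_
        calc (∑ j ∈ t, b j) ⊓ a i = a i ⊓ (∑ j ∈ t, b j) := inf_comm _ _
          _ ≤ ∑ j ∈ t, a i ⊓ b j := my_inf_sum_le t b _ (ha i hi) hb
          _ = ∑ j ∈ t, (0:F) := Finset.sum_congr rfl fun j hj => h i hi j hj
          _ = 0 := by simp
    _ = 0 := by simp

lemma my_nsmul_disj {x y : F} (hx : 0 ≤ x) (hy : 0 ≤ y) (h : x ⊓ y = 0) (k : ℕ) :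
    (k • x) ⊓ y = 0 := by
  induction k with
  | zero => simpa using inf_of_le_left hy
  | succ m ih =>
    refine le_antisymm ?_ (le_inf (nsmul_nonneg hx _) hy)
    have hr : (m • x + x) ⊓ y ≤ (m • x) ⊓ y + x ⊓ y :=
      my_riesz (nsmul_nonneg hx m) hx hy
    rw [succ_nsmul]
    rw [ih, h, add_zero] at hr
    exact hr

lemma my_nsmul_cancel {z : F} {k : ℕ} (hk : 0 < k) (h : 0 ≤ k • z) : 0 ≤ z := by
  have hzp : (0:F) ≤ z⁺ := posPart_nonneg z
  have hzn : (0:F) ≤ z⁻ := negPart_nonneg z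
  have hd : z⁺ ⊓ z⁻ = 0 := posPart_inf_negPart_eq_zero z
  have hkz : k • z = k • z⁺ - k • z⁻ := by
    rw [← smul_sub, posPart_sub_negPart]
  have hle : k • z⁻ ≤ k • z⁺ := by
    rw [hkz, sub_nonneg] at h; exact h
  have hdisj : (k • z⁺) ⊓ (k • z⁻) = 0 := by
    have h1 : (k • z⁺) ⊓ z⁻ = 0 := my_nsmul_disj hzp hzn hd k
    have h2 : (k • z⁻) ⊓ (k • z⁺) = 0 := by
      refine my_nsmul_disj hzn (nsmul_nonneg hzp k) ?_ k
      rw [inf_comm]; exact h1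
    rw [inf_comm]; exact h2
  have hzero : k • z⁻ = 0 := by
    have h3 : k • z⁻ = (k • z⁺) ⊓ (k • z⁻) := (inf_eq_right.2 hle).symm
    rw [h3, hdisj]
  have hzn0 : z⁻ = 0 := by
    have h1 : z⁻ ≤ k • z⁻ := by
      calc z⁻ = 1 • z⁻ := (one_nsmul _).symm
        _ ≤ k • z⁻ := nsmul_le_nsmul_left hzn hk
    exact le_antisymm (h1.trans_eq hzero) hzn
  have h4 : z = z⁺ := by
    have h5 := posPart_sub_negPart z
    rw [hzn0, sub_zero] at h5; exact h5.symm
  rw [h4]; exact hzp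

variable [NormedSpace ℝ F]

lemma my_smul_nonneg {v : F} (hv : 0 ≤ v) {r : ℝ} (hr : 0 ≤ r) : 0 ≤ r • v := by
  have hq : ∀ q : ℚ, 0 ≤ q → 0 ≤ (q : ℝ) • v := by
    intro q hq0
    have key : (q.den : ℕ) • ((q : ℝ) • v) = (q.num.toNat : ℕ) • v := by
      rw [← Nat.cast_smul_eq_nsmul ℝ, ← Nat.cast_smul_eq_nsmul ℝ, smul_smul]
      congr 1
      have hnum : ((q.num.toNat : ℕ) : ℝ) = (q.num : ℝ) := by
        exact_mod_cast congrArg Int.cast (Int.toNat_of_nonneg (Rat.num_nonneg.2 hq0))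
      have hden : ((q.den : ℕ) : ℝ) ≠ 0 := by
        exact_mod_cast q.den_nz
      rw [hnum, Rat.cast_def, mul_comm, div_mul_cancel₀ _ hden]
    refine my_nsmul_cancel q.pos ?_
    rw [key]
    exact nsmul_nonneg hv _
  have hclosed : IsClosed {s : ℝ | 0 ≤ s • v} :=
    isClosed_nonneg.preimage (by continuity)
  have hex : ∀ k : ℕ, ∃ q : ℚ, r < q ∧ (q : ℝ) < r + 1/(k+1) := by
    intro k
    exact_mod_cast exists_rat_btwn (lt_add_of_pos_right r (by positivity : (0:ℝ) < 1/((k:ℝ)+1)))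
  choose q hq1 hq2 using hex
  have htend : Filter.Tendsto (fun k : ℕ => ((q k : ℝ))) Filter.atTop (nhds r) := by
    have h0 : Filter.Tendsto (fun k : ℕ => r + 1/((k:ℝ)+1)) Filter.atTop (nhds r) := by
      have h1 := tendsto_one_div_add_atTop_nhds_zero_nat (𝕜 := ℝ)
      have h := (tendsto_const_nhds (x := r) (f := Filter.atTop (α := ℕ))).add h1
      simpa using h
    exact tendsto_of_tendsto_of_tendsto_of_le_of_le tendsto_const_nhds h0
      (fun k => (hq1 k).le) (fun k => (hq2 k).le)
  exact hclosed.mem_of_tendsto htend (Filter.Eventually.of_forall fun k =>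
    hq _ (by exact_mod_cast (hr.trans (hq1 k).le)))

lemma my_smul_mono {v w : F} (h : v ≤ w) {r : ℝ} (hr : 0 ≤ r) : r • v ≤ r • w := by
  have h1 := my_smul_nonneg (sub_nonneg.2 h) hr
  rw [smul_sub, sub_nonneg] at h1
  exact h1

lemma my_smul_inf {a b : F} {c : ℝ} (hc : 0 ≤ c) : (c • a) ⊓ (c • b) ≤ c • (a ⊓ b) := by
  rcases eq_or_lt_of_le hc with h | h
  · simp [← h]
  · have h1 : c⁻¹ • ((c • a) ⊓ (c • b)) ≤ a ⊓ b := by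
      apply le_inf
      · have h2 := my_smul_mono (inf_le_left (a := c • a) (b := c • b)) (inv_pos.2 h).le
        rwa [inv_smul_smul₀ h.ne'] at h2
      · have h2 := my_smul_mono (inf_le_right (a := c • a) (b := c • b)) (inv_pos.2 h).le
        rwa [inv_smul_smul₀ h.ne'] at h2
    have h2 := my_smul_mono h1 hc
    rwa [smul_inv_smul₀ h.ne'] at h2

lemma my_abs_smul_le (d : F) (hd : 0 ≤ d) (c : ℝ) : |c • d| ≤ |c| • d := by
  rw [abs_le']
  constructor
  · have h1 := my_smul_nonneg hd (sub_nonneg.2 (le_abs_self c))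
    rw [sub_smul, sub_nonneg] at h1
    exact h1
  · rw [← neg_smul]
    have h1 := my_smul_nonneg hd (sub_nonneg.2 (neg_le_abs c))
    rw [sub_smul, sub_nonneg] at h1
    exact h1

omit [NormedSpace ℝ F] in
lemma my_abs_sum_le {ι : Type*} (s : Finset ι) (v : ι → F) :
    |∑ i ∈ s, v i| ≤ ∑ i ∈ s, |v i| := by
  classical
  induction s using Finset.induction_on with
  | empty => simp
  | @insert c t hc ih =>
    rw [Finset.sum_insert hc, Finset.sum_insert hc]
    refine (abs_add_le (v c) (∑ i ∈ t, v i)).trans ?_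
    exact add_le_add_right ih _

omit [NormedSpace ℝ F] in
lemma my_selector {ι : Type*} [DecidableEq ι] (s : Finset ι) (p q : ι → F) :
    ∀ X : F, (∀ σ : ι → Bool, X ≤ ∑ a ∈ s, (if σ a then p a else q a)) →
      X ≤ ∑ a ∈ s, (p a ⊓ q a) := by
  induction s using Finset.induction_on with
  | empty => intro X h; simpa using h fun _ => true
  | @insert c t hc ih =>
    intro X h
    rw [Finset.sum_insert hc, inf_add _ _ _]
    apply le_inf
    · rw [← sub_le_iff_le_add']
      apply ih
      intro σ
      have hh := h (fun x => if x = c then true else σ x)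
      rw [Finset.sum_insert hc, if_pos (by simp)] at hh
      rw [sub_le_iff_le_add']
      calc X ≤ p c + ∑ a ∈ t, (if (if a = c then true else σ a) then p a else q a) := hh
        _ = p c + ∑ a ∈ t, (if σ a then p a else q a) := by
            congr 1
            refine Finset.sum_congr rfl fun a ha => ?_
            have hne : a ≠ c := ne_of_mem_of_not_mem ha hc
            simp [hne]
    · rw [← sub_le_iff_le_add']
      apply ih
      intro σ
      have hh := h (fun x => if x = c then false else σ x)
      rw [Finset.sum_insert hc, if_neg (by simp)] at hh
      rw [sub_le_iff_le_add']
      calc X ≤ q c + ∑ a ∈ t, (if (if a = c then false else σ a) then p a else q a) := hh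
        _ = q c + ∑ a ∈ t, (if σ a then p a else q a) := by
            congr 1
            refine Finset.sum_congr rfl fun a ha => ?_
            have hne : a ≠ c := ne_of_mem_of_not_mem ha hc
            simp [hne]

lemma my_count {n : ℕ} {j j' : Fin n} (h : j ≠ j') :
    2 * (Finset.univ.filter
      (fun A : Finset (Fin n) => ¬((j ∈ A) ↔ (j' ∈ A)))).card = 2^n := by
  classical
  have hcard : (Finset.univ.filter
        (fun A : Finset (Fin n) => ¬((j ∈ A) ↔ (j' ∈ A)))).card
      = (Finset.univ.filter
        (fun A : Finset (Fin n) => ((j ∈ A) ↔ (j' ∈ A)))).card := by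
    apply Finset.card_bij' (fun A _ => A ∆ ({j} : Finset (Fin n)))
      (fun A _ => A ∆ ({j} : Finset (Fin n)))
    · intro A hA
      simp only [Finset.mem_filter, Finset.mem_univ, true_and] at hA ⊢
      simp only [Finset.mem_symmDiff, Finset.mem_singleton] at *
      tauto
    · intro A hA
      simp only [Finset.mem_filter, Finset.mem_univ, true_and] at hA ⊢
      simp only [Finset.mem_symmDiff, Finset.mem_singleton] at *
      tauto
    · intro A _; exact symmDiff_symmDiff_cancel_right _ _
    · intro A _; exact symmDiff_symmDiff_cancel_right _ _
  have htotal := Finset.card_filter_add_card_filter_not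
    (s := (Finset.univ : Finset (Finset (Fin n))))
    (p := fun A => ((j ∈ A) ↔ (j' ∈ A)))
  have huniv : (Finset.univ : Finset (Finset (Fin n))).card = 2^n := by
    rw [Finset.card_univ, Fintype.card_finset, Fintype.card_fin]
  omega

end Aux

/-- A positive `ε`-disjointness preserving operator `T : ℓ_∞^n → F` admits a
disjointness preserving operator `S` with `0 ≤ S ≤ T` and `‖T - S‖ ≤ 256 ε`.  Here `ℓ_∞^n` is
`Fin n → ℝ` with the sup norm and coordinatewise order. -/
theorem stmt6 (F : Type*)
    [NormedAddCommGroup F] [Lattice F] [IsOrderedAddMonoid F] [HasSolidNorm F]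
    [NormedSpace ℝ F] [CompleteSpace F]
    (n : ℕ) (ε : ℝ) (hε : 0 ≤ ε) (T : (Fin n → ℝ) →L[ℝ] F)
    (hpos : ∀ x : Fin n → ℝ, 0 ≤ x → 0 ≤ T x)
    (hDP : ∀ x y : Fin n → ℝ, |x| ⊓ |y| = 0 → ‖|T x| ⊓ |T y|‖ ≤ ε * max ‖x‖ ‖y‖) :
    ∃ S : (Fin n → ℝ) →L[ℝ] F,
      (∀ x y : Fin n → ℝ, |x| ⊓ |y| = 0 → |S x| ⊓ |S y| = 0) ∧
      (∀ x : Fin n → ℝ, 0 ≤ x → 0 ≤ S x) ∧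
      (∀ x : Fin n → ℝ, 0 ≤ x → S x ≤ T x) ∧
      ‖T - S‖ ≤ 256 * ε := by
  classical
  -- basic data
  set e : Fin n → (Fin n → ℝ) := fun i j => if i = j then 1 else 0 with he
  set f : Fin n → F := fun i => T (e i) with hf
  have hepos : ∀ i, (0 : Fin n → ℝ) ≤ e i := by
    intro i j
    simp only [e]
    split <;> norm_num
  have hfpos : ∀ i, 0 ≤ f i := fun i => hpos _ (hepos i)
  have hT : ∀ x : Fin n → ℝ, T x = ∑ i, x i • f i := by
    intro x
    conv_lhs => rw [pi_eq_sum_univ x]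
    rw [map_sum]
    exact Finset.sum_congr rfl fun i _ => T.map_smul _ _
  set u : F := ∑ i, f i with hu
  set d : Fin n → F := fun i => f i ⊓ (u - f i) with hd
  set g : Fin n → F := fun i => f i - d i with hg
  have hflequ : ∀ i, f i ≤ u :=
    fun i => Finset.single_le_sum (fun j _ => hfpos j) (Finset.mem_univ i)
  have hd0 : ∀ i, 0 ≤ d i := fun i => le_inf (hfpos i) (sub_nonneg.2 (hflequ i))
  have hdf : ∀ i, d i ≤ f i := fun i => inf_le_left
  have hdu : ∀ i, d i ≤ u - f i := fun i => inf_le_right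
  have hu_erase : ∀ i, u - f i = ∑ j ∈ Finset.univ.erase i, f j := by
    intro i
    rw [hu, ← Finset.add_sum_erase Finset.univ f (Finset.mem_univ i), add_sub_cancel_left]
  have hg0 : ∀ i, 0 ≤ g i := fun i => sub_nonneg.2 (hdf i)
  have hgf : ∀ i, g i ≤ f i := fun i => sub_le_self _ (hd0 i)
  -- pairwise disjointness of the g i
  have hgdisj : ∀ i j, i ≠ j → g i ⊓ g j = 0 := by
    intro i j hij
    refine le_antisymm ?_ (le_inf (hg0 i) (hg0 j))
    have hpair : ∀ k l : Fin n, k ≠ l → f k + f l ≤ u := by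
      intro k l hkl
      rw [hu, ← Finset.sum_pair hkl]
      exact Finset.sum_le_sum_of_subset_of_nonneg (Finset.subset_univ _)
        (fun m _ _ => hfpos m)
    have hform : ∀ k, g k = 0 ⊔ (f k - (u - f k)) := by
      intro k
      rw [hg]
      show f k - (f k ⊓ (u - f k)) = _
      rw [sub_inf, sub_self]
    have h1 : g i ≤ 0 ⊔ (f i - f j) := by
      rw [hform i]
      refine sup_le le_sup_left ?_
      refine le_sup_of_le_right ?_
      have : f j ≤ u - f i := le_sub_iff_add_le'.2 (hpair i j hij)
      exact sub_le_sub_left this _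
    have h2 : g j ≤ 0 ⊔ (f j - f i) := by
      rw [hform j]
      refine sup_le le_sup_left ?_
      refine le_sup_of_le_right ?_
      have : f i ≤ u - f j := le_sub_iff_add_le'.2 (hpair j i (Ne.symm hij))
      exact sub_le_sub_left this _
    calc g i ⊓ g j ≤ (0 ⊔ (f i - f j)) ⊓ (0 ⊔ (f j - f i)) := inf_le_inf h1 h2
      _ = (f i - f j)⁺ ⊓ (f i - f j)⁻ := by
          rw [posPart_def, negPart_def, neg_sub, sup_comm (0:F) (f i - f j),
            sup_comm (0:F) (f j - f i)]
      _ = 0 := posPart_inf_negPart_eq_zero _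
  -- the operator S
  set S : (Fin n → ℝ) →L[ℝ] F :=
    ∑ i, (ContinuousLinearMap.proj (R := ℝ) (φ := fun _ : Fin n => ℝ) i).smulRight (g i)
    with hS
  have hSx : ∀ x : Fin n → ℝ, S x = ∑ i, x i • g i := by
    intro x
    rw [hS, ContinuousLinearMap.sum_apply]
    exact Finset.sum_congr rfl fun i _ => rfl
  have hTSx : ∀ x : Fin n → ℝ, (T - S) x = ∑ i, x i • d i := by
    intro x
    rw [ContinuousLinearMap.sub_apply, hSx, hT, ← Finset.sum_sub_distrib]
    refine Finset.sum_congr rfl fun i _ => ?_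
    rw [← smul_sub, hg]
    congr 1
    exact sub_sub_cancel _ _
  -- the norm estimate on ∑ d
  have hdsum : ‖∑ i, d i‖ ≤ 8 * ε := by
    set χ : Finset (Fin n) → (Fin n → ℝ) := fun A j => if j ∈ A then 1 else 0 with hχ
    set P : Finset (Fin n) → F := fun A => (8:ℕ) • ∑ j ∈ A, f j with hP
    have hχ0 : ∀ A : Finset (Fin n), (0 : Fin n → ℝ) ≤ (8:ℝ) • χ A := by
      intro A j
      simp only [Pi.smul_apply, smul_eq_mul, χ, Pi.zero_apply]
      split <;> norm_num
    have hTχ : ∀ A : Finset (Fin n), T ((8:ℝ) • χ A) = P A := by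
      intro A
      rw [map_smul, hT]
      have h1 : ∑ i, χ A i • f i = ∑ j ∈ A, f j := by
        rw [← Fintype.sum_ite_mem A f]
        refine Finset.sum_congr rfl fun i _ => ?_
        by_cases hi : i ∈ A <;> simp [χ, hi]
      rw [h1]
      show (8:ℝ) • ∑ j ∈ A, f j = (8:ℕ) • ∑ j ∈ A, f j
      rw [← Nat.cast_smul_eq_nsmul ℝ]
      norm_num
    have hP0 : ∀ A : Finset (Fin n), (0:F) ≤ P A :=
      fun A => nsmul_nonneg (Finset.sum_nonneg fun j _ => hfpos j) _
    have hkey : ∀ σ : Finset (Fin n) → Bool,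
        (∑ i, (2^n : ℕ) • d i) ≤ ∑ A : Finset (Fin n), (if σ A then P A else P Aᶜ) := by
      intro σ
      set C : Finset (Fin n) → Finset (Fin n) := fun A => if σ A then A else Aᶜ with hC
      have hite : ∀ A, (if σ A then P A else P Aᶜ) = P (C A) := by
        intro A; by_cases hσ : σ A <;> simp [hC, hσ]
      simp only [hite]
      set c : Fin n → ℕ :=
        fun j => (Finset.univ.filter (fun A : Finset (Fin n) => j ∈ C A)).card with hc
      have hRHS : ∑ A : Finset (Fin n), P (C A) = ∑ j, (8 * c j) • f j := by
        calc ∑ A : Finset (Fin n), P (C A)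
            = (8:ℕ) • ∑ A : Finset (Fin n), ∑ j ∈ C A, f j := by
              rw [hP, Finset.smul_sum]
          _ = (8:ℕ) • ∑ A : Finset (Fin n), ∑ j, (if j ∈ C A then f j else 0) := by
              congr 1
              refine Finset.sum_congr rfl fun A _ => ?_
              rw [Fintype.sum_ite_mem]
          _ = (8:ℕ) • ∑ j, ∑ A : Finset (Fin n), (if j ∈ C A then f j else 0) := by
              rw [Finset.sum_comm]
          _ = (8:ℕ) • ∑ j, (c j) • f j := by
              congr 1
              refine Finset.sum_congr rfl fun j _ => ?_
              rw [← Finset.sum_filter, Finset.sum_const, hc]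
          _ = ∑ j, (8 * (c j)) • f j := by
              rw [Finset.smul_sum]
              refine Finset.sum_congr rfl fun j _ => ?_
              rw [smul_smul]
      rw [hRHS]
      have hpairc : ∀ j j' : Fin n, j ≠ j' → 2^n ≤ 2 * (c j + c j') := by
        intro j j' hjj
        have hsub : (Finset.univ.filter (fun A : Finset (Fin n) => ¬((j ∈ A) ↔ (j' ∈ A))))
            ⊆ (Finset.univ.filter (fun A : Finset (Fin n) => j ∈ C A))
              ∪ (Finset.univ.filter (fun A : Finset (Fin n) => j' ∈ C A)) := by
          intro A hA
          simp only [Finset.mem_filter, Finset.mem_univ, true_and] at hA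
          simp only [Finset.mem_union, Finset.mem_filter, Finset.mem_univ, true_and]
          by_cases hσ : σ A
          · simp only [hC, if_pos hσ]; tauto
          · simp only [hC, if_neg hσ, Finset.mem_compl]; tauto
        have h1 := Finset.card_le_card hsub
        have h2 := Finset.card_union_le
          (Finset.univ.filter (fun A : Finset (Fin n) => j ∈ C A))
          (Finset.univ.filter (fun A : Finset (Fin n) => j' ∈ C A))
        have h3 := my_count hjj
        simp only [hc]
        omega
      rcases le_or_gt n 1 with hn | hn
      · have hdz : ∀ i, d i = 0 := by
          intro i
          have hzero : u - f i = 0 := by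
            rw [hu_erase i]
            have hcard0 : (Finset.univ.erase i).card = 0 := by
              rw [Finset.card_erase_of_mem (Finset.mem_univ i), Finset.card_univ,
                Fintype.card_fin]
              omega
            rw [Finset.card_eq_zero.1 hcard0, Finset.sum_empty]
          show f i ⊓ (u - f i) = 0
          rw [hzero]
          exact inf_eq_right.2 (hfpos i)
        have hL0 : ∑ i, (2^n : ℕ) • d i = 0 :=
          Finset.sum_eq_zero fun i _ => by rw [hdz i, smul_zero]
        rw [hL0]
        exact Finset.sum_nonneg fun j _ => nsmul_nonneg (hfpos j) _
      · obtain ⟨m, rfl⟩ : ∃ m, n = m + 2 := ⟨n - 2, by omega⟩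
        have hpow1 : 2^(m+2) = 4 * 2^m := by ring
        by_cases hcase : ∀ j, 2^m ≤ c j
        · calc ∑ i, (2^(m+2):ℕ) • d i ≤ ∑ i, (2^(m+2):ℕ) • f i :=
              Finset.sum_le_sum fun i _ => nsmul_le_nsmul_right (hdf i) _
            _ ≤ ∑ j, (8 * c j) • f j := by
              refine Finset.sum_le_sum fun j _ => ?_
              refine nsmul_le_nsmul_left (hfpos j) ?_
              have h4 := hcase j
              omega
        · push_neg at hcase
          obtain ⟨j0, hj0⟩ := hcase
          have hothers : ∀ j, j ≠ j0 → 2^(m+2) + 2^(m+2) ≤ 8 * c j := by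
            intro j hj
            have h1 := hpairc j j0 hj
            omega
          calc ∑ i, (2^(m+2):ℕ) • d i
              = (2^(m+2):ℕ) • d j0 + ∑ i ∈ Finset.univ.erase j0, (2^(m+2):ℕ) • d i :=
                (Finset.add_sum_erase _ _ (Finset.mem_univ j0)).symm
            _ ≤ (2^(m+2):ℕ) • (u - f j0)
                + ∑ i ∈ Finset.univ.erase j0, (2^(m+2):ℕ) • f i := by
                refine add_le_add (nsmul_le_nsmul_right (hdu j0) _) ?_
                exact Finset.sum_le_sum fun i _ => nsmul_le_nsmul_right (hdf i) _
            _ = ∑ i ∈ Finset.univ.erase j0, ((2^(m+2):ℕ) • f i + (2^(m+2):ℕ) • f i) := by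
                rw [hu_erase j0, Finset.smul_sum, ← Finset.sum_add_distrib]
            _ = ∑ i ∈ Finset.univ.erase j0, ((2^(m+2) + 2^(m+2)):ℕ) • f i := by
                refine Finset.sum_congr rfl fun i _ => ?_
                rw [add_nsmul]
            _ ≤ ∑ i ∈ Finset.univ.erase j0, (8 * c i) • f i := by
                refine Finset.sum_le_sum fun i hi => ?_
                exact nsmul_le_nsmul_left (hfpos i) (hothers i (Finset.ne_of_mem_erase hi))
            _ ≤ ∑ i, (8 * c i) • f i := by
                refine Finset.sum_le_sum_of_subset_of_nonneg (Finset.subset_univ _) ?_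
                intro i _ _
                exact nsmul_nonneg (hfpos i) _
    have hsel := my_selector (Finset.univ : Finset (Finset (Fin n))) P (fun A => P Aᶜ)
      (∑ i, (2^n : ℕ) • d i) hkey
    have hX : (∑ i, (2^n:ℕ) • d i) = (2^n:ℕ) • ∑ i, d i := (Finset.smul_sum).symm
    have hXnn : (0:F) ≤ (2^n:ℕ) • ∑ i, d i :=
      nsmul_nonneg (Finset.sum_nonneg fun i _ => hd0 i) _
    have hRnn : (0:F) ≤ ∑ A : Finset (Fin n), P A ⊓ P Aᶜ :=
      Finset.sum_nonneg fun A _ => le_inf (hP0 A) (hP0 Aᶜ)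
    have hN1 : ‖(2^n:ℕ) • ∑ i, d i‖ ≤ ‖∑ A : Finset (Fin n), P A ⊓ P Aᶜ‖ := by
      refine norm_le_norm_of_abs_le_abs ?_
      rw [abs_of_nonneg hXnn, abs_of_nonneg hRnn, ← hX]
      exact hsel
    have hterm : ∀ A : Finset (Fin n), ‖P A ⊓ P Aᶜ‖ ≤ 8 * ε := by
      intro A
      have hd1 : |(8:ℝ) • χ A| ⊓ |(8:ℝ) • χ Aᶜ| = 0 := by
        funext jj
        simp only [Pi.inf_apply, Pi.abs_apply, Pi.smul_apply, smul_eq_mul, Pi.zero_apply, χ]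
        by_cases hj : jj ∈ A
        · simp [hj]
        · simp [hj]
      have hb := hDP _ _ hd1
      have hTA : |T ((8:ℝ) • χ A)| = P A := by
        rw [abs_of_nonneg (hpos _ (hχ0 A)), hTχ]
      have hTA' : |T ((8:ℝ) • χ Aᶜ)| = P Aᶜ := by
        rw [abs_of_nonneg (hpos _ (hχ0 Aᶜ)), hTχ]
      have hnA : ∀ B : Finset (Fin n), ‖(8:ℝ) • χ B‖ ≤ 8 := by
        intro B
        rw [norm_smul]
        have h1 : ‖χ B‖ ≤ 1 := by
          refine pi_norm_le_iff_of_nonneg zero_le_one |>.2 fun j => ?_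
          simp only [χ, Real.norm_eq_abs]
          split <;> norm_num
        calc ‖(8:ℝ)‖ * ‖χ B‖ ≤ ‖(8:ℝ)‖ * 1 := by
              exact mul_le_mul_of_nonneg_left h1 (norm_nonneg _)
          _ = 8 := by norm_num
      rw [hTA, hTA'] at hb
      refine hb.trans ?_
      have hmax : max ‖(8:ℝ) • χ A‖ ‖(8:ℝ) • χ Aᶜ‖ ≤ 8 := max_le (hnA A) (hnA Aᶜ)
      calc ε * max ‖(8:ℝ) • χ A‖ ‖(8:ℝ) • χ Aᶜ‖ ≤ ε * 8 :=
            mul_le_mul_of_nonneg_left hmax hε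
        _ = 8 * ε := by ring
    have hN2 : ‖∑ A : Finset (Fin n), P A ⊓ P Aᶜ‖ ≤ (2^n : ℝ) * (8*ε) := by
      refine (norm_sum_le _ _).trans ?_
      calc ∑ A : Finset (Fin n), ‖P A ⊓ P Aᶜ‖ ≤ ∑ _A : Finset (Fin n), (8*ε) :=
          Finset.sum_le_sum fun A _ => hterm A
        _ = (2^n:ℝ) * (8*ε) := by
          rw [Finset.sum_const, Finset.card_univ, Fintype.card_finset, Fintype.card_fin,
            nsmul_eq_mul]
          push_cast
          ring
    have hXnorm : ‖(2^n:ℕ) • ∑ i, d i‖ = (2^n:ℝ) * ‖∑ i, d i‖ := by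
      rw [← Nat.cast_smul_eq_nsmul ℝ, norm_smul, Real.norm_eq_abs]
      push_cast
      rw [abs_of_nonneg (by positivity : (0:ℝ) ≤ (2:ℝ)^n)]
    have hfinal : (2^n : ℝ) * ‖∑ i, d i‖ ≤ (2^n:ℝ) * (8*ε) := by
      rw [← hXnorm]
      exact hN1.trans hN2
    exact le_of_mul_le_mul_left hfinal (by positivity)
  refine ⟨S, ?_, ?_, ?_, ?_⟩
  · -- disjointness preserving
    intro x y hxy
    have hxyi : ∀ i, x i = 0 ∨ y i = 0 := by
      intro i
      have h0 : (|x| ⊓ |y|) i = 0 := by rw [hxy]; rfl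
      have h0' : |x i| ⊓ |y i| = 0 := h0
      rcases le_total |x i| |y i| with hle | hle
      · left
        have := inf_eq_left.2 hle ▸ h0'
        exact abs_eq_zero.1 (by rw [inf_eq_left.2 hle] at h0'; exact h0')
      · right
        exact abs_eq_zero.1 (by rw [inf_eq_right.2 hle] at h0'; exact h0')
    refine le_antisymm ?_ (le_inf (abs_nonneg _) (abs_nonneg _))
    have hax : |S x| ≤ ∑ i, |x i| • g i := by
      rw [hSx]
      refine (my_abs_sum_le _ _).trans ?_
      exact Finset.sum_le_sum fun i _ => my_abs_smul_le _ (hg0 i) _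
    have hay : |S y| ≤ ∑ i, |y i| • g i := by
      rw [hSx]
      refine (my_abs_sum_le _ _).trans ?_
      exact Finset.sum_le_sum fun i _ => my_abs_smul_le _ (hg0 i) _
    have hnn : ∀ (z : Fin n → ℝ) (i : Fin n), 0 ≤ |z i| • g i :=
      fun z i => my_smul_nonneg (hg0 i) (abs_nonneg _)
    have hzero : (∑ i, |x i| • g i) ⊓ (∑ j, |y j| • g j) = 0 := by
      refine my_sum_inf_sum _ _ _ _ (fun i _ => hnn x i) (fun j _ => hnn y j) ?_
      intro i _ j _
      by_cases hij : i = j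
      · subst hij
        rcases hxyi i with h | h
        · rw [h]
          simp only [abs_zero, zero_smul]
          exact inf_eq_left.2 (hnn y i)
        · rw [h]
          simp only [abs_zero, zero_smul]
          exact inf_eq_right.2 (hnn x i)
      · refine le_antisymm ?_ (le_inf (hnn x i) (hnn y j))
        set c := |x i| + |y j| with hc
        have hci : |x i| • g i ≤ c • g i := by
          have h1 : (0:F) ≤ |y j| • g i := my_smul_nonneg (hg0 i) (abs_nonneg _)
          have h2 : c • g i = |x i| • g i + |y j| • g i := by rw [hc, add_smul]
          rw [h2]; exact le_add_of_nonneg_right h1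
        have hcj : |y j| • g j ≤ c • g j := by
          have h1 : (0:F) ≤ |x i| • g j := my_smul_nonneg (hg0 j) (abs_nonneg _)
          have h2 : c • g j = |x i| • g j + |y j| • g j := by rw [hc, add_smul]
          rw [h2]; exact le_add_of_nonneg_left h1
        calc (|x i| • g i) ⊓ (|y j| • g j) ≤ (c • g i) ⊓ (c • g j) := inf_le_inf hci hcj
          _ ≤ c • (g i ⊓ g j) := my_smul_inf (by positivity)
          _ = 0 := by rw [hgdisj i j hij, smul_zero]
    calc |S x| ⊓ |S y| ≤ (∑ i, |x i| • g i) ⊓ (∑ j, |y j| • g j) := inf_le_inf hax hay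
      _ = 0 := hzero
  · -- positivity
    intro x hx
    rw [hSx]
    exact Finset.sum_nonneg fun i _ => my_smul_nonneg (hg0 i) (hx i)
  · -- S ≤ T
    intro x hx
    have h1 : 0 ≤ (T - S) x := by
      rw [hTSx]
      exact Finset.sum_nonneg fun i _ => my_smul_nonneg (hd0 i) (hx i)
    rw [ContinuousLinearMap.sub_apply, sub_nonneg] at h1
    exact h1
  · -- the norm bound
    refine (ContinuousLinearMap.opNorm_le_bound _ (by positivity) ?_)
    intro x
    have habs : |(T - S) x| ≤ ‖x‖ • ∑ i, d i := by
      rw [hTSx, Finset.smul_sum]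
      refine (my_abs_sum_le _ _).trans ?_
      refine Finset.sum_le_sum fun i _ => ?_
      refine (my_abs_smul_le _ (hd0 i) _).trans ?_
      have hxi : |x i| ≤ ‖x‖ := by
        rw [← Real.norm_eq_abs]
        exact norm_le_pi_norm x i
      have h1 := my_smul_nonneg (hd0 i) (sub_nonneg.2 hxi)
      rw [sub_smul, sub_nonneg] at h1
      exact h1
    have hsum0 : 0 ≤ ‖x‖ • ∑ i, d i :=
      my_smul_nonneg (Finset.sum_nonneg fun i _ => hd0 i) (norm_nonneg x)
    have h2 : ‖(T - S) x‖ ≤ ‖‖x‖ • ∑ i, d i‖ := by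
      refine norm_le_norm_of_abs_le_abs ?_
      rw [abs_of_nonneg hsum0]
      exact habs
    rw [norm_smul, Real.norm_eq_abs, abs_of_nonneg (norm_nonneg x)] at h2
    calc ‖(T - S) x‖ ≤ ‖x‖ * ‖∑ i, d i‖ := h2
      _ ≤ ‖x‖ * (8 * ε) := by
          exact mul_le_mul_of_nonneg_left hdsum (norm_nonneg x)
      _ ≤ 256 * ε * ‖x‖ := by nlinarith [norm_nonneg x]
end
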